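/- arXiv:2105.13629 — 6 statements merged into one kernel-verified Lean document; each statement's English description precedes it below -/
import Mathlib

section
/- Let N ≥ 1 be an integer, let 1 < p < q and θ > q be real numbers, let C₁, C₂ > 0, let V : ℝ^N → ℝ be continuous, let F : ℝ → ℝ be continuous with F(0) = 0 and F(s) ≥ C₁ s^θ − C₂ for all s ≥ 0, and let v : ℝ^N → ℝ be a continuously differentiable function with compact support such that v ≥ 0 everywhere and v is not identically zero. Then the function t ↦ (t^p/p) ∫_{ℝ^N} (‖∇v(x)‖^p + V(x)|v(x)|^p) dx + (t^q/q) ∫_{ℝ^N} (‖∇v(x)‖^q + V(x)|v(x)|^q) dx − ∫_{ℝ^N} F(t·v(x)) dx tends to −∞ as t → +∞. -/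
open Filter MeasureTheory
open scoped Topology

theorem stmt3 (N : ℕ) (hN : 1 ≤ N) (p q θ C₁ C₂ : ℝ)
    (hp : 1 < p) (hpq : p < q) (hθ : q < θ) (hC₁ : 0 < C₁) (hC₂ : 0 < C₂)
    (V : EuclideanSpace ℝ (Fin N) → ℝ) (hV : Continuous V)
    (F : ℝ → ℝ) (hF : Continuous F) (hF0 : F 0 = 0)
    (hFlb : ∀ s : ℝ, 0 ≤ s → C₁ * s ^ θ - C₂ ≤ F s)
    (v : EuclideanSpace ℝ (Fin N) → ℝ) (hv : ContDiff ℝ 1 v)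
    (hvsupp : HasCompactSupport v) (hv0 : ∀ x, 0 ≤ v x) (hvne : v ≠ 0) :
    Tendsto (fun t : ℝ =>
        (t ^ p / p) * (∫ x : EuclideanSpace ℝ (Fin N), (‖fderiv ℝ v x‖ ^ p + V x * |v x| ^ p))
      + (t ^ q / q) * (∫ x : EuclideanSpace ℝ (Fin N), (‖fderiv ℝ v x‖ ^ q + V x * |v x| ^ q))
      - ∫ x : EuclideanSpace ℝ (Fin N), F (t * v x)) atTop atBot := by
  have hθ0 : 0 < θ := by linarith
  have hvc : Continuous v := hv.continuous
  set K := tsupport v with hKdef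
  have hK : IsCompact K := hvsupp
  have hKm : MeasurableSet K := (isClosed_tsupport v).measurableSet
  set M : ℝ := (volume K).toReal with hMdef
  set A : ℝ := (∫ x : EuclideanSpace ℝ (Fin N),
      (‖fderiv ℝ v x‖ ^ p + V x * |v x| ^ p)) / p with hAdef
  set B : ℝ := (∫ x : EuclideanSpace ℝ (Fin N),
      (‖fderiv ℝ v x‖ ^ q + V x * |v x| ^ q)) / q with hBdef
  -- continuity of x ↦ (v x) ^ θ
  have hcontpow : Continuous fun x : EuclideanSpace ℝ (Fin N) => (v x) ^ θ := by
    rw [continuous_iff_continuousAt]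
    intro x
    exact (Real.continuousAt_rpow_const _ _ (Or.inr hθ0.le)).comp hvc.continuousAt
  have hsupppow : HasCompactSupport fun x : EuclideanSpace ℝ (Fin N) => (v x) ^ θ :=
    hvsupp.comp_left (g := fun s : ℝ => s ^ θ) (Real.zero_rpow hθ0.ne')
  have hintpow : Integrable (fun x : EuclideanSpace ℝ (Fin N) => (v x) ^ θ) :=
    hcontpow.integrable_of_hasCompactSupport hsupppow
  set c : ℝ := ∫ x : EuclideanSpace ℝ (Fin N), (v x) ^ θ with hcdef
  have hc : 0 < c := by
    rw [hcdef, integral_pos_iff_support_of_nonneg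
      (fun x => Real.rpow_nonneg (hv0 x) θ) hintpow]
    have hsupp_eq : Function.support (fun x : EuclideanSpace ℝ (Fin N) => (v x) ^ θ)
        = Function.support v := by
      ext x
      simp only [Function.mem_support]
      constructor
      · intro h hvx
        exact h (by rw [hvx, Real.zero_rpow hθ0.ne'])
      · intro h
        exact (Real.rpow_pos_of_pos ((hv0 x).lt_of_ne (Ne.symm h)) θ).ne'
    rw [hsupp_eq]
    have hopen : IsOpen (Function.support v) := hvc.isOpen_support
    have hne : (Function.support v).Nonempty := by
      rcases Function.ne_iff.mp hvne with ⟨x, hx⟩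
      exact ⟨x, hx⟩
    exact hopen.measure_pos volume hne
  -- key lower bound for the nonlinear term
  have key : ∀ t : ℝ, 0 ≤ t →
      C₁ * t ^ θ * c - C₂ * M ≤ ∫ x : EuclideanSpace ℝ (Fin N), F (t * v x) := by
    intro t ht
    have hcont_tv : Continuous fun x : EuclideanSpace ℝ (Fin N) => F (t * v x) :=
      hF.comp (continuous_const.mul hvc)
    have hsupp_tv : HasCompactSupport fun x : EuclideanSpace ℝ (Fin N) => F (t * v x) :=
      hvsupp.comp_left (g := fun s : ℝ => F (t * s)) (by simp [hF0])
    have hintF : Integrable (fun x : EuclideanSpace ℝ (Fin N) => F (t * v x)) :=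
      hcont_tv.integrable_of_hasCompactSupport hsupp_tv
    have hcontg : Continuous fun x : EuclideanSpace ℝ (Fin N) => C₁ * (t * v x) ^ θ - C₂ := by
      apply Continuous.sub _ continuous_const
      apply continuous_const.mul
      rw [continuous_iff_continuousAt]
      intro x
      exact (Real.continuousAt_rpow_const _ _ (Or.inr hθ0.le)).comp
        (continuous_const.mul hvc).continuousAt
    have hintg : Integrable
        (K.indicator fun x : EuclideanSpace ℝ (Fin N) => C₁ * (t * v x) ^ θ - C₂) :=
      (hcontg.continuousOn.integrableOn_compact hK).integrable_indicator hKm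
    have hmono : ∀ x,
        K.indicator (fun x => C₁ * (t * v x) ^ θ - C₂) x ≤ F (t * v x) := by
      intro x
      by_cases hx : x ∈ K
      · rw [Set.indicator_of_mem hx]
        exact hFlb _ (mul_nonneg ht (hv0 x))
      · rw [Set.indicator_of_notMem hx, image_eq_zero_of_notMem_tsupport hx,
          mul_zero, hF0]
    have h1 : (∫ x : EuclideanSpace ℝ (Fin N),
        K.indicator (fun x => C₁ * (t * v x) ^ θ - C₂) x)
        ≤ ∫ x : EuclideanSpace ℝ (Fin N), F (t * v x) :=
      integral_mono hintg hintF hmono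
    have h2 : (∫ x : EuclideanSpace ℝ (Fin N),
        K.indicator (fun x => C₁ * (t * v x) ^ θ - C₂) x)
        = C₁ * t ^ θ * c - C₂ * M := by
      rw [integral_indicator hKm]
      have heq : ∀ x, C₁ * (t * v x) ^ θ - C₂ = C₁ * t ^ θ * (v x) ^ θ - C₂ := by
        intro x
        rw [Real.mul_rpow ht (hv0 x), mul_assoc]
      simp only [heq]
      rw [integral_sub ((hintpow.const_mul (C₁ * t ^ θ)).integrableOn)
        (integrableOn_const hK.measure_lt_top.ne),
        integral_const, integral_const_mul]
      have h3 : (∫ x in K, (v x) ^ θ) = c := by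
        rw [hcdef]
        apply setIntegral_eq_integral_of_forall_compl_eq_zero
        intro x hx
        rw [image_eq_zero_of_notMem_tsupport hx, Real.zero_rpow hθ0.ne']
      rw [h3, hMdef]
      simp [Measure.restrict_apply_univ, smul_eq_mul, mul_comm, Measure.real]
    linarith [h1, h2 ▸ h1]
  -- the dominating function and its limit
  have hbound : ∀ᶠ t : ℝ in atTop,
      (t ^ p / p) * (∫ x : EuclideanSpace ℝ (Fin N), (‖fderiv ℝ v x‖ ^ p + V x * |v x| ^ p))
      + (t ^ q / q) * (∫ x : EuclideanSpace ℝ (Fin N), (‖fderiv ℝ v x‖ ^ q + V x * |v x| ^ q))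
      - (∫ x : EuclideanSpace ℝ (Fin N), F (t * v x))
      ≤ t ^ p * |A| + t ^ q * |B| - (C₁ * t ^ θ * c - C₂ * M) := by
    filter_upwards [eventually_ge_atTop (0 : ℝ)] with t ht
    have e1 : (t ^ p / p) * (∫ x : EuclideanSpace ℝ (Fin N),
        (‖fderiv ℝ v x‖ ^ p + V x * |v x| ^ p)) = t ^ p * A := by
      rw [hAdef]; ring
    have e2 : (t ^ q / q) * (∫ x : EuclideanSpace ℝ (Fin N),
        (‖fderiv ℝ v x‖ ^ q + V x * |v x| ^ q)) = t ^ q * B := by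
      rw [hBdef]; ring
    rw [e1, e2]
    have hp1 : t ^ p * A ≤ t ^ p * |A| :=
      mul_le_mul_of_nonneg_left (le_abs_self A) (Real.rpow_nonneg ht p)
    have hq1 : t ^ q * B ≤ t ^ q * |B| :=
      mul_le_mul_of_nonneg_left (le_abs_self B) (Real.rpow_nonneg ht q)
    have hk := key t ht
    linarith
  apply tendsto_atBot_mono' atTop hbound
  -- show the dominating function tends to atBot
  have heq : ∀ᶠ t : ℝ in atTop,
      t ^ p * |A| + t ^ q * |B| - (C₁ * t ^ θ * c - C₂ * M)
      = t ^ θ * (|A| * t ^ (p - θ) + |B| * t ^ (q - θ) - C₁ * c) + C₂ * M := by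
    filter_upwards [eventually_gt_atTop (0 : ℝ)] with t ht
    have e1 : t ^ θ * t ^ (p - θ) = t ^ p := by
      rw [← Real.rpow_add ht]; ring_nf
    have e2 : t ^ θ * t ^ (q - θ) = t ^ q := by
      rw [← Real.rpow_add ht]; ring_nf
    rw [← e1, ← e2]
    ring
  rw [tendsto_congr' heq]
  apply tendsto_atBot_add_const_right
  apply Filter.Tendsto.atTop_mul_neg (C := -(C₁ * c)) (by nlinarith)
    (tendsto_rpow_atTop hθ0)
  have l1 : Tendsto (fun t : ℝ => |A| * t ^ (p - θ)) atTop (𝓝 0) := by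
    have := (tendsto_rpow_neg_atTop (y := θ - p) (by linarith)).const_mul |A|
    simpa [neg_sub] using this
  have l2 : Tendsto (fun t : ℝ => |B| * t ^ (q - θ)) atTop (𝓝 0) := by
    have := (tendsto_rpow_neg_atTop (y := θ - q) (by linarith)).const_mul |B|
    simpa [neg_sub] using this
  have := (l1.add l2).sub_const (C₁ * c)
  simpa using this
end

section
/- Let 1 < p < q < N with q* = Nq/(N−q), let r ∈ (q, q*), let V₀ > 0 and let V : ℝ^N → ℝ be continuous with V(x) ≥ V₀ for all x. Let f : ℝ → ℝ be continuous with lim_{t → 0} f(t)/|t|^{p-1} = 0 and lim_{|t| → ∞} f(t)/|t|^{r-1} = 0, and set F(t) = ∫₀^t f(τ) dτ. For a continuously differentiable compactly supported u : ℝ^N → ℝ and t ∈ {p, q} set ‖u‖_{V,t}^t = ∫_{ℝ^N} ‖∇u(x)‖^t dx + ∫_{ℝ^N} V(x)|u(x)|^t dx and I(u) = (1/p)‖u‖_{V,p}^p + (1/q)‖u‖_{V,q}^q − ∫_{ℝ^N} F(u(x)) dx. Then there exist α > 0 and ρ > 0 such that every continuously differentiable compactly supported u : ℝ^N → ℝ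 with ‖u‖_{V,p} + ‖u‖_{V,q} = ρ satisfies I(u) ≥ α. -/
open Filter MeasureTheory
open scoped Topology

/-- `‖u‖_{V,t}^t = ∫ ‖∇u‖^t dx + ∫ V |u|^t dx`. -/
noncomputable def pNormPow (N : ℕ) (V : EuclideanSpace ℝ (Fin N) → ℝ) (t : ℝ)
    (u : EuclideanSpace ℝ (Fin N) → ℝ) : ℝ :=
  (∫ x : EuclideanSpace ℝ (Fin N), ‖fderiv ℝ u x‖ ^ t)
    + ∫ x : EuclideanSpace ℝ (Fin N), V x * |u x| ^ t

/-- `‖u‖_{V,t}`. -/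
noncomputable def vNorm (N : ℕ) (V : EuclideanSpace ℝ (Fin N) → ℝ) (t : ℝ)
    (u : EuclideanSpace ℝ (Fin N) → ℝ) : ℝ :=
  (pNormPow N V t u) ^ (1 / t)

open scoped ENNReal NNReal

lemma f_zero (p : ℝ) (hp : 1 < p) (f : ℝ → ℝ) (hf : Continuous f)
    (h0 : Tendsto (fun t : ℝ => f t / |t| ^ (p - 1)) (𝓝[≠] (0 : ℝ)) (𝓝 0)) :
    f 0 = 0 := by
  have hpow : Tendsto (fun t : ℝ => |t| ^ (p - 1)) (𝓝[≠] (0:ℝ)) (𝓝 0) := by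
    have h : Tendsto (fun t : ℝ => |t| ^ (p - 1)) (𝓝 (0:ℝ)) (𝓝 (|(0:ℝ)| ^ (p-1))) :=
      ((Real.continuousAt_rpow_const _ _ (Or.inr (by linarith))).comp
        continuous_abs.continuousAt).tendsto
    simpa [abs_zero, Real.zero_rpow (by linarith : p - 1 ≠ 0)] using
      h.mono_left nhdsWithin_le_nhds
  have h1 : Tendsto f (𝓝[≠] (0:ℝ)) (𝓝 0) := by
    have := h0.mul hpow
    rw [zero_mul] at this
    refine this.congr' ?_
    filter_upwards [self_mem_nhdsWithin] with t ht
    have hne : |t| ^ (p - 1) ≠ 0 :=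
      (Real.rpow_pos_of_pos (abs_pos.mpr ht) _).ne'
    exact div_mul_cancel₀ _ hne
  exact tendsto_nhds_unique (hf.continuousAt.tendsto.mono_left nhdsWithin_le_nhds) h1

lemma growth_bound (p r : ℝ) (hp : 1 < p) (hr : 1 < r) (f : ℝ → ℝ) (hf : Continuous f)
    (h0 : Tendsto (fun t : ℝ => f t / |t| ^ (p - 1)) (𝓝[≠] (0 : ℝ)) (𝓝 0))
    (hinf : Tendsto (fun t : ℝ => f t / |t| ^ (r - 1)) (Filter.cocompact ℝ) (𝓝 0))
    (ε : ℝ) (hε : 0 < ε) :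
    ∃ C ≥ (1:ℝ), ∀ t : ℝ, |f t| ≤ ε * |t| ^ (p - 1) + C * |t| ^ (r - 1) := by
  have hf0 : f 0 = 0 := f_zero p hp f hf h0
  -- near zero
  obtain ⟨δ, hδ, hδ'⟩ := Metric.tendsto_nhdsWithin_nhds.mp h0 ε hε
  -- far away
  have hinf' : (fun t => f t / |t| ^ (r-1)) ⁻¹' Metric.ball 0 1 ∈ cocompact ℝ :=
    hinf (Metric.ball_mem_nhds (0:ℝ) one_pos)
  rw [Filter.mem_cocompact] at hinf'
  obtain ⟨K, hK, hKs⟩ := hinf'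
  obtain ⟨M, hM⟩ := hK.isBounded.subset_closedBall 0
  -- bound on the middle annulus
  obtain ⟨B, hB⟩ := (isCompact_Icc (a := -(M+δ)) (b := M+δ)).exists_bound_of_continuousOn
    hf.continuousOn
  set δ' := min δ 1 with hδ'def
  have hδ'pos : 0 < δ' := lt_min hδ one_pos
  set C := max 1 ((max B 0 + 1) / δ' ^ (r-1)) with hC
  have hC1 : (1:ℝ) ≤ C := le_max_left _ _
  refine ⟨C, hC1, fun t => ?_⟩
  have habs : (0:ℝ) ≤ |t| := abs_nonneg t
  have hterm1 : 0 ≤ ε * |t| ^ (p-1) := by positivity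
  have hterm2 : 0 ≤ C * |t| ^ (r-1) := by positivity
  rcases eq_or_ne t 0 with rfl | ht0
  · simp [hf0]; positivity
  rcases lt_or_ge (|t|) δ with hlt | hge
  · -- |t| < δ : small-t bound
    have hd := hδ' ht0 (by simpa [Real.dist_eq, sub_zero] using hlt)
    rw [Real.dist_eq, sub_zero] at hd
    have hXpos : (0:ℝ) < |t| ^ (p-1) := Real.rpow_pos_of_pos (abs_pos.mpr ht0) _
    rw [abs_div, abs_of_pos hXpos, div_lt_iff₀ hXpos] at hd
    linarith
  rcases le_or_gt (|t|) (M + δ) with hle | hgt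
  · -- annulus: δ ≤ |t| ≤ M+δ
    have hBt : |f t| ≤ max B 0 := by
      have := hB t (by constructor <;> [linarith [neg_abs_le t]; linarith [le_abs_self t]])
      exact le_trans (by simpa using this) (le_max_left _ _)
    have hpowle : δ' ^ (r-1) ≤ |t| ^ (r-1) :=
      Real.rpow_le_rpow hδ'pos.le (le_trans (min_le_left _ _) hge) (by linarith)
    have hpos : (0:ℝ) < δ' ^ (r-1) := Real.rpow_pos_of_pos hδ'pos _
    have key : |f t| ≤ ((max B 0 + 1) / δ' ^ (r-1)) * |t| ^ (r-1) := by
      rw [div_mul_eq_mul_div, le_div_iff₀ hpos]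
      exact mul_le_mul (by linarith) hpowle hpos.le (by positivity)
    have key2 : |f t| ≤ C * |t| ^ (r-1) :=
      le_trans key (mul_le_mul_of_nonneg_right (le_max_right _ _) (Real.rpow_nonneg habs _))
    linarith
  · -- |t| > M + δ : outside K
    have htK : t ∉ K := fun h => by
      have := hM h; rw [Metric.mem_closedBall, Real.dist_eq, sub_zero] at this; linarith
    have hXpos : (0:ℝ) < |t| ^ (r-1) := Real.rpow_pos_of_pos (abs_pos.mpr ht0) _
    have hd : |f t| / |t| ^ (r-1) < 1 := by
      have := hKs htK
      simpa [Real.dist_eq, sub_zero, abs_div, abs_of_pos hXpos] using this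
    rw [div_lt_iff₀ hXpos] at hd
    have h2 : (1:ℝ) * |t| ^ (r-1) ≤ C * |t| ^ (r-1) :=
      mul_le_mul_of_nonneg_right hC1 (Real.rpow_nonneg habs _)
    linarith

lemma F_bound (p r ε C : ℝ) (hp : 1 < p) (hr : 1 < r) (hε : 0 < ε) (hC : 0 ≤ C)
    (f : ℝ → ℝ) (hbd : ∀ t, |f t| ≤ ε * |t| ^ (p-1) + C * |t| ^ (r-1)) :
    ∀ t : ℝ, (∫ τ in (0:ℝ)..t, f τ) ≤ ε * |t| ^ p + C * |t| ^ r := by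
  intro t
  rcases eq_or_ne t 0 with rfl | ht0
  · simp [Real.zero_rpow (by linarith : p ≠ 0), Real.zero_rpow (by linarith : r ≠ 0)]
  have habs : (0:ℝ) < |t| := abs_pos.mpr ht0
  have key : ‖∫ τ in (0:ℝ)..t, f τ‖ ≤ (ε * |t| ^ (p-1) + C * |t| ^ (r-1)) * |t - 0| := by
    apply intervalIntegral.norm_integral_le_of_norm_le_const
    intro x hx
    have hxle : |x| ≤ |t| := by
      rw [Set.uIoc_eq_union] at hx
      rcases hx with hx | hx <;> rw [Set.mem_Ioc] at hx <;>
        rw [abs_le] <;> constructor <;> cases abs_cases t <;> linarith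
    calc ‖f x‖ = |f x| := rfl
      _ ≤ ε * |x| ^ (p-1) + C * |x| ^ (r-1) := hbd x
      _ ≤ ε * |t| ^ (p-1) + C * |t| ^ (r-1) := by
          have h1 := Real.rpow_le_rpow (abs_nonneg x) hxle (by linarith : (0:ℝ) ≤ p - 1)
          have h2 := Real.rpow_le_rpow (abs_nonneg x) hxle (by linarith : (0:ℝ) ≤ r - 1)
          have := mul_le_mul_of_nonneg_left h1 hε.le
          have := mul_le_mul_of_nonneg_left h2 hC
          linarith
  rw [sub_zero] at key
  calc (∫ τ in (0:ℝ)..t, f τ) ≤ ‖∫ τ in (0:ℝ)..t, f τ‖ := le_abs_self _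
    _ ≤ (ε * |t| ^ (p-1) + C * |t| ^ (r-1)) * |t| := key
    _ = ε * |t| ^ p + C * |t| ^ r := by
        rw [add_mul, mul_assoc, mul_assoc, ← Real.rpow_add_one habs.ne',
          ← Real.rpow_add_one habs.ne']
        ring_nf

lemma rpow_cont (s : ℝ) (hs : 0 < s) : Continuous (fun y : ℝ => y ^ s) :=
  continuous_iff_continuousAt.mpr fun y => Real.continuousAt_rpow_const y s (Or.inr hs.le)

lemma integ_helper {N : ℕ} {G : Type*} [NormedAddCommGroup G]
    (g : EuclideanSpace ℝ (Fin N) → G) (hg : Continuous g) (h2g : HasCompactSupport g)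
    (s : ℝ) (hs : 0 < s) :
    Integrable (fun x => ‖g x‖ ^ s) ∧
      (∫⁻ x, (‖g x‖₊ : ℝ≥0∞) ^ s) = ENNReal.ofReal (∫ x, ‖g x‖ ^ s) := by
  have hcont : Continuous (fun x => ‖g x‖ ^ s) := (rpow_cont s hs).comp hg.norm
  have hsupp : HasCompactSupport (fun x => ‖g x‖ ^ s) :=
    h2g.norm.comp_left (g := fun y : ℝ => y ^ s) (Real.zero_rpow hs.ne')
  have hint : Integrable (fun x => ‖g x‖ ^ s) := hcont.integrable_of_hasCompactSupport hsupp
  refine ⟨hint, ?_⟩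
  rw [ofReal_integral_eq_lintegral_ofReal hint
    (Filter.Eventually.of_forall fun x => Real.rpow_nonneg (norm_nonneg _) _)]
  refine lintegral_congr fun x => ?_
  rw [← enorm_eq_nnnorm, ← ofReal_norm, ENNReal.ofReal_rpow_of_nonneg (norm_nonneg _) hs.le]

lemma sobolev_interp (N : ℕ) (q r V₀ : ℝ) (h1q : 1 < q) (hqN : q < (N:ℝ)) (hqr : q < r)
    (hrcrit : r < (N:ℝ) * q / ((N:ℝ) - q))
    (V : EuclideanSpace ℝ (Fin N) → ℝ) (hV : Continuous V)
    (hV₀ : 0 < V₀) (hVlb : ∀ x, V₀ ≤ V x) :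
    ∃ K ≥ (1:ℝ), ∀ u : EuclideanSpace ℝ (Fin N) → ℝ, ContDiff ℝ 1 u → HasCompactSupport u →
      (∫ x, |u x| ^ r) ≤ K * (pNormPow N V q u) ^ (r/q) := by
  have hq0 : (0:ℝ) < q := by linarith
  have hNq : (0:ℝ) < (N:ℝ) - q := by linarith
  have hN0 : (0:ℝ) < (N:ℝ) := by linarith
  set qs : ℝ := (N:ℝ) * q / ((N:ℝ) - q) with hqs_def
  have hqqs : q < qs := lt_trans hqr hrcrit
  have hqs0 : 0 < qs := lt_trans hq0 hqqs
  have hr0 : (0:ℝ) < r := by linarith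
  set θ : ℝ := (r - q) / (qs - q) with hθ_def
  have hθ0 : 0 < θ := div_pos (by linarith) (by linarith)
  have hθ1 : θ < 1 := (div_lt_one (by linarith)).mpr (by linarith)
  have hθq : θ * (qs - q) = r - q := div_mul_cancel₀ _ (by linarith : qs - q ≠ 0)
  have hsum : (1 - θ) * q + θ * qs = r := by nlinarith [hθq]
  -- NNReal exponents
  set qn : ℝ≥0 := ⟨q, hq0.le⟩ with hqn_def
  set qsn : ℝ≥0 := ⟨qs, hqs0.le⟩ with hqsn_def
  have hqn1 : (1:ℝ≥0) ≤ qn := by rw [← NNReal.coe_le_coe]; exact h1q.le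
  have hfinrank : Module.finrank ℝ (EuclideanSpace ℝ (Fin N)) = N := by
    simp [finrank_euclideanSpace]
  have hNnat : 0 < N := by exact_mod_cast hN0
  have hp' : ((qsn:ℝ))⁻¹ = ((qn:ℝ))⁻¹ - ((N:ℝ))⁻¹ := by
    show qs⁻¹ = q⁻¹ - ((N:ℝ))⁻¹
    rw [hqs_def, inv_div, div_eq_iff (by positivity : (N:ℝ) * q ≠ 0)]
    field_simp
  set K' : ℝ≥0 :=
    eLpNormLESNormFDerivOfEqInnerConst (volume : Measure (EuclideanSpace ℝ (Fin N))) qn with hK'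
  set c₀ : ℝ≥0∞ := max 1 (ENNReal.ofReal V₀)⁻¹ with hc₀
  have hV₀0 : ENNReal.ofReal V₀ ≠ 0 := by simp [ENNReal.ofReal_eq_zero, not_le, hV₀]
  have hc₀top : c₀ ≠ ⊤ := by
    simp only [hc₀, ne_eq, max_eq_top, not_or]
    exact ⟨ENNReal.one_ne_top, ENNReal.inv_ne_top.mpr hV₀0⟩
  set 𝒦 : ℝ≥0∞ := (K' : ℝ≥0∞) ^ (qs * θ) * c₀ ^ (r/q) with h𝒦
  have h𝒦top : 𝒦 ≠ ⊤ := by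
    apply ENNReal.mul_ne_top
    · exact ENNReal.rpow_ne_top_of_nonneg (by positivity) ENNReal.coe_ne_top
    · exact ENNReal.rpow_ne_top_of_nonneg (by positivity) hc₀top
  refine ⟨max 1 𝒦.toReal, le_max_left _ _, fun u hu h2u => ?_⟩
  have hcu : Continuous u := hu.continuous
  have hfd_cont : Continuous (fderiv ℝ u) := (hu.fderiv_right (m := 0) le_rfl).continuous
  have hfd_supp : HasCompactSupport (fderiv ℝ u) := h2u.fderiv (𝕜 := ℝ)
  -- basic integrals
  obtain ⟨hint_r, heq_r⟩ := integ_helper u hcu h2u r hr0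
  obtain ⟨hint_q, heq_q⟩ := integ_helper u hcu h2u q hq0
  obtain ⟨hint_qs, heq_qs⟩ := integ_helper u hcu h2u qs hqs0
  obtain ⟨hint_g, heq_g⟩ := integ_helper (fderiv ℝ u) hfd_cont hfd_supp q hq0
  simp only [Real.norm_eq_abs] at hint_r heq_r hint_q heq_q hint_qs heq_qs
  -- the V-weighted integral
  have hVu_cont : Continuous (fun x => V x * |u x| ^ q) :=
    hV.mul ((rpow_cont q hq0).comp hcu.abs)
  have hVu_supp : HasCompactSupport (fun x => V x * |u x| ^ q) := by
    have h1 : HasCompactSupport (fun x => |u x| ^ q) :=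
      h2u.abs.comp_left (g := fun y : ℝ => y ^ q) (Real.zero_rpow hq0.ne')
    exact h1.mul_left
  have hVu_int : Integrable (fun x => V x * |u x| ^ q) :=
    hVu_cont.integrable_of_hasCompactSupport hVu_supp
  have hVu_nonneg : ∀ x, 0 ≤ V x * |u x| ^ q := fun x =>
    mul_nonneg (le_trans hV₀.le (hVlb x)) (Real.rpow_nonneg (abs_nonneg _) _)
  have heq_W : ENNReal.ofReal (∫ x, V x * |u x| ^ q)
      = ∫⁻ x, ENNReal.ofReal (V x * |u x| ^ q) :=
    ofReal_integral_eq_lintegral_ofReal hVu_int (Filter.Eventually.of_forall hVu_nonneg)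
  -- notation
  set X : ℝ≥0∞ := ∫⁻ x, (‖u x‖₊ : ℝ≥0∞) ^ q with hX
  set Z : ℝ≥0∞ := ∫⁻ x, (‖u x‖₊ : ℝ≥0∞) ^ qs with hZdef
  set R : ℝ≥0∞ := ∫⁻ x, (‖u x‖₊ : ℝ≥0∞) ^ r with hR
  set Y : ℝ≥0∞ := ∫⁻ x, (‖fderiv ℝ u x‖₊ : ℝ≥0∞) ^ q with hY
  set P : ℝ≥0∞ := ENNReal.ofReal (pNormPow N V q u) with hP
  have hgrad_nonneg : 0 ≤ ∫ x, ‖fderiv ℝ u x‖ ^ q :=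
    integral_nonneg fun x => Real.rpow_nonneg (norm_nonneg _) _
  have hVq_nonneg : 0 ≤ ∫ x, V x * |u x| ^ q := integral_nonneg hVu_nonneg
  have hPsplit : P = Y + ENNReal.ofReal (∫ x, V x * |u x| ^ q) := by
    rw [hP, pNormPow, ENNReal.ofReal_add hgrad_nonneg hVq_nonneg, heq_g]
  -- X ≤ c₀ * P
  have hXP : X ≤ c₀ * P := by
    have step1 : ENNReal.ofReal V₀ * X ≤ ENNReal.ofReal (∫ x, V x * |u x| ^ q) := by
      rw [heq_W, hX, ← lintegral_const_mul' _ _ ENNReal.ofReal_ne_top]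
      refine lintegral_mono fun x => ?_
      have h1 : ENNReal.ofReal (V x * |u x| ^ q)
          = ENNReal.ofReal (V x) * (‖u x‖₊ : ℝ≥0∞) ^ q := by
        rw [ENNReal.ofReal_mul (le_trans hV₀.le (hVlb x)),
          ← ENNReal.ofReal_rpow_of_nonneg (abs_nonneg _) hq0.le,
          ← Real.enorm_eq_ofReal_abs, enorm_eq_nnnorm]
      rw [h1]
      exact mul_le_mul_left (ENNReal.ofReal_le_ofReal (hVlb x)) _
    have step2 : X ≤ (ENNReal.ofReal V₀)⁻¹ * ENNReal.ofReal (∫ x, V x * |u x| ^ q) := by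
      rw [← one_mul X, ← ENNReal.inv_mul_cancel hV₀0 ENNReal.ofReal_ne_top, mul_assoc]
      exact mul_le_mul_right step1 _
    calc X ≤ (ENNReal.ofReal V₀)⁻¹ * ENNReal.ofReal (∫ x, V x * |u x| ^ q) := step2
      _ ≤ c₀ * P := by
          apply mul_le_mul' (le_max_right _ _)
          rw [hPsplit]; exact le_add_self
  have hYP : Y ≤ c₀ * P := by
    calc Y ≤ P := by rw [hPsplit]; exact le_self_add
      _ ≤ c₀ * P := le_mul_of_one_le_left zero_le (le_max_left _ _)
  -- Sobolev inequality
  have hZY : Z ≤ (K' : ℝ≥0∞) ^ qs * Y ^ (qs / q) := by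
    have hsob := eLpNorm_le_eLpNorm_fderiv_of_eq_inner
      (volume : Measure (EuclideanSpace ℝ (Fin N))) hu h2u (p := qn) (p' := qsn) hqn1
      (by rw [hfinrank]; exact hNnat) (by rw [hfinrank]; exact hp')
    rw [eLpNorm_nnreal_eq_lintegral (by rw [← NNReal.coe_ne_zero]; exact hqs0.ne'),
      eLpNorm_nnreal_eq_lintegral (by rw [← NNReal.coe_ne_zero]; exact hq0.ne')] at hsob
    have hsob' : Z ^ (1/qs) ≤ (K' : ℝ≥0∞) * Y ^ (1/q) := hsob
    have := ENNReal.rpow_le_rpow hsob' hqs0.le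
    rwa [← ENNReal.rpow_mul, one_div, inv_mul_cancel₀ hqs0.ne', ENNReal.rpow_one,
      ENNReal.mul_rpow_of_nonneg _ _ hqs0.le, ← ENNReal.rpow_mul, one_div,
      inv_mul_eq_div] at this
  -- Hölder interpolation
  have hhold : R ≤ X ^ (1 - θ) * Z ^ θ := by
    have hconj : Real.HolderConjugate (1/(1-θ)) (1/θ) := by
      constructor
      · rw [one_div, one_div, inv_inv, inv_inv, inv_one]; ring
      · exact one_div_pos.mpr (by linarith)
      · exact one_div_pos.mpr hθ0
    have hmf : AEMeasurable (fun x => (‖u x‖₊ : ℝ≥0∞) ^ ((1-θ) * q)) volume := by fun_prop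
    have hmg : AEMeasurable (fun x => (‖u x‖₊ : ℝ≥0∞) ^ (θ * qs)) volume := by fun_prop
    have key := ENNReal.lintegral_mul_le_Lp_mul_Lq volume hconj hmf hmg
    simp only [Pi.mul_apply] at key
    have e0 : ∀ x : EuclideanSpace ℝ (Fin N),
        (‖u x‖₊ : ℝ≥0∞) ^ ((1-θ) * q) * (‖u x‖₊ : ℝ≥0∞) ^ (θ * qs)
        = (‖u x‖₊ : ℝ≥0∞) ^ r := fun x => by
      rw [← ENNReal.rpow_add_of_nonneg _ _ (by nlinarith) (by positivity), hsum]
    have e1 : ∀ x : EuclideanSpace ℝ (Fin N),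
        ((‖u x‖₊ : ℝ≥0∞) ^ ((1-θ) * q)) ^ (1/(1-θ)) = (‖u x‖₊ : ℝ≥0∞) ^ q := fun x => by
      rw [← ENNReal.rpow_mul]; congr 1
      rw [mul_comm ((1:ℝ)-θ) q, mul_assoc, mul_one_div,
        div_self (by linarith : (1:ℝ) - θ ≠ 0), mul_one]
    have e2 : ∀ x : EuclideanSpace ℝ (Fin N),
        ((‖u x‖₊ : ℝ≥0∞) ^ (θ * qs)) ^ (1/θ) = (‖u x‖₊ : ℝ≥0∞) ^ qs := fun x => by
      rw [← ENNReal.rpow_mul]; congr 1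
      rw [mul_comm θ qs, mul_assoc, mul_one_div, div_self hθ0.ne', mul_one]
    simp only [e0, e1, e2, one_div_one_div] at key
    exact key
  -- combine
  have hmain : R ≤ 𝒦 * P ^ (r/q) := by
    have hLq : X ^ (1-θ) ≤ (c₀ * P) ^ (1-θ) := ENNReal.rpow_le_rpow hXP (by linarith)
    have hZ2 : Z ^ θ ≤ ((K' : ℝ≥0∞) ^ qs * (c₀ * P) ^ (qs/q)) ^ θ := by
      apply ENNReal.rpow_le_rpow _ hθ0.le
      exact le_trans hZY (mul_le_mul_right (ENNReal.rpow_le_rpow hYP (by positivity)) _)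
    calc R ≤ X ^ (1-θ) * Z ^ θ := hhold
      _ ≤ (c₀ * P) ^ (1-θ) * ((K' : ℝ≥0∞) ^ qs * (c₀ * P) ^ (qs/q)) ^ θ :=
          mul_le_mul' hLq hZ2
      _ = 𝒦 * P ^ (r/q) := by
          rw [ENNReal.mul_rpow_of_nonneg _ _ hθ0.le, ← ENNReal.rpow_mul, ← ENNReal.rpow_mul]
          have hexp : (1 - θ) + qs / q * θ = r / q := by
            field_simp
            nlinarith [hsum]
          rw [ENNReal.mul_rpow_of_nonneg c₀ P (by linarith : (0:ℝ) ≤ 1 - θ),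
            ENNReal.mul_rpow_of_nonneg c₀ P (by positivity : (0:ℝ) ≤ qs/q*θ), h𝒦,
            ← hexp, ENNReal.rpow_add_of_nonneg (x := c₀) _ _ (by linarith) (by positivity),
            ENNReal.rpow_add_of_nonneg (x := P) _ _ (by linarith) (by positivity)]
          ring
  -- back to reals
  have hfin : 𝒦 * P ^ (r/q) ≠ ⊤ :=
    ENNReal.mul_ne_top h𝒦top (ENNReal.rpow_ne_top_of_nonneg (by positivity) ENNReal.ofReal_ne_top)
  have hreal : ∫ x, |u x| ^ r ≤ (𝒦 * P ^ (r/q)).toReal := by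
    have := ENNReal.toReal_mono hfin (le_of_eq_of_le heq_r.symm hmain)
    rwa [ENNReal.toReal_ofReal (integral_nonneg fun x => Real.rpow_nonneg (abs_nonneg _) _)]
      at this
  have hPnn : 0 ≤ pNormPow N V q u := by
    rw [pNormPow]; exact add_nonneg hgrad_nonneg hVq_nonneg
  calc (∫ x, |u x| ^ r) ≤ (𝒦 * P ^ (r/q)).toReal := hreal
    _ = 𝒦.toReal * (pNormPow N V q u) ^ (r/q) := by
        rw [ENNReal.toReal_mul, hP, ENNReal.ofReal_rpow_of_nonneg hPnn (by positivity),
          ENNReal.toReal_ofReal (Real.rpow_nonneg hPnn _)]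
    _ ≤ (max 1 𝒦.toReal) * (pNormPow N V q u) ^ (r/q) :=
        mul_le_mul_of_nonneg_right (le_max_right _ _) (Real.rpow_nonneg hPnn _)

set_option maxHeartbeats 1600000 in
theorem stmt4 (N : ℕ) (p q r V₀ : ℝ)
    (hp : 1 < p) (hpq : p < q) (hqN : q < (N : ℝ))
    (hqr : q < r) (hrcrit : r < (N : ℝ) * q / ((N : ℝ) - q))
    (V : EuclideanSpace ℝ (Fin N) → ℝ) (hV : Continuous V)
    (hV₀ : 0 < V₀) (hVlb : ∀ x, V₀ ≤ V x)
    (f : ℝ → ℝ) (hf : Continuous f)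
    (h0 : Tendsto (fun t : ℝ => f t / |t| ^ (p - 1)) (𝓝[≠] (0 : ℝ)) (𝓝 0))
    (hinf : Tendsto (fun t : ℝ => f t / |t| ^ (r - 1)) (Filter.cocompact ℝ) (𝓝 0)) :
    ∃ α > (0:ℝ), ∃ ρ > (0:ℝ), ∀ u : EuclideanSpace ℝ (Fin N) → ℝ,
      ContDiff ℝ 1 u → HasCompactSupport u →
      vNorm N V p u + vNorm N V q u = ρ →
      α ≤ (1 / p) * pNormPow N V p u + (1 / q) * pNormPow N V q u
            - ∫ x : EuclideanSpace ℝ (Fin N), (∫ τ in (0:ℝ)..(u x), f τ) := by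
  have hp0 : (0:ℝ) < p := by linarith
  have hq0 : (0:ℝ) < q := by linarith
  have hr1 : (1:ℝ) < r := by linarith
  have hr0 : (0:ℝ) < r := by linarith
  have hrq : (0:ℝ) < r - q := by linarith
  set ε : ℝ := V₀ / (2 * p) with hε_def
  have hε : 0 < ε := by positivity
  obtain ⟨C, hC1, hbd⟩ := growth_bound p r hp hr1 f hf h0 hinf ε hε
  have hFbd := F_bound p r ε C hp hr1 hε (by linarith) f hbd
  obtain ⟨K, hK1, hSob⟩ := sobolev_interp N q r V₀ (by linarith) hqN hqr hrcrit V hV hV₀ hVlb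
  set D : ℝ := C * K with hD_def
  have hD1 : (1:ℝ) ≤ D := by nlinarith
  have hD0 : (0:ℝ) < D := by linarith
  set ρ : ℝ := min 1 ((1 / (2 * q * D)) ^ (1 / (r - q))) with hρ_def
  have hρ0 : 0 < ρ := lt_min one_pos (Real.rpow_pos_of_pos (by positivity) _)
  have hρ1 : ρ ≤ 1 := min_le_left _ _
  have hρsmall : ρ ^ (r - q) ≤ 1 / (2 * q * D) := by
    calc ρ ^ (r - q) ≤ ((1 / (2 * q * D)) ^ (1 / (r - q))) ^ (r - q) :=
        Real.rpow_le_rpow hρ0.le (min_le_right _ _) hrq.le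
      _ = 1 / (2 * q * D) := by
        rw [one_div (r - q), Real.rpow_inv_rpow (by positivity) hrq.ne']
  refine ⟨(1 / (2 * q)) * (ρ / 2) ^ q, by positivity, ρ, hρ0, fun u hu h2u hρeq => ?_⟩
  have hcu : Continuous u := hu.continuous
  obtain ⟨hint_up, heq_up⟩ := integ_helper u hcu h2u p hp0
  obtain ⟨hint_ur, heq_ur⟩ := integ_helper u hcu h2u r hr0
  simp only [Real.norm_eq_abs] at hint_up hint_ur
  -- nonnegativity of the pieces
  have hgrad_nonneg : ∀ t : ℝ, 0 ≤ ∫ x, ‖fderiv ℝ u x‖ ^ t := fun t =>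
    integral_nonneg fun x => Real.rpow_nonneg (norm_nonneg _) _
  have hVu_nonneg : ∀ (t : ℝ) (x : EuclideanSpace ℝ (Fin N)), 0 ≤ V x * |u x| ^ t :=
    fun t x => mul_nonneg (le_trans hV₀.le (hVlb x)) (Real.rpow_nonneg (abs_nonneg _) _)
  have hVint_nonneg : ∀ t : ℝ, 0 ≤ ∫ x, V x * |u x| ^ t := fun t =>
    integral_nonneg (hVu_nonneg t)
  have hPp_nonneg : 0 ≤ pNormPow N V p u := add_nonneg (hgrad_nonneg p) (hVint_nonneg p)
  have hPq_nonneg : 0 ≤ pNormPow N V q u := add_nonneg (hgrad_nonneg q) (hVint_nonneg q)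
  -- integrability of V * |u|^p
  have hVup_cont : Continuous (fun x => V x * |u x| ^ p) :=
    hV.mul ((rpow_cont p hp0).comp hcu.abs)
  have hVup_supp : HasCompactSupport (fun x => V x * |u x| ^ p) :=
    (h2u.abs.comp_left (g := fun y : ℝ => y ^ p) (Real.zero_rpow hp0.ne')).mul_left
  have hVup_int : Integrable (fun x => V x * |u x| ^ p) :=
    hVup_cont.integrable_of_hasCompactSupport hVup_supp
  -- (i) bound on ∫ F(u x)
  have hFprim_cont : Continuous (fun t : ℝ => ∫ τ in (0:ℝ)..t, f τ) :=
    intervalIntegral.continuous_primitive (fun a b => hf.intervalIntegrable a b) 0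
  have hFu_cont : Continuous (fun x => ∫ τ in (0:ℝ)..(u x), f τ) := hFprim_cont.comp hcu
  have hFu_supp : HasCompactSupport (fun x => ∫ τ in (0:ℝ)..(u x), f τ) :=
    h2u.comp_left (g := fun t : ℝ => ∫ τ in (0:ℝ)..t, f τ) intervalIntegral.integral_same
  have hFu_int : Integrable (fun x => ∫ τ in (0:ℝ)..(u x), f τ) :=
    hFu_cont.integrable_of_hasCompactSupport hFu_supp
  have hI1 : (∫ x, (∫ τ in (0:ℝ)..(u x), f τ))
      ≤ ε * (∫ x, |u x| ^ p) + C * (∫ x, |u x| ^ r) := by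
    rw [← integral_const_mul, ← integral_const_mul, ← integral_add (hint_up.const_mul ε)
      (hint_ur.const_mul C)]
    exact integral_mono hFu_int ((hint_up.const_mul ε).add (hint_ur.const_mul C))
      fun x => hFbd (u x)
  -- (ii)
  have hII : ε * (∫ x, |u x| ^ p) ≤ (1 / (2 * p)) * pNormPow N V p u := by
    have h1 : V₀ * (∫ x, |u x| ^ p) ≤ ∫ x, V x * |u x| ^ p := by
      rw [← integral_const_mul]
      exact integral_mono (hint_up.const_mul V₀) hVup_int
        fun x => mul_le_mul_of_nonneg_right (hVlb x) (Real.rpow_nonneg (abs_nonneg _) _)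
    have h2 : (∫ x, V x * |u x| ^ p) ≤ pNormPow N V p u := by
      rw [pNormPow]; linarith [hgrad_nonneg p]
    have h3 : ε * (∫ x, |u x| ^ p) = (1 / (2 * p)) * (V₀ * (∫ x, |u x| ^ p)) := by
      rw [hε_def]; ring
    rw [h3]
    exact mul_le_mul_of_nonneg_left (le_trans h1 h2) (by positivity)
  -- (iii)
  have hvp_nonneg : 0 ≤ vNorm N V p u := Real.rpow_nonneg hPp_nonneg _
  have hvq_le : (pNormPow N V q u) ^ (1 / q) ≤ ρ := by
    have : vNorm N V q u ≤ ρ := by linarith [hρeq]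
    exact this
  have hIII : C * (∫ x, |u x| ^ r) ≤ (1 / (2 * q)) * pNormPow N V q u := by
    have hK2 : C * (∫ x, |u x| ^ r) ≤ D * (pNormPow N V q u) ^ (r / q) := by
      rw [hD_def, mul_assoc]
      exact mul_le_mul_of_nonneg_left (hSob u hu h2u) (by linarith)
    rcases eq_or_lt_of_le hPq_nonneg with hPq0 | hPq0
    · rw [← hPq0, Real.zero_rpow (by positivity : r / q ≠ 0), mul_zero] at hK2
      rw [← hPq0, mul_zero]
      exact hK2
    · have hsplit : (pNormPow N V q u) ^ (r / q)
          = ((pNormPow N V q u) ^ (1 / q)) ^ (r - q) * pNormPow N V q u := by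
        rw [← Real.rpow_mul hPq_nonneg, ← Real.rpow_add_one hPq0.ne']
        congr 1
        field_simp
        ring
      have h5 : ((pNormPow N V q u) ^ (1 / q)) ^ (r - q) ≤ 1 / (2 * q * D) :=
        le_trans (Real.rpow_le_rpow (Real.rpow_nonneg hPq_nonneg _) hvq_le hrq.le) hρsmall
      calc C * (∫ x, |u x| ^ r) ≤ D * (pNormPow N V q u) ^ (r / q) := hK2
        _ = D * ((pNormPow N V q u) ^ (1 / q)) ^ (r - q) * pNormPow N V q u := by
            rw [hsplit]; ring
        _ ≤ D * (1 / (2 * q * D)) * pNormPow N V q u := by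
            apply mul_le_mul_of_nonneg_right _ hPq_nonneg
            exact mul_le_mul_of_nonneg_left h5 hD0.le
        _ = (1 / (2 * q)) * pNormPow N V q u := by
            have hscal : D * (1 / (2 * q * D)) = 1 / (2 * q) := by
              field_simp
            rw [hscal]
  -- lower bound on the norm pieces
  have hPp_eq : (vNorm N V p u) ^ p = pNormPow N V p u := by
    show ((pNormPow N V p u) ^ (1/p)) ^ p = pNormPow N V p u
    rw [one_div, Real.rpow_inv_rpow hPp_nonneg hp0.ne']
  have hPq_eq : (vNorm N V q u) ^ q = pNormPow N V q u := by
    show ((pNormPow N V q u) ^ (1/q)) ^ q = pNormPow N V q u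
    rw [one_div, Real.rpow_inv_rpow hPq_nonneg hq0.ne']
  have hlow : (ρ / 2) ^ q ≤ pNormPow N V p u + pNormPow N V q u := by
    by_cases hcase : ρ / 2 ≤ vNorm N V q u
    · have h6 : (ρ/2) ^ q ≤ (vNorm N V q u) ^ q :=
        Real.rpow_le_rpow (by positivity) hcase hq0.le
      rw [hPq_eq] at h6
      linarith
    · push_neg at hcase
      have hvp : ρ / 2 ≤ vNorm N V p u := by linarith [hρeq]
      have h6 : (ρ/2) ^ q ≤ (ρ/2) ^ p :=
        Real.rpow_le_rpow_of_exponent_ge (by positivity) (by linarith) hpq.le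
      have h7 : (ρ/2) ^ p ≤ (vNorm N V p u) ^ p :=
        Real.rpow_le_rpow (by positivity) hvp hp0.le
      rw [hPp_eq] at h7
      linarith
  -- final assembly
  have hFtot : (∫ x, (∫ τ in (0:ℝ)..(u x), f τ))
      ≤ (1 / (2 * p)) * pNormPow N V p u + (1 / (2 * q)) * pNormPow N V q u :=
    le_trans hI1 (add_le_add hII hIII)
  have ep : (1:ℝ)/p - 1/(2*p) = 1/(2*p) := by field_simp; ring
  have eq' : (1:ℝ)/q - 1/(2*q) = 1/(2*q) := by field_simp; ring
  have hcoef : (1:ℝ)/(2*q) ≤ 1/(2*p) := by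
    apply one_div_le_one_div_of_le (by positivity)
    linarith
  have hc1 : (1/(2*q)) * pNormPow N V p u ≤ (1/(2*p)) * pNormPow N V p u :=
    mul_le_mul_of_nonneg_right hcoef hPp_nonneg
  have hc2 : (1/(2*q)) * (ρ/2) ^ q
      ≤ (1/(2*q)) * (pNormPow N V p u + pNormPow N V q u) :=
    mul_le_mul_of_nonneg_left hlow (by positivity)
  have hp_half : (1/p) * pNormPow N V p u - (1/(2*p)) * pNormPow N V p u
      = (1/(2*p)) * pNormPow N V p u := by rw [← sub_mul, ep]
  have hq_half : (1/q) * pNormPow N V q u - (1/(2*q)) * pNormPow N V q u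
      = (1/(2*q)) * pNormPow N V q u := by rw [← sub_mul, eq']
  nlinarith [hFtot, hc1, hc2, hp_half, hq_half]
end

section
/- Let N ≥ 1 be an integer and 1 < p < s real numbers. Let f : ℝ → ℝ be continuous with lim_{t → 0} f(t)/|t|^{p-1} = 0 and lim_{|t| → ∞} f(t)/|t|^{s-1} = 0, and set F(t) = ∫₀^t f(τ) dτ. Let u_n, u : ℝ^N → ℝ be measurable functions such that u_n → u almost everywhere on ℝ^N, sup_n (∫_{ℝ^N} |u_n|^p dx + ∫_{ℝ^N} |u_n|^s dx) < ∞, and ∫_{ℝ^N} |u|^p dx + ∫_{ℝ^N} |u|^s dx < ∞. Then ∫_{ℝ^N} (F(u_n − u) − F(u_n) + F(u)) dx → 0 as n → ∞. -/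
open Filter MeasureTheory
open scoped Topology ENNReal

lemma aux_young {s δ x y : ℝ} (hs : 1 < s) (hδ : 0 < δ) (hx : 0 ≤ x) (hy : 0 ≤ y) :
    x ^ (s - 1) * y ≤ δ * x ^ s + δ ^ (1 - s) * y ^ s := by
  have hδs : (0:ℝ) < δ ^ (1 - s) := Real.rpow_pos_of_pos hδ _
  rcases eq_or_lt_of_le hy with rfl | hy'
  · simp
    positivity
  rcases le_or_gt x (y / δ) with h | h
  · have h1 : x ^ (s - 1) ≤ (y / δ) ^ (s - 1) := Real.rpow_le_rpow hx h (by linarith)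
    have h2 : x ^ (s - 1) * y ≤ (y / δ) ^ (s - 1) * y :=
      mul_le_mul_of_nonneg_right h1 hy
    have h3 : (y / δ) ^ (s - 1) * y = δ ^ (1 - s) * y ^ s := by
      rw [Real.div_rpow hy hδ.le]
      rw [show (1 - s) = -(s-1) by ring, Real.rpow_neg hδ.le]
      rw [div_mul_eq_mul_div, ← Real.rpow_add_one hy'.ne' (s-1)]
      ring_nf
    calc x ^ (s-1) * y ≤ δ ^ (1-s) * y ^ s := h3 ▸ h2
      _ ≤ _ := by nlinarith [Real.rpow_nonneg hx s, hδ]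
  · have hyd : y ≤ δ * x := by
      rw [div_lt_iff₀ hδ] at h
      nlinarith
    have : x ^ (s-1) * y ≤ x ^ (s-1) * (δ * x) :=
      mul_le_mul_of_nonneg_left hyd (Real.rpow_nonneg hx _)
    have h4 : x ^ (s-1) * x = x ^ s := by
      rcases eq_or_lt_of_le hx with rfl | hx'
      · rw [Real.zero_rpow (by linarith), Real.zero_rpow (by linarith)]; ring
      · rw [← Real.rpow_add_one hx'.ne' (s-1)]; ring_nf
    nlinarith [Real.rpow_nonneg hy s, hδs.le]

lemma aux_two {r x y : ℝ} (hr : 0 ≤ r) (hx : 0 ≤ x) (hy : 0 ≤ y) :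
    (x + y) ^ r ≤ 2 ^ r * (x ^ r + y ^ r) := by
  have hm : x + y ≤ 2 * max x y := by
    rcases le_total x y with h | h
    · rw [max_eq_right h]; linarith
    · rw [max_eq_left h]; linarith
  have h1 : (x + y) ^ r ≤ (2 * max x y) ^ r :=
    Real.rpow_le_rpow (by positivity) hm hr
  have h2 : (2 * max x y : ℝ) ^ r = 2 ^ r * (max x y) ^ r :=
    Real.mul_rpow (by norm_num) (le_max_iff.mpr (Or.inl hx))
  have h3 : (max x y) ^ r ≤ x ^ r + y ^ r := by
    rcases max_cases x y with ⟨h4, _⟩ | ⟨h4, _⟩ <;> rw [h4]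
    · nlinarith [Real.rpow_nonneg hy r]
    · nlinarith [Real.rpow_nonneg hx r]
  calc (x+y)^r ≤ 2^r * (max x y)^r := h2 ▸ h1
    _ ≤ 2^r * (x^r + y^r) := by
        have : (0:ℝ) ≤ (2:ℝ)^r := Real.rpow_nonneg (by norm_num) r
        nlinarith


lemma aux_f_zero {p : ℝ} (hp : 1 < p) {f : ℝ → ℝ} (hf : Continuous f)
    (h0 : Tendsto (fun t : ℝ => f t / |t| ^ (p - 1)) (𝓝[≠] (0 : ℝ)) (𝓝 0)) :
    f 0 = 0 := by
  have hpow : Tendsto (fun t : ℝ => |t| ^ (p - 1)) (𝓝[≠] (0 : ℝ)) (𝓝 0) := by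
    have hc : ContinuousAt (fun x : ℝ => x ^ (p - 1)) 0 :=
      Real.continuousAt_rpow_const 0 (p-1) (Or.inr (by linarith))
    have habs : Tendsto (fun t : ℝ => |t|) (𝓝 (0:ℝ)) (𝓝 (0:ℝ)) := by
      simpa using continuous_abs.tendsto (0:ℝ)
    have := hc.tendsto.comp habs
    rw [Real.zero_rpow (by linarith : p - 1 ≠ 0)] at this
    exact this.mono_left nhdsWithin_le_nhds
  have hmul : Tendsto (fun t : ℝ => (f t / |t| ^ (p - 1)) * |t| ^ (p - 1))
      (𝓝[≠] (0:ℝ)) (𝓝 (0 * 0)) := h0.mul hpow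
  have heq : Tendsto f (𝓝[≠] (0:ℝ)) (𝓝 0) := by
    rw [zero_mul] at hmul
    refine hmul.congr' ?_
    filter_upwards [self_mem_nhdsWithin] with t ht
    have h1 : |t| ^ (p-1) ≠ 0 := by
      have : (0:ℝ) < |t| := abs_pos.mpr ht
      positivity
    field_simp
  have hcont : Tendsto f (𝓝[≠] (0:ℝ)) (𝓝 (f 0)) :=
    (hf.tendsto 0).mono_left nhdsWithin_le_nhds
  exact tendsto_nhds_unique hcont heq

lemma aux_growth {p s : ℝ} (hp : 1 < p) (hps : p < s) {f : ℝ → ℝ} (hf : Continuous f)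
    (h0 : Tendsto (fun t : ℝ => f t / |t| ^ (p - 1)) (𝓝[≠] (0 : ℝ)) (𝓝 0))
    (hinf : Tendsto (fun t : ℝ => f t / |t| ^ (s - 1)) (Filter.cocompact ℝ) (𝓝 0))
    (ε : ℝ) (hε : 0 < ε) :
    ∃ C : ℝ, 0 < C ∧ ∀ t : ℝ, |f t| ≤ ε * |t| ^ (s - 1) + C * |t| ^ (p - 1) := by
  have hf0 : f 0 = 0 := aux_f_zero hp hf h0
  -- near zero
  have h0' : {t : ℝ | |f t / |t| ^ (p-1)| < 1} ∈ 𝓝[≠] (0:ℝ) := by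
    have := h0 (Metric.ball_mem_nhds (0:ℝ) one_pos)
    simpa [Real.dist_eq, Set.preimage, abs_div] using this
  rw [Metric.mem_nhdsWithin_iff] at h0'
  obtain ⟨δ, hδ, hδ'⟩ := h0'
  -- at infinity
  have hinf' : {t : ℝ | |f t / |t| ^ (s-1)| < ε} ∈ Filter.cocompact ℝ := by
    have := hinf (Metric.ball_mem_nhds (0:ℝ) hε)
    simpa [Real.dist_eq, Set.preimage, abs_div] using this
  rw [Filter.mem_cocompact] at hinf'
  obtain ⟨K, hK, hKs⟩ := hinf'
  obtain ⟨M, hM⟩ := hK.isBounded.subset_closedBall 0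
  set M' : ℝ := max M 0 with hM'def
  have hMM' : K ⊆ Metric.closedBall 0 M' :=
    hM.trans (Metric.closedBall_subset_closedBall (le_max_left _ _))
  -- bound on compact middle
  obtain ⟨B, hB⟩ := (isCompact_Icc (a := -(M'+1)) (b := M'+1)).exists_bound_of_continuousOn
    hf.continuousOn
  have hM'0 : (0:ℝ) ≤ M' := le_max_right _ _
  have hB0 : 0 ≤ B := le_trans (norm_nonneg (f 0)) (hB 0 (by constructor <;> nlinarith))
  have hδp : (0:ℝ) < δ ^ (p - 1) := Real.rpow_pos_of_pos hδ _
  refine ⟨1 + B / δ ^ (p-1), by positivity, fun t => ?_⟩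
  rcases eq_or_ne t 0 with rfl | ht0
  · simp [hf0, Real.zero_rpow (by linarith : p - 1 ≠ 0),
      Real.zero_rpow (by linarith : s - 1 ≠ 0)]
  have habs : (0:ℝ) < |t| := abs_pos.mpr ht0
  have htp : (0:ℝ) < |t| ^ (p-1) := Real.rpow_pos_of_pos habs _
  have hts : (0:ℝ) < |t| ^ (s-1) := Real.rpow_pos_of_pos habs _
  by_cases hlt : |t| < δ
  · -- near zero
    have hmem : t ∈ Metric.ball (0:ℝ) δ ∩ {(0:ℝ)}ᶜ := by
      constructor
      · simpa [Real.dist_eq] using hlt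
      · simpa using ht0
    have := hδ' hmem
    rw [Set.mem_setOf_eq, abs_div, abs_of_nonneg htp.le, div_lt_one htp] at this
    nlinarith [mul_nonneg (div_nonneg hB0 hδp.le) htp.le, mul_pos hε hts]
  by_cases hbig : M' < |t|
  · -- at infinity
    have hmem : t ∈ Kᶜ := by
      intro hcon
      have := hMM' hcon
      rw [Metric.mem_closedBall, Real.dist_eq, sub_zero] at this
      linarith
    have := hKs hmem
    rw [Set.mem_setOf_eq, abs_div, abs_of_nonneg hts.le, div_lt_iff₀ hts] at this
    nlinarith [mul_nonneg (by positivity : (0:ℝ) ≤ 1 + B / δ ^ (p-1)) htp.le]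
  · -- middle
    push_neg at hlt hbig
    have hmem : t ∈ Set.Icc (-(M'+1)) (M'+1) := by
      constructor <;> [nlinarith [neg_abs_le t]; nlinarith [le_abs_self t]]
    have h1 : |f t| ≤ B := hB t hmem
    have h2 : δ ^ (p-1) ≤ |t| ^ (p-1) := Real.rpow_le_rpow hδ.le hlt (by linarith)
    have h3 : B ≤ B / δ ^ (p-1) * |t| ^ (p-1) := by
      rw [div_mul_eq_mul_div, le_div_iff₀ hδp]
      nlinarith
    nlinarith


set_option maxHeartbeats 1000000 in
lemma aux_key {p s : ℝ} (hp : 1 < p) (hps : p < s) {f : ℝ → ℝ} (hf : Continuous f)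
    (h0 : Tendsto (fun t : ℝ => f t / |t| ^ (p - 1)) (𝓝[≠] (0 : ℝ)) (𝓝 0))
    (hinf : Tendsto (fun t : ℝ => f t / |t| ^ (s - 1)) (Filter.cocompact ℝ) (𝓝 0))
    (ε : ℝ) (hε : 0 < ε) :
    ∃ C : ℝ, 0 < C ∧ ∀ a b : ℝ,
      |(∫ τ in (0:ℝ)..(a + b), f τ) - ∫ τ in (0:ℝ)..a, f τ| ≤
        ε * (|a| ^ p + |a| ^ s) + C * (|b| ^ p + |b| ^ s) := by
  obtain ⟨C₁, hC₁, hg⟩ := aux_growth hp hps hf h0 hinf 1 one_pos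
  set ks : ℝ := 2 ^ (s - 1) with hksdef
  set kp : ℝ := 2 ^ (p - 1) with hkpdef
  have hks : 0 < ks := Real.rpow_pos_of_pos two_pos _
  have hkp : 0 < kp := Real.rpow_pos_of_pos two_pos _
  set δs : ℝ := ε / ks with hδsdef
  set δp : ℝ := ε / (C₁ * kp) with hδpdef
  have hδs : 0 < δs := by positivity
  have hδp : 0 < δp := by positivity
  have e1 : ks * δs = ε := by rw [hδsdef, mul_div_assoc']; exact mul_div_cancel_left₀ ε hks.ne'
  have e2 : C₁ * kp * δp = ε := by rw [hδpdef, mul_div_assoc']; exact mul_div_cancel_left₀ ε (mul_pos hC₁ hkp).ne'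
  have hδs1 : 0 < δs ^ (1 - s) := Real.rpow_pos_of_pos hδs _
  have hδp1 : 0 < δp ^ (1 - p) := Real.rpow_pos_of_pos hδp _
  refine ⟨ks * (δs ^ (1-s) + 1) + C₁ * kp * (δp ^ (1-p) + 1), by positivity, fun a b => ?_⟩
  rcases eq_or_ne b 0 with rfl | hb0
  · simp only [add_zero, sub_self, abs_zero]
    rw [Real.zero_rpow (by linarith : p ≠ 0), Real.zero_rpow (by linarith : s ≠ 0)]
    positivity
  set A := |a| with hA
  set Bb := |b| with hBb
  have hA0 : 0 ≤ A := abs_nonneg a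
  have hB0 : 0 < Bb := abs_pos.mpr hb0
  set m : ℝ := A + Bb with hm
  have hm0 : 0 ≤ m := by positivity
  -- step 1 : reduce to interval integral
  have hint : ∀ c d : ℝ, IntervalIntegrable f MeasureTheory.volume c d :=
    fun c d => hf.intervalIntegrable c d
  have hsplit : (∫ τ in (0:ℝ)..(a + b), f τ) - (∫ τ in (0:ℝ)..a, f τ)
      = ∫ τ in a..(a + b), f τ := by
    rw [intervalIntegral.integral_interval_sub_left (hint 0 (a+b)) (hint 0 a)]
  -- step 2 : bound the integrand on the interval
  have hbound : ∀ τ ∈ Set.uIoc a (a + b), ‖f τ‖ ≤ m ^ (s-1) + C₁ * m ^ (p-1) := by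
    intro τ hτ
    obtain ⟨h1, h2⟩ := hτ
    have hτm : |τ| ≤ m := by
      rw [abs_le]
      constructor
      · have ht : a ⊓ (a + b) ≤ τ := le_of_lt h1
        have ha1 : -(A + Bb) ≤ a := by
          have := neg_abs_le a; have := abs_nonneg b; simp only [hA, hBb]; linarith
        have ha2 : -(A + Bb) ≤ a + b := by
          have := neg_abs_le (a + b)
          have := abs_add_le a b
          simp only [hA, hBb]; linarith
        have : -(A+Bb) ≤ a ⊓ (a+b) := le_inf ha1 ha2
        linarith
      · have hb1 : a ≤ A + Bb := by
          have := le_abs_self a; have := abs_nonneg b; simp only [hA, hBb]; linarith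
        have hb2 : a + b ≤ A + Bb := by
          have := le_abs_self (a+b); have := abs_add_le a b; simp only [hA, hBb]; linarith
        have : a ⊔ (a+b) ≤ A + Bb := sup_le hb1 hb2
        linarith
    have hgs : |τ| ^ (s-1) ≤ m ^ (s-1) :=
      Real.rpow_le_rpow (abs_nonneg τ) hτm (by linarith)
    have hgp : |τ| ^ (p-1) ≤ m ^ (p-1) :=
      Real.rpow_le_rpow (abs_nonneg τ) hτm (by linarith)
    have := hg τ
    rw [Real.norm_eq_abs]
    nlinarith
  have h1 : |∫ τ in a..(a + b), f τ| ≤ (m ^ (s-1) + C₁ * m ^ (p-1)) * |a + b - a| := by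
    exact intervalIntegral.norm_integral_le_of_norm_le_const hbound
  rw [add_sub_cancel_left] at h1
  rw [hsplit]
  -- step 3 : expand
  have h2 : m ^ (s-1) ≤ ks * (A ^ (s-1) + Bb ^ (s-1)) := aux_two (by linarith) hA0 hB0.le
  have h3 : m ^ (p-1) ≤ kp * (A ^ (p-1) + Bb ^ (p-1)) := aux_two (by linarith) hA0 hB0.le
  have h4 : A ^ (s-1) * Bb ≤ δs * A ^ s + δs ^ (1-s) * Bb ^ s :=
    aux_young (by linarith) hδs hA0 hB0.le
  have h5 : A ^ (p-1) * Bb ≤ δp * A ^ p + δp ^ (1-p) * Bb ^ p :=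
    aux_young hp hδp hA0 hB0.le
  have h6 : Bb ^ (s-1) * Bb = Bb ^ s := by
    rw [← Real.rpow_add_one hB0.ne' (s-1)]; ring_nf
  have h7 : Bb ^ (p-1) * Bb = Bb ^ p := by
    rw [← Real.rpow_add_one hB0.ne' (p-1)]; ring_nf
  have h2' : m ^ (s-1) * Bb ≤ ks * (A ^ (s-1) + Bb ^ (s-1)) * Bb :=
    mul_le_mul_of_nonneg_right h2 hB0.le
  have h3' : (C₁ * (m ^ (p-1) * Bb)) ≤ C₁ * (kp * (A ^ (p-1) + Bb ^ (p-1)) * Bb) :=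
    mul_le_mul_of_nonneg_left (mul_le_mul_of_nonneg_right h3 hB0.le) hC₁.le
  have h4' : ks * (A ^ (s-1) * Bb) ≤ ks * (δs * A ^ s + δs ^ (1-s) * Bb ^ s) :=
    mul_le_mul_of_nonneg_left h4 hks.le
  have h5' : (C₁ * kp) * (A ^ (p-1) * Bb) ≤ (C₁ * kp) * (δp * A ^ p + δp ^ (1-p) * Bb ^ p) :=
    mul_le_mul_of_nonneg_left h5 (by positivity)
  have hh1 : 0 ≤ C₁ * kp * (δp ^ (1-p) + 1) * Bb ^ s := by positivity
  have hh2 : 0 ≤ ks * (δs ^ (1-s) + 1) * Bb ^ p := by positivity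
  calc |∫ τ in a..(a + b), f τ| ≤ (m ^ (s-1) + C₁ * m ^ (p-1)) * Bb := h1
    _ = m ^ (s-1) * Bb + C₁ * (m ^ (p-1) * Bb) := by ring
    _ ≤ ks * (A ^ (s-1) + Bb ^ (s-1)) * Bb + C₁ * (kp * (A ^ (p-1) + Bb ^ (p-1)) * Bb) := by
        linarith [h2', h3']
    _ = ks * (A ^ (s-1) * Bb) + ks * (Bb ^ (s-1) * Bb)
        + (C₁ * kp) * (A ^ (p-1) * Bb) + (C₁ * kp) * (Bb ^ (p-1) * Bb) := by ring
    _ = ks * (A ^ (s-1) * Bb) + ks * Bb ^ s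
        + (C₁ * kp) * (A ^ (p-1) * Bb) + (C₁ * kp) * Bb ^ p := by rw [h6, h7]
    _ ≤ ks * (δs * A ^ s + δs ^ (1-s) * Bb ^ s) + ks * Bb ^ s
        + (C₁ * kp) * (δp * A ^ p + δp ^ (1-p) * Bb ^ p) + (C₁ * kp) * Bb ^ p := by
        linarith [h4', h5']
    _ = ε * A ^ s + ε * A ^ p + ks * (δs ^ (1-s) + 1) * Bb ^ s
        + (C₁ * kp) * (δp ^ (1-p) + 1) * Bb ^ p := by
        linear_combination (A ^ s) * e1 + (A ^ p) * e2
    _ ≤ ε * (A ^ p + A ^ s)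
        + (ks * (δs ^ (1-s) + 1) + C₁ * kp * (δp ^ (1-p) + 1)) * (Bb ^ p + Bb ^ s) := by
        nlinarith [hh1, hh2]


lemma aux_cont_rpow {r : ℝ} (hr : 0 < r) : Continuous fun y : ℝ => |y| ^ r := by
  rw [continuous_iff_continuousAt]
  intro y
  exact (Real.continuousAt_rpow_const _ r (Or.inr hr.le)).comp continuous_abs.continuousAt

set_option maxHeartbeats 1000000 in
theorem stmt5 (N : ℕ) (hN : 1 ≤ N) (p s : ℝ) (hp : 1 < p) (hps : p < s)
    (f : ℝ → ℝ) (hf : Continuous f)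
    (h0 : Tendsto (fun t : ℝ => f t / |t| ^ (p - 1)) (𝓝[≠] (0 : ℝ)) (𝓝 0))
    (hinf : Tendsto (fun t : ℝ => f t / |t| ^ (s - 1)) (Filter.cocompact ℝ) (𝓝 0))
    (u : ℕ → EuclideanSpace ℝ (Fin N) → ℝ) (v : EuclideanSpace ℝ (Fin N) → ℝ)
    (hu : ∀ n, Measurable (u n)) (hv : Measurable v)
    (hae : ∀ᵐ x : EuclideanSpace ℝ (Fin N), Tendsto (fun n => u n x) atTop (𝓝 (v x)))
    (hbdd : (⨆ n, ((∫⁻ x : EuclideanSpace ℝ (Fin N), ENNReal.ofReal (|u n x| ^ p))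
        + ∫⁻ x : EuclideanSpace ℝ (Fin N), ENNReal.ofReal (|u n x| ^ s))) < ⊤)
    (hvint : ((∫⁻ x : EuclideanSpace ℝ (Fin N), ENNReal.ofReal (|v x| ^ p))
        + ∫⁻ x : EuclideanSpace ℝ (Fin N), ENNReal.ofReal (|v x| ^ s)) < ⊤) :
    Tendsto (fun n => ∫ x : EuclideanSpace ℝ (Fin N),
        ((∫ τ in (0:ℝ)..(u n x - v x), f τ) - (∫ τ in (0:ℝ)..(u n x), f τ)
          + ∫ τ in (0:ℝ)..(v x), f τ)) atTop (𝓝 0) := by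
  have hp0 : (0:ℝ) < p := by linarith
  have hs0 : (0:ℝ) < s := by linarith
  set F : ℝ → ℝ := fun t => ∫ τ in (0:ℝ)..t, f τ with hFdef
  have hFc : Continuous F :=
    intervalIntegral.continuous_primitive (fun a b => hf.intervalIntegrable a b) 0
  have hF0 : F 0 = 0 := intervalIntegral.integral_same
  -- integrability of |g|^r from finite lintegral
  have key_int : ∀ (g : EuclideanSpace ℝ (Fin N) → ℝ), Measurable g → ∀ r : ℝ, 0 < r →
      (∫⁻ x : EuclideanSpace ℝ (Fin N), ENNReal.ofReal (|g x| ^ r)) < ⊤ → Integrable (fun x : EuclideanSpace ℝ (Fin N) => |g x| ^ r) := by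
    intro g hg r hr hfin
    have hm : Measurable fun x : EuclideanSpace ℝ (Fin N) => |g x| ^ r := (aux_cont_rpow hr).measurable.comp hg
    refine ⟨hm.aestronglyMeasurable, ?_⟩
    rw [hasFiniteIntegral_iff_ofReal (Eventually.of_forall fun x => by positivity)]
    exact hfin
  have hSne : (⨆ n, ((∫⁻ x : EuclideanSpace ℝ (Fin N), ENNReal.ofReal (|u n x| ^ p))
      + ∫⁻ x : EuclideanSpace ℝ (Fin N), ENNReal.ofReal (|u n x| ^ s))) ≠ ⊤ := hbdd.ne
  have hup_le : ∀ n, (∫⁻ x : EuclideanSpace ℝ (Fin N), ENNReal.ofReal (|u n x| ^ p)) ≤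
      (⨆ n, ((∫⁻ x : EuclideanSpace ℝ (Fin N), ENNReal.ofReal (|u n x| ^ p))
        + ∫⁻ x : EuclideanSpace ℝ (Fin N), ENNReal.ofReal (|u n x| ^ s))) :=
    fun n => le_trans le_self_add (le_iSup (fun n => (∫⁻ x : EuclideanSpace ℝ (Fin N), ENNReal.ofReal (|u n x| ^ p))
      + ∫⁻ x : EuclideanSpace ℝ (Fin N), ENNReal.ofReal (|u n x| ^ s)) n)
  have hus_le : ∀ n, (∫⁻ x : EuclideanSpace ℝ (Fin N), ENNReal.ofReal (|u n x| ^ s)) ≤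
      (⨆ n, ((∫⁻ x : EuclideanSpace ℝ (Fin N), ENNReal.ofReal (|u n x| ^ p))
        + ∫⁻ x : EuclideanSpace ℝ (Fin N), ENNReal.ofReal (|u n x| ^ s))) :=
    fun n => le_trans le_add_self (le_iSup (fun n => (∫⁻ x : EuclideanSpace ℝ (Fin N), ENNReal.ofReal (|u n x| ^ p))
      + ∫⁻ x : EuclideanSpace ℝ (Fin N), ENNReal.ofReal (|u n x| ^ s)) n)
  have hun_p : ∀ n, Integrable (fun x : EuclideanSpace ℝ (Fin N) => |u n x| ^ p) :=
    fun n => key_int (u n) (hu n) p hp0 (lt_of_le_of_lt (hup_le n) hbdd)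
  have hun_s : ∀ n, Integrable (fun x : EuclideanSpace ℝ (Fin N) => |u n x| ^ s) :=
    fun n => key_int (u n) (hu n) s hs0 (lt_of_le_of_lt (hus_le n) hbdd)
  have hv_p : Integrable (fun x : EuclideanSpace ℝ (Fin N) => |v x| ^ p) :=
    key_int v hv p hp0 (lt_of_le_of_lt le_self_add hvint)
  have hv_s : Integrable (fun x : EuclideanSpace ℝ (Fin N) => |v x| ^ s) :=
    key_int v hv s hs0 (lt_of_le_of_lt le_add_self hvint)
  -- difference integrability
  have hdiff_ptw : ∀ (r : ℝ), 0 < r → ∀ n, ∀ x : EuclideanSpace ℝ (Fin N),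
      |u n x - v x| ^ r ≤ 2 ^ r * (|u n x| ^ r + |v x| ^ r) := by
    intro r hr n x
    have h1 : |u n x - v x| ≤ |u n x| + |v x| := abs_sub _ _
    calc |u n x - v x| ^ r ≤ (|u n x| + |v x|) ^ r :=
          Real.rpow_le_rpow (abs_nonneg _) h1 hr.le
      _ ≤ 2 ^ r * (|u n x| ^ r + |v x| ^ r) :=
          aux_two hr.le (abs_nonneg _) (abs_nonneg _)
  have ha_p : ∀ n, Integrable (fun x : EuclideanSpace ℝ (Fin N) => |u n x - v x| ^ p) := by
    intro n
    refine Integrable.mono' (((hun_p n).add hv_p).const_mul (2 ^ p))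
      (((aux_cont_rpow hp0).measurable.comp ((hu n).sub hv)).aestronglyMeasurable)
      (Eventually.of_forall fun x => ?_)
    rw [Real.norm_eq_abs, abs_of_nonneg (by positivity)]
    exact hdiff_ptw p hp0 n x
  have ha_s : ∀ n, Integrable (fun x : EuclideanSpace ℝ (Fin N) => |u n x - v x| ^ s) := by
    intro n
    refine Integrable.mono' (((hun_s n).add hv_s).const_mul (2 ^ s))
      (((aux_cont_rpow hs0).measurable.comp ((hu n).sub hv)).aestronglyMeasurable)
      (Eventually.of_forall fun x => ?_)
    rw [Real.norm_eq_abs, abs_of_nonneg (by positivity)]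
    exact hdiff_ptw s hs0 n x
  -- uniform bound on ∫ W n
  set W : ℕ → EuclideanSpace ℝ (Fin N) → ℝ := fun n x => |u n x - v x| ^ p + |u n x - v x| ^ s with hWdef
  have hW : ∀ n, Integrable (W n) := fun n => (ha_p n).add (ha_s n)
  set Sr : ℝ := (⨆ n, ((∫⁻ x : EuclideanSpace ℝ (Fin N), ENNReal.ofReal (|u n x| ^ p))
      + ∫⁻ x : EuclideanSpace ℝ (Fin N), ENNReal.ofReal (|u n x| ^ s))).toReal with hSrdef
  have hSr0 : 0 ≤ Sr := ENNReal.toReal_nonneg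
  have hint_le : ∀ (g : EuclideanSpace ℝ (Fin N) → ℝ), Measurable g → ∀ r : ℝ, 0 < r →
      ∫ x : EuclideanSpace ℝ (Fin N), |g x| ^ r = (∫⁻ x : EuclideanSpace ℝ (Fin N), ENNReal.ofReal (|g x| ^ r)).toReal := by
    intro g hg r hr
    have hm : AEStronglyMeasurable (fun x : EuclideanSpace ℝ (Fin N) => |g x| ^ r) volume :=
      ((aux_cont_rpow hr).measurable.comp hg).aestronglyMeasurable
    rw [MeasureTheory.integral_eq_lintegral_of_nonneg_ae
      (Eventually.of_forall fun x => by positivity) hm]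
  have hup_int : ∀ n, ∫ x : EuclideanSpace ℝ (Fin N), |u n x| ^ p ≤ Sr := by
    intro n
    rw [hint_le (u n) (hu n) p hp0]
    exact ENNReal.toReal_mono hSne (hup_le n)
  have hus_int : ∀ n, ∫ x : EuclideanSpace ℝ (Fin N), |u n x| ^ s ≤ Sr := by
    intro n
    rw [hint_le (u n) (hu n) s hs0]
    exact ENNReal.toReal_mono hSne (hus_le n)
  set Jp : ℝ := ∫ x : EuclideanSpace ℝ (Fin N), |v x| ^ p with hJpdef
  set Js : ℝ := ∫ x : EuclideanSpace ℝ (Fin N), |v x| ^ s with hJsdef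
  have hJp0 : 0 ≤ Jp := integral_nonneg fun x => by positivity
  have hJs0 : 0 ≤ Js := integral_nonneg fun x => by positivity
  set M₀ : ℝ := 2 ^ p * (Sr + Jp) + 2 ^ s * (Sr + Js) with hM₀def
  have hM₀0 : 0 ≤ M₀ := by positivity
  have hWbound : ∀ n, ∫ x : EuclideanSpace ℝ (Fin N), W n x ≤ M₀ := by
    intro n
    rw [hWdef]
    rw [MeasureTheory.integral_add (ha_p n) (ha_s n)]
    have b1 : ∫ x : EuclideanSpace ℝ (Fin N), |u n x - v x| ^ p ≤ 2 ^ p * (Sr + Jp) := by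
      calc ∫ x : EuclideanSpace ℝ (Fin N), |u n x - v x| ^ p
          ≤ ∫ x : EuclideanSpace ℝ (Fin N), 2 ^ p * (|u n x| ^ p + |v x| ^ p) := by
            refine integral_mono (ha_p n) (((hun_p n).add hv_p).const_mul (2 ^ p))
              (fun x => hdiff_ptw p hp0 n x)
        _ = 2 ^ p * ((∫ x : EuclideanSpace ℝ (Fin N), |u n x| ^ p) + ∫ x : EuclideanSpace ℝ (Fin N), |v x| ^ p) := by
            rw [MeasureTheory.integral_const_mul, MeasureTheory.integral_add (hun_p n) hv_p]
        _ ≤ 2 ^ p * (Sr + Jp) := by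
            have := hup_int n
            have h2p : (0:ℝ) ≤ 2 ^ p := by positivity
            nlinarith
    have b2 : ∫ x : EuclideanSpace ℝ (Fin N), |u n x - v x| ^ s ≤ 2 ^ s * (Sr + Js) := by
      calc ∫ x : EuclideanSpace ℝ (Fin N), |u n x - v x| ^ s
          ≤ ∫ x : EuclideanSpace ℝ (Fin N), 2 ^ s * (|u n x| ^ s + |v x| ^ s) := by
            refine integral_mono (ha_s n) (((hun_s n).add hv_s).const_mul (2 ^ s))
              (fun x => hdiff_ptw s hs0 n x)
        _ = 2 ^ s * ((∫ x : EuclideanSpace ℝ (Fin N), |u n x| ^ s) + ∫ x : EuclideanSpace ℝ (Fin N), |v x| ^ s) := by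
            rw [MeasureTheory.integral_const_mul, MeasureTheory.integral_add (hun_s n) hv_s]
        _ ≤ 2 ^ s * (Sr + Js) := by
            have := hus_int n
            have h2s : (0:ℝ) ≤ 2 ^ s := by positivity
            nlinarith
    rw [hM₀def]; linarith
  -- the integrand
  set g : ℕ → EuclideanSpace ℝ (Fin N) → ℝ := fun n x => F (u n x - v x) - F (u n x) + F (v x) with hgdef
  have hg_meas : ∀ n, Measurable (g n) := by
    intro n
    exact ((hFc.measurable.comp ((hu n).sub hv)).sub
      (hFc.measurable.comp (hu n))).add (hFc.measurable.comp hv)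
  -- main ε-argument
  rw [Metric.tendsto_atTop]
  intro ε hε
  have hM₀1 : (0:ℝ) < M₀ + 1 := by linarith
  set ε' : ℝ := ε / (2 * (M₀ + 1)) with hε'def
  have hε' : 0 < ε' := by positivity
  obtain ⟨C, hC, hkey⟩ := aux_key hp hps hf h0 hinf ε' hε'
  set h : EuclideanSpace ℝ (Fin N) → ℝ := fun x => 2 * C * (|v x| ^ p + |v x| ^ s) with hhdef
  have hh : Integrable h := (hv_p.add hv_s).const_mul (2 * C)
  have hh0 : ∀ x, 0 ≤ h x := fun x => by positivity
  -- pointwise bound  |g n x| ≤ ε' * W n x + h x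
  have hptw : ∀ n x, |g n x| ≤ ε' * W n x + h x := by
    intro n x
    have e0 : u n x = (u n x - v x) + v x := by ring
    have k1 : |F ((u n x - v x) + v x) - F (u n x - v x)| ≤
        ε' * (|u n x - v x| ^ p + |u n x - v x| ^ s) + C * (|v x| ^ p + |v x| ^ s) :=
      hkey (u n x - v x) (v x)
    have k2 : |F (v x)| ≤ C * (|v x| ^ p + |v x| ^ s) := by
      have hthis := hkey 0 (v x)
      have e1 : (∫ τ in (0:ℝ)..(0:ℝ), f τ) = 0 := intervalIntegral.integral_same
      rw [zero_add, e1, sub_zero, abs_zero,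
        Real.zero_rpow hp0.ne', Real.zero_rpow hs0.ne'] at hthis
      have e2 : F (v x) = ∫ τ in (0:ℝ)..(v x), f τ := rfl
      rw [e2]
      linarith [hthis]
    rw [← e0] at k1
    have htri : |g n x| ≤ |F (u n x) - F (u n x - v x)| + |F (v x)| := by
      have e3 : g n x = -(F (u n x) - F (u n x - v x)) + F (v x) := by
        show F (u n x - v x) - F (u n x) + F (v x) = _
        ring
      rw [e3]
      exact (abs_add_le _ _).trans (by rw [abs_neg])
    show |g n x| ≤ ε' * (|u n x - v x| ^ p + |u n x - v x| ^ s)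
      + 2 * C * (|v x| ^ p + |v x| ^ s)
    linarith
  -- dominated convergence for z n
  set z : ℕ → EuclideanSpace ℝ (Fin N) → ℝ := fun n x => max (|g n x| - ε' * W n x) 0 with hzdef
  have hz_meas : ∀ n, AEStronglyMeasurable (z n) (volume : Measure (EuclideanSpace ℝ (Fin N))) := by
    intro n
    refine Measurable.aestronglyMeasurable ?_
    refine Measurable.max ?_ measurable_const
    refine Measurable.sub (hg_meas n).abs ?_
    refine Measurable.const_mul ?_ ε'
    exact ((aux_cont_rpow hp0).measurable.comp ((hu n).sub hv)).add
      ((aux_cont_rpow hs0).measurable.comp ((hu n).sub hv))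
  have hz_bound : ∀ n, ∀ᵐ x : EuclideanSpace ℝ (Fin N), ‖z n x‖ ≤ h x := by
    intro n
    refine Eventually.of_forall fun x => ?_
    rw [Real.norm_eq_abs, hzdef]
    have hW0 : 0 ≤ W n x := by rw [hWdef]; positivity
    have : max (|g n x| - ε' * W n x) 0 ≤ h x := by
      apply max_le _ (hh0 x)
      have := hptw n x
      nlinarith
    rw [abs_of_nonneg (le_max_right _ _)]
    exact this
  have hz_tend : ∀ᵐ x : EuclideanSpace ℝ (Fin N), Tendsto (fun n => z n x) atTop (𝓝 0) := by
    filter_upwards [hae] with x hx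
    have t1 : Tendsto (fun n => u n x - v x) atTop (𝓝 0) := by
      have := hx.sub (tendsto_const_nhds (x := v x))
      simpa using this
    have t2 : Tendsto (fun n => |g n x|) atTop (𝓝 0) := by
      have tg : Tendsto (fun n => g n x) atTop (𝓝 0) := by
        rw [hgdef]
        have c1 : Tendsto (fun n => F (u n x - v x)) atTop (𝓝 0) := by
          have := (hFc.tendsto 0).comp t1
          rwa [hF0] at this
        have c2 : Tendsto (fun n => F (u n x)) atTop (𝓝 (F (v x))) :=
          (hFc.tendsto (v x)).comp hx
        have := (c1.sub c2).add (tendsto_const_nhds (x := F (v x)))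
        simpa using this
      have := (continuous_abs.tendsto 0).comp tg
      simpa [Function.comp_def] using this
    have t3 : Tendsto (fun n => W n x) atTop (𝓝 0) := by
      rw [hWdef]
      have c1 : Tendsto (fun n => |u n x - v x| ^ p) atTop (𝓝 0) := by
        have := ((aux_cont_rpow hp0).tendsto 0).comp t1
        rwa [abs_zero, Real.zero_rpow hp0.ne'] at this
      have c2 : Tendsto (fun n => |u n x - v x| ^ s) atTop (𝓝 0) := by
        have := ((aux_cont_rpow hs0).tendsto 0).comp t1
        rwa [abs_zero, Real.zero_rpow hs0.ne'] at this
      simpa using c1.add c2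
    rw [hzdef]
    have : Tendsto (fun n => max (|g n x| - ε' * W n x) 0) atTop (𝓝 (max (0 - ε' * 0) 0)) :=
      Tendsto.max (t2.sub ((tendsto_const_nhds (x := ε')).mul t3)) tendsto_const_nhds
    simpa using this
  have hdct : Tendsto (fun n => ∫ x : EuclideanSpace ℝ (Fin N), z n x) atTop (𝓝 (∫ _ : EuclideanSpace ℝ (Fin N), (0:ℝ))) :=
    MeasureTheory.tendsto_integral_of_dominated_convergence h hz_meas hh hz_bound hz_tend
  rw [MeasureTheory.integral_zero] at hdct
  have hz_int : ∀ n, Integrable (z n) := by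
    intro n
    refine Integrable.mono' hh (hz_meas n) (hz_bound n)
  obtain ⟨Nn, hNn⟩ := (Metric.tendsto_atTop.mp hdct) (ε / 2) (by linarith)
  refine ⟨Nn, fun n hn => ?_⟩
  have hzsmall : ∫ x : EuclideanSpace ℝ (Fin N), z n x < ε / 2 := by
    have := hNn n hn
    rw [Real.dist_eq, sub_zero] at this
    calc ∫ x : EuclideanSpace ℝ (Fin N), z n x ≤ |∫ x : EuclideanSpace ℝ (Fin N), z n x| := le_abs_self _
      _ < ε / 2 := this
  rw [Real.dist_eq, sub_zero]
  have step1 : |∫ x : EuclideanSpace ℝ (Fin N), g n x| ≤ ∫ x : EuclideanSpace ℝ (Fin N), |g n x| := by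
    simpa using MeasureTheory.norm_integral_le_integral_norm (g n)
  have step2 : ∫ x : EuclideanSpace ℝ (Fin N), |g n x| ≤ ∫ x : EuclideanSpace ℝ (Fin N), (z n x + ε' * W n x) := by
    refine integral_mono_of_nonneg (Eventually.of_forall fun x => abs_nonneg _)
      ((hz_int n).add ((hW n).const_mul ε')) (Eventually.of_forall fun x => ?_)
    have h1 : |g n x| - ε' * W n x ≤ z n x := le_max_left _ _
    show |g n x| ≤ z n x + ε' * W n x
    linarith
  have step3 : ∫ x : EuclideanSpace ℝ (Fin N), (z n x + ε' * W n x) = (∫ x : EuclideanSpace ℝ (Fin N), z n x) + ε' * ∫ x : EuclideanSpace ℝ (Fin N), W n x := by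
    rw [MeasureTheory.integral_add (hz_int n) ((hW n).const_mul ε'),
      MeasureTheory.integral_const_mul]
  have step4 : ε' * ∫ x : EuclideanSpace ℝ (Fin N), W n x ≤ ε / 2 := by
    have h1 : ε' * ∫ x : EuclideanSpace ℝ (Fin N), W n x ≤ ε' * M₀ := by
      have := hWbound n
      nlinarith
    have h2 : ε' * M₀ ≤ ε / 2 := by
      rw [hε'def, div_mul_eq_mul_div, div_le_iff₀ (by positivity)]
      nlinarith
    exact le_trans h1 h2
  calc |∫ x : EuclideanSpace ℝ (Fin N), g n x| ≤ ∫ x : EuclideanSpace ℝ (Fin N), |g n x| := step1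
    _ ≤ (∫ x : EuclideanSpace ℝ (Fin N), z n x) + ε' * ∫ x : EuclideanSpace ℝ (Fin N), W n x := by rw [← step3]; exact step2
    _ < ε / 2 + ε / 2 := by
        refine add_lt_add_of_lt_of_le hzsmall step4
    _ = ε := by ring
end

section
/- Let N ≥ 1 be an integer and 1 < p < s real numbers. Let f : ℝ → ℝ be continuous with lim_{t → 0} f(t)/|t|^{p-1} = 0 and lim_{|t| → ∞} f(t)/|t|^{s-1} = 0. Let u_n, u : ℝ^N → ℝ be measurable functions such that u_n → u almost everywhere on ℝ^N, ∫_{B_R(0)} |u_n − u|^p dx → 0 for every R > 0, sup_n (∫_{ℝ^N} |u_n|^p dx + ∫_{ℝ^N} |u_n|^s dx) < ∞, and ∫_{ℝ^N} |u|^p dx + ∫_{ℝ^N} |u|^s dx < ∞. Then sup { ∫_{ℝ^N} |f(u_n − u) − f(u_n) + f(u)| · |w| dx : w : ℝ^N → ℝ measurable with ∫_{ℝ^N} |w|^p dx ≤ 1 and ∫_{ℝ^N} |w|^s dx ≤ 1 } → 0 as n → ∞. -/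
set_option maxHeartbeats 1600000

open Filter MeasureTheory
open scoped Topology ENNReal

lemma abs3 (x y z : ℝ) : |x - y - z| ≤ |x| + |y| + |z| := by
  have h1 : |x - y - z| ≤ |x - y| + |z| := by
    have := abs_add_le (x - y) (-z); simpa [sub_eq_add_neg] using this
  have h2 : |x - y| ≤ |x| + |y| := by
    have := abs_add_le x (-y); simpa [sub_eq_add_neg] using this
  linarith

lemma abs2 (x y : ℝ) : |x - y| ≤ |x| + |y| := by
  have := abs_add_le x (-y); simpa [sub_eq_add_neg] using this

lemma two_rpow_bound {t : ℝ} (ht : 0 ≤ t) {x y : ℝ} (hx : 0 ≤ x) (hy : 0 ≤ y) :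
    (x + y) ^ t ≤ 2 ^ t * (x ^ t + y ^ t) := by
  have hmax : (0:ℝ) ≤ max x y := le_max_of_le_left hx
  have hm : x + y ≤ 2 * max x y := by
    rcases le_total x y with h | h
    · rw [max_eq_right h]; linarith
    · rw [max_eq_left h]; linarith
  calc (x + y) ^ t ≤ (2 * max x y) ^ t :=
        Real.rpow_le_rpow (by linarith) hm ht
    _ = 2 ^ t * (max x y) ^ t := Real.mul_rpow (by norm_num) hmax
    _ ≤ 2 ^ t * (x ^ t + y ^ t) := by
        have hb : (max x y) ^ t ≤ x ^ t + y ^ t := by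
          rcases le_total x y with h | h
          · rw [max_eq_right h]; nlinarith [Real.rpow_nonneg hx t]
          · rw [max_eq_left h]; nlinarith [Real.rpow_nonneg hy t]
        have h2 : (0:ℝ) ≤ 2 ^ t := Real.rpow_nonneg (by norm_num) t
        nlinarith

lemma rpow_mid_le {x p q s : ℝ} (hx : 0 ≤ x) (hq : 0 < q) (hpq : p ≤ q) (hqs : q ≤ s) :
    x ^ q ≤ x ^ p + x ^ s := by
  rcases eq_or_lt_of_le hx with h | hx0
  · rw [← h, Real.zero_rpow hq.ne']
    positivity
  rcases le_total x 1 with h1 | h1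
  · have : x ^ q ≤ x ^ p := Real.rpow_le_rpow_of_exponent_ge hx0 h1 hpq
    have h2 : (0:ℝ) ≤ x ^ s := Real.rpow_nonneg hx s
    linarith
  · have : x ^ q ≤ x ^ s := Real.rpow_le_rpow_of_exponent_le h1 hqs
    have h2 : (0:ℝ) ≤ x ^ p := Real.rpow_nonneg hx p
    linarith

lemma holder_ofReal {α : Type*} [MeasurableSpace α] (μ : Measure α) {t : ℝ} (ht : 1 < t)
    {g w : α → ℝ} (hg : Measurable g) (hw : Measurable w) :
    ∫⁻ x, ENNReal.ofReal (|g x| ^ (t - 1) * |w x|) ∂μ ≤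
      (∫⁻ x, ENNReal.ofReal (|g x| ^ t) ∂μ) ^ (1 - 1 / t) *
        (∫⁻ x, ENNReal.ofReal (|w x| ^ t) ∂μ) ^ (1 / t) := by
  have ht0 : (0:ℝ) < t := by linarith
  have ht1 : t - 1 ≠ 0 := sub_ne_zero.mpr (ne_of_gt ht)
  set t' : ℝ := t / (t - 1) with ht'
  have hconj : t'.HolderConjugate t := (Real.HolderConjugate.conjExponent ht).symm
  have hmul : (t - 1) * t' = t := by rw [ht']; field_simp
  have hinv : 1 / t' = 1 - 1 / t := by rw [ht']; field_simp
  set F : α → ℝ≥0∞ := fun x => ENNReal.ofReal (|g x| ^ (t - 1)) with hF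
  set G : α → ℝ≥0∞ := fun x => ENNReal.ofReal (|w x|) with hG
  have hFm : Measurable F := (hg.abs.pow measurable_const).ennreal_ofReal
  have hGm : Measurable G := hw.abs.ennreal_ofReal
  have key := ENNReal.lintegral_mul_le_Lp_mul_Lq μ hconj hFm.aemeasurable hGm.aemeasurable
  have e1 : ∫⁻ x, ENNReal.ofReal (|g x| ^ (t - 1) * |w x|) ∂μ = ∫⁻ x, (F * G) x ∂μ := by
    refine lintegral_congr fun x => ?_
    simp only [Pi.mul_apply, hF, hG]
    rw [ENNReal.ofReal_mul (Real.rpow_nonneg (abs_nonneg _) _)]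
  have e2 : ∫⁻ x, F x ^ t' ∂μ = ∫⁻ x, ENNReal.ofReal (|g x| ^ t) ∂μ := by
    refine lintegral_congr fun x => ?_
    rw [hF, ENNReal.ofReal_rpow_of_nonneg (Real.rpow_nonneg (abs_nonneg _) _) hconj.nonneg,
      ← Real.rpow_mul (abs_nonneg _), hmul]
  have e3 : ∫⁻ x, G x ^ t ∂μ = ∫⁻ x, ENNReal.ofReal (|w x| ^ t) ∂μ := by
    refine lintegral_congr fun x => ?_
    rw [hG, ENNReal.ofReal_rpow_of_nonneg (abs_nonneg _) ht0.le]
  rw [e1]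
  calc ∫⁻ x, (F * G) x ∂μ ≤ (∫⁻ x, F x ^ t' ∂μ) ^ (1 / t') * (∫⁻ x, G x ^ t ∂μ) ^ (1 / t) := key
    _ = _ := by rw [e2, e3, hinv]

lemma key_bound (p s : ℝ) (hp : 1 < p) (hps : p < s) (f : ℝ → ℝ) (hf : Continuous f)
    (h0 : Tendsto (fun t : ℝ => f t / |t| ^ (p - 1)) (𝓝[≠] (0 : ℝ)) (𝓝 0))
    (hinf : Tendsto (fun t : ℝ => f t / |t| ^ (s - 1)) (Filter.cocompact ℝ) (𝓝 0))
    {δ : ℝ} (hδ : 0 < δ) :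
    ∃ C : ℝ, 0 < C ∧ ∀ a b : ℝ, |f (a + b) - f a - f b| ≤
      δ * (|a| ^ (p - 1) + |a| ^ (s - 1) + |b| ^ (p - 1) + |b| ^ (s - 1)) +
        C * |b| ^ ((p + s) / 2 - 1) := by
  have hp1 : (0:ℝ) < p - 1 := by linarith
  have hs1 : (0:ℝ) < s - 1 := by linarith
  have hqe : (0:ℝ) < (p + s) / 2 - 1 := by linarith
  set qe : ℝ := (p + s) / 2 - 1 with hqedef
  set δ₁ : ℝ := δ / 2 ^ s with hδ₁def
  have h2spos : (0:ℝ) < 2 ^ s := Real.rpow_pos_of_pos two_pos s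
  have hδ₁ : 0 < δ₁ := div_pos hδ h2spos
  -- coefficient facts
  have h2s : (2:ℝ) ^ s = 2 * 2 ^ (s - 1) := by
    rw [show s = 1 + (s - 1) by ring, Real.rpow_add two_pos, Real.rpow_one]; ring_nf
  have h2s1ge : (1:ℝ) ≤ 2 ^ (s - 1) := Real.one_le_rpow one_le_two hs1.le
  have h2p1ge : (1:ℝ) ≤ 2 ^ (p - 1) := Real.one_le_rpow one_le_two hp1.le
  have h2ple : (2:ℝ) ^ (p - 1) ≤ 2 ^ (s - 1) :=
    Real.rpow_le_rpow_of_exponent_le one_le_two (by linarith)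
  have hcoefs : δ₁ * 2 ^ (s - 1) + δ₁ ≤ δ := by
    have : δ₁ * 2 ^ s = δ := by rw [hδ₁def]; field_simp
    nlinarith
  have hcoefp : δ₁ * 2 ^ (p - 1) + δ₁ ≤ δ := by nlinarith
  have hδ₁δ : δ₁ ≤ δ := by nlinarith
  -- f 0 = 0
  have hf0 : f 0 = 0 := by
    have habs : Tendsto (fun t : ℝ => |t| ^ (p - 1)) (𝓝 (0:ℝ)) (𝓝 0) := by
      have hc : ContinuousAt (fun x : ℝ => x ^ (p - 1)) |(0:ℝ)| := by
        rw [abs_zero]; exact Real.continuousAt_rpow_const 0 (p - 1) (Or.inr hp1.le)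
      have := hc.comp continuous_abs.continuousAt (x := (0:ℝ))
      have h00 : |(0:ℝ)| ^ (p - 1) = 0 := by
        simp [Real.zero_rpow hp1.ne']
      simpa [ContinuousAt, Function.comp_def, Real.zero_rpow hp1.ne'] using this
    have h2 : Tendsto f (𝓝[≠] (0:ℝ)) (𝓝 0) := by
      have h3 := h0.mul (habs.mono_left nhdsWithin_le_nhds)
      rw [mul_zero] at h3
      refine h3.congr' ?_
      filter_upwards [self_mem_nhdsWithin] with t ht
      have : |t| ^ (p - 1) ≠ 0 :=
        (Real.rpow_pos_of_pos (abs_pos.mpr ht) _).ne'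
      field_simp
    have h4 : Tendsto f (𝓝[≠] (0:ℝ)) (𝓝 (f 0)) :=
      (hf.tendsto 0).mono_left nhdsWithin_le_nhds
    exact tendsto_nhds_unique h4 h2
  -- small values
  obtain ⟨r, hr0, hr1, hsmall⟩ :
      ∃ r : ℝ, 0 < r ∧ r ≤ 1 ∧ ∀ t : ℝ, |t| ≤ r → |f t| ≤ δ₁ * |t| ^ (p - 1) := by
    rw [Metric.tendsto_nhdsWithin_nhds] at h0
    obtain ⟨r₀, hr₀, hr⟩ := h0 δ₁ hδ₁
    refine ⟨min (r₀ / 2) 1, by positivity, min_le_right _ _, fun t ht => ?_⟩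
    rcases eq_or_ne t 0 with rfl | ht0
    · simp [hf0]; positivity
    · have hd : dist t 0 < r₀ := by
        rw [Real.dist_eq, sub_zero]
        calc |t| ≤ min (r₀ / 2) 1 := ht
          _ ≤ r₀ / 2 := min_le_left _ _
          _ < r₀ := by linarith
      have := hr (Set.mem_compl_singleton_iff.mpr ht0) hd
      rw [Real.dist_eq, sub_zero, abs_div, abs_of_pos (Real.rpow_pos_of_pos (abs_pos.mpr ht0) _)]
        at this
      have hpos : (0:ℝ) < |t| ^ (p - 1) := Real.rpow_pos_of_pos (abs_pos.mpr ht0) _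
      rw [div_lt_iff₀ hpos] at this
      linarith
  -- large values
  obtain ⟨M, hM1, hlarge⟩ :
      ∃ M : ℝ, 1 ≤ M ∧ ∀ t : ℝ, M ≤ |t| → |f t| ≤ δ₁ * |t| ^ (s - 1) := by
    have hev : ∀ᶠ t in Filter.cocompact ℝ, dist (f t / |t| ^ (s - 1)) 0 < δ₁ :=
      Metric.tendsto_nhds.mp hinf δ₁ hδ₁
    rw [Filter.hasBasis_cocompact.eventually_iff] at hev
    obtain ⟨K, hK, hKp⟩ := hev
    obtain ⟨M₀, hM₀⟩ := (Metric.isBounded_iff_subset_closedBall 0).mp hK.isBounded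
    refine ⟨max M₀ 1 + 1, by simp [le_max_right], fun t ht => ?_⟩
    have htK : t ∉ K := by
      intro h
      have := hM₀ h
      rw [Metric.mem_closedBall, Real.dist_eq, sub_zero] at this
      have h1 : M₀ ≤ max M₀ 1 := le_max_left _ _
      linarith
    have ht0 : t ≠ 0 := by
      intro h; rw [h] at ht; simp at ht
      have : (0:ℝ) ≤ max M₀ 1 := le_trans zero_le_one (le_max_right _ _)
      linarith
    have := hKp htK
    rw [Real.dist_eq, sub_zero, abs_div, abs_of_pos (Real.rpow_pos_of_pos (abs_pos.mpr ht0) _)]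
      at this
    have hpos : (0:ℝ) < |t| ^ (s - 1) := Real.rpow_pos_of_pos (abs_pos.mpr ht0) _
    rw [div_lt_iff₀ hpos] at this
    linarith
  -- bound on compact
  obtain ⟨C₂, hC₂0, hC₂⟩ :
      ∃ C₂ : ℝ, 0 ≤ C₂ ∧ ∀ t : ℝ, |t| ≤ 3 * M → |f t| ≤ C₂ := by
    obtain ⟨C₀, hC₀⟩ :=
      (isCompact_Icc (a := -(3 * M)) (b := 3 * M)).exists_bound_of_continuousOn hf.continuousOn
    refine ⟨max C₀ 0, le_max_right _ _, fun t ht => ?_⟩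
    have := hC₀ t (by rw [Set.mem_Icc]; constructor <;> [linarith [neg_abs_le t]; linarith [le_abs_self t]])
    rw [Real.norm_eq_abs] at this
    exact le_trans this (le_max_left _ _)
  have hL2 : ∀ t : ℝ, |f t| ≤ C₂ + δ₁ * |t| ^ (s - 1) := by
    intro t
    rcases le_total |t| (3 * M) with h | h
    · have := hC₂ t h
      have : (0:ℝ) ≤ δ₁ * |t| ^ (s - 1) := by positivity
      linarith [hC₂ t h]
    · have hM : M ≤ |t| := by linarith
      have := hlarge t hM
      linarith
  -- uniform continuity
  obtain ⟨ρ, hρ0, hρr, hUC⟩ :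
      ∃ ρ : ℝ, 0 < ρ ∧ ρ ≤ r / 2 ∧ ∀ a b : ℝ, |a| ≤ 2 * M → |b| ≤ ρ →
        |f (a + b) - f a| ≤ δ * (r / 2) ^ (p - 1) := by
    have huc := (isCompact_Icc (a := -(2 * M + 1)) (b := 2 * M + 1)).uniformContinuousOn_of_continuous
      hf.continuousOn
    rw [Metric.uniformContinuousOn_iff] at huc
    obtain ⟨ρ₀, hρ₀, hucp⟩ := huc (δ * (r / 2) ^ (p - 1)) (by positivity)
    refine ⟨min (ρ₀ / 2) (r / 2), by positivity, min_le_right _ _, fun a b ha hb => ?_⟩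
    have hb1 : |b| ≤ 1 := by
      have := min_le_right (ρ₀ / 2) (r / 2)
      have : |b| ≤ r / 2 := le_trans hb this
      linarith
    have hmem1 : a + b ∈ Set.Icc (-(2 * M + 1)) (2 * M + 1) := by
      rw [Set.mem_Icc]
      have h1 := abs_add_le a b
      constructor <;> [linarith [neg_abs_le (a+b), neg_abs_le a, neg_abs_le b, abs_add_le a b]; linarith [le_abs_self (a+b), le_abs_self a, le_abs_self b, abs_add_le a b]]
    have hmem2 : a ∈ Set.Icc (-(2 * M + 1)) (2 * M + 1) := by
      rw [Set.mem_Icc]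
      constructor <;> [linarith [neg_abs_le a]; linarith [le_abs_self a]]
    have hd : dist (a + b) a < ρ₀ := by
      rw [Real.dist_eq, add_sub_cancel_left]
      calc |b| ≤ min (ρ₀ / 2) (ρ₀ / 2 ⊓ (r/2)) := by
            exact le_trans hb (le_min (min_le_left _ _) (le_refl _))
        _ ≤ ρ₀ / 2 := min_le_left _ _
        _ < ρ₀ := by linarith
    have := hucp _ hmem1 _ hmem2 hd
    rw [Real.dist_eq] at this
    linarith
  -- final constant
  refine ⟨3 * C₂ / ρ ^ qe + δ, by positivity, fun a b => ?_⟩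
  have hAp : (0:ℝ) ≤ |a| ^ (p - 1) := Real.rpow_nonneg (abs_nonneg _) _
  have hAs : (0:ℝ) ≤ |a| ^ (s - 1) := Real.rpow_nonneg (abs_nonneg _) _
  have hBp : (0:ℝ) ≤ |b| ^ (p - 1) := Real.rpow_nonneg (abs_nonneg _) _
  have hBs : (0:ℝ) ≤ |b| ^ (s - 1) := Real.rpow_nonneg (abs_nonneg _) _
  have hBq : (0:ℝ) ≤ |b| ^ qe := Real.rpow_nonneg (abs_nonneg _) _
  have htri := abs3 (f (a + b)) (f a) (f b)
  rcases le_or_gt |b| ρ with hbρ | hbρ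
  · -- b small
    have hfb : |f b| ≤ δ₁ * |b| ^ (p - 1) := hsmall b (by linarith)
    rcases le_total |a| (r / 2) with ha | ha
    · -- both small
      have hfa : |f a| ≤ δ₁ * |a| ^ (p - 1) := hsmall a (by linarith)
      have hab : |a + b| ≤ r := by have := abs_add_le a b; linarith
      have hfab : |f (a + b)| ≤ δ₁ * |a + b| ^ (p - 1) := hsmall _ hab
      have htwo : |a + b| ^ (p - 1) ≤ 2 ^ (p - 1) * (|a| ^ (p - 1) + |b| ^ (p - 1)) := by
        calc |a + b| ^ (p - 1) ≤ (|a| + |b|) ^ (p - 1) :=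
              Real.rpow_le_rpow (abs_nonneg _) (abs_add_le a b) hp1.le
          _ ≤ 2 ^ (p - 1) * (|a| ^ (p - 1) + |b| ^ (p - 1)) :=
              two_rpow_bound hp1.le (abs_nonneg _) (abs_nonneg _)
      have e1 : δ₁ * |a + b| ^ (p - 1) ≤ δ₁ * 2 ^ (p - 1) * |a| ^ (p - 1)
          + δ₁ * 2 ^ (p - 1) * |b| ^ (p - 1) := by
        linarith [mul_le_mul_of_nonneg_left htwo hδ₁.le]
      have e2 : (δ₁ * 2 ^ (p - 1) + δ₁) * |a| ^ (p - 1) ≤ δ * |a| ^ (p - 1) :=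
        mul_le_mul_of_nonneg_right hcoefp hAp
      have e3 : (δ₁ * 2 ^ (p - 1) + δ₁) * |b| ^ (p - 1) ≤ δ * |b| ^ (p - 1) :=
        mul_le_mul_of_nonneg_right hcoefp hBp
      have h5 : (0:ℝ) ≤ δ * |a| ^ (s - 1) := by positivity
      have h6 : (0:ℝ) ≤ δ * |b| ^ (s - 1) := by positivity
      have h7 : (0:ℝ) ≤ (3 * C₂ / ρ ^ qe + δ) * |b| ^ qe := by positivity
      linarith
    · rcases le_total |a| (2 * M) with ha2 | ha2
      · -- a middle
        have huc := hUC a b ha2 hbρ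
        have hr2 : (r / 2) ^ (p - 1) ≤ |a| ^ (p - 1) :=
          Real.rpow_le_rpow (by linarith) ha hp1.le
        have h8 : |f (a + b) - f a - f b| ≤ |f (a + b) - f a| + |f b| := by
          have := abs2 (f (a + b) - f a) (f b); linarith
        have h9 : δ * (r / 2) ^ (p - 1) ≤ δ * |a| ^ (p - 1) :=
          mul_le_mul_of_nonneg_left hr2 hδ.le
        have h10 : δ₁ * |b| ^ (p - 1) ≤ δ * |b| ^ (p - 1) :=
          mul_le_mul_of_nonneg_right hδ₁δ hBp
        have h5 : (0:ℝ) ≤ δ * |a| ^ (s - 1) := by positivity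
        have h6 : (0:ℝ) ≤ δ * |b| ^ (s - 1) := by positivity
        have h7 : (0:ℝ) ≤ (3 * C₂ / ρ ^ qe + δ) * |b| ^ qe := by positivity
        linarith
      · -- a large
        have hb1 : |b| ≤ 1 := by linarith
        have hab : M ≤ |a + b| := by
          have h11 : |a| ≤ |a + b| + |b| := by
            have := abs_add_le (a + b) (-b); simpa using this
          linarith
        have hfab : |f (a + b)| ≤ δ₁ * |a + b| ^ (s - 1) := hlarge _ hab
        have hfa : |f a| ≤ δ₁ * |a| ^ (s - 1) := hlarge a (by linarith)
        have htwo : |a + b| ^ (s - 1) ≤ 2 ^ (s - 1) * (|a| ^ (s - 1) + |b| ^ (s - 1)) := by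
          calc |a + b| ^ (s - 1) ≤ (|a| + |b|) ^ (s - 1) :=
                Real.rpow_le_rpow (abs_nonneg _) (abs_add_le a b) hs1.le
            _ ≤ _ := two_rpow_bound hs1.le (abs_nonneg _) (abs_nonneg _)
        have e1 : δ₁ * |a + b| ^ (s - 1) ≤ δ₁ * 2 ^ (s - 1) * |a| ^ (s - 1)
            + δ₁ * 2 ^ (s - 1) * |b| ^ (s - 1) := by
          linarith [mul_le_mul_of_nonneg_left htwo hδ₁.le]
        have e2 : (δ₁ * 2 ^ (s - 1) + δ₁) * |a| ^ (s - 1) ≤ δ * |a| ^ (s - 1) :=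
          mul_le_mul_of_nonneg_right hcoefs hAs
        have e3 : δ₁ * 2 ^ (s - 1) * |b| ^ (s - 1) ≤ δ * |b| ^ (s - 1) := by
          linarith [mul_le_mul_of_nonneg_right hcoefs hBs, mul_nonneg hδ₁.le hBs]
        have h10 : δ₁ * |b| ^ (p - 1) ≤ δ * |b| ^ (p - 1) :=
          mul_le_mul_of_nonneg_right hδ₁δ hBp
        have h5 : (0:ℝ) ≤ δ * |a| ^ (p - 1) := by positivity
        have h7 : (0:ℝ) ≤ (3 * C₂ / ρ ^ qe + δ) * |b| ^ qe := by positivity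
        linarith
  · -- b not small : use C-term
    have hfab := hL2 (a + b)
    have hfa := hL2 a
    have hfb := hL2 b
    have htwo : |a + b| ^ (s - 1) ≤ 2 ^ (s - 1) * (|a| ^ (s - 1) + |b| ^ (s - 1)) := by
      calc |a + b| ^ (s - 1) ≤ (|a| + |b|) ^ (s - 1) :=
            Real.rpow_le_rpow (abs_nonneg _) (abs_add_le a b) hs1.le
        _ ≤ _ := two_rpow_bound hs1.le (abs_nonneg _) (abs_nonneg _)
    have e1 : δ₁ * |a + b| ^ (s - 1) ≤ δ₁ * 2 ^ (s - 1) * |a| ^ (s - 1)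
        + δ₁ * 2 ^ (s - 1) * |b| ^ (s - 1) := by
      linarith [mul_le_mul_of_nonneg_left htwo hδ₁.le]
    have e2 : (δ₁ * 2 ^ (s - 1) + δ₁) * |a| ^ (s - 1) ≤ δ * |a| ^ (s - 1) :=
      mul_le_mul_of_nonneg_right hcoefs hAs
    have e3 : (δ₁ * 2 ^ (s - 1) + δ₁) * |b| ^ (s - 1) ≤ δ * |b| ^ (s - 1) :=
      mul_le_mul_of_nonneg_right hcoefs hBs
    have key3 : 3 * C₂ ≤ 3 * C₂ / ρ ^ qe * |b| ^ qe := by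
      have hρq : (0:ℝ) < ρ ^ qe := Real.rpow_pos_of_pos hρ0 _
      have hbq : ρ ^ qe ≤ |b| ^ qe := Real.rpow_le_rpow hρ0.le hbρ.le hqe.le
      calc (3:ℝ) * C₂ = 3 * C₂ / ρ ^ qe * ρ ^ qe := (div_mul_cancel₀ (3 * C₂) hρq.ne').symm
        _ ≤ 3 * C₂ / ρ ^ qe * |b| ^ qe :=
            mul_le_mul_of_nonneg_left hbq (by positivity)
    have h5 : (0:ℝ) ≤ δ * |a| ^ (p - 1) := by positivity
    have h6 : (0:ℝ) ≤ δ * |b| ^ (p - 1) := by positivity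
    have h7 : (0:ℝ) ≤ δ * |b| ^ qe := by positivity
    linarith

theorem stmt6 (N : ℕ) (hN : 1 ≤ N) (p s : ℝ) (hp : 1 < p) (hps : p < s)
    (f : ℝ → ℝ) (hf : Continuous f)
    (h0 : Tendsto (fun t : ℝ => f t / |t| ^ (p - 1)) (𝓝[≠] (0 : ℝ)) (𝓝 0))
    (hinf : Tendsto (fun t : ℝ => f t / |t| ^ (s - 1)) (Filter.cocompact ℝ) (𝓝 0))
    (u : ℕ → EuclideanSpace ℝ (Fin N) → ℝ) (v : EuclideanSpace ℝ (Fin N) → ℝ)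
    (hu : ∀ n, Measurable (u n)) (hv : Measurable v)
    (hae : ∀ᵐ x : EuclideanSpace ℝ (Fin N), Tendsto (fun n => u n x) atTop (𝓝 (v x)))
    (hloc : ∀ R > (0:ℝ), Tendsto (fun n =>
        ∫⁻ x in Metric.ball (0 : EuclideanSpace ℝ (Fin N)) R,
          ENNReal.ofReal (|u n x - v x| ^ p)) atTop (𝓝 0))
    (hbdd : (⨆ n, ((∫⁻ x : EuclideanSpace ℝ (Fin N), ENNReal.ofReal (|u n x| ^ p))
        + ∫⁻ x : EuclideanSpace ℝ (Fin N), ENNReal.ofReal (|u n x| ^ s))) < ⊤)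
    (hvint : ((∫⁻ x : EuclideanSpace ℝ (Fin N), ENNReal.ofReal (|v x| ^ p))
        + ∫⁻ x : EuclideanSpace ℝ (Fin N), ENNReal.ofReal (|v x| ^ s)) < ⊤) :
    ∀ ε > (0:ℝ), ∃ n₀ : ℕ, ∀ n ≥ n₀, ∀ w : EuclideanSpace ℝ (Fin N) → ℝ,
      Measurable w →
      (∫⁻ x : EuclideanSpace ℝ (Fin N), ENNReal.ofReal (|w x| ^ p)) ≤ 1 →
      (∫⁻ x : EuclideanSpace ℝ (Fin N), ENNReal.ofReal (|w x| ^ s)) ≤ 1 →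
      (∫⁻ x : EuclideanSpace ℝ (Fin N),
          ENNReal.ofReal (|f (u n x - v x) - f (u n x) + f (v x)| * |w x|))
        ≤ ENNReal.ofReal ε := by
  intro ε hε
  have hp0 : (0:ℝ) < p := by linarith
  have hs0 : (0:ℝ) < s := by linarith
  have hs1 : (1:ℝ) < s := by linarith
  have hq1 : (1:ℝ) < (p + s) / 2 := by linarith
  have hq0 : (0:ℝ) < (p + s) / 2 := by linarith
  have hγpos : (0:ℝ) < 1 - 1 / ((p + s) / 2) := by
    have h1 : 1 / ((p + s) / 2) < 1 := by rw [div_lt_one hq0]; linarith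
    linarith
  have hp1γ : (0:ℝ) ≤ 1 - 1 / p := by
    have : 1 / p < 1 := by rw [div_lt_one hp0]; linarith
    linarith
  have hs1γ : (0:ℝ) ≤ 1 - 1 / s := by
    have : 1 / s < 1 := by rw [div_lt_one hs0]; linarith
    linarith
  -- global bounds
  have hIp : ∀ n, (∫⁻ x, ENNReal.ofReal (|u n x| ^ p)) ≤
      (⨆ m, ((∫⁻ x, ENNReal.ofReal (|u m x| ^ p)) + ∫⁻ x, ENNReal.ofReal (|u m x| ^ s))) :=
    fun n => le_trans le_self_add (le_iSup (fun m =>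
      ((∫⁻ x, ENNReal.ofReal (|u m x| ^ p)) + ∫⁻ x, ENNReal.ofReal (|u m x| ^ s))) n)
  have hIs : ∀ n, (∫⁻ x, ENNReal.ofReal (|u n x| ^ s)) ≤
      (⨆ m, ((∫⁻ x, ENNReal.ofReal (|u m x| ^ p)) + ∫⁻ x, ENNReal.ofReal (|u m x| ^ s))) :=
    fun n => le_trans le_add_self (le_iSup (fun m =>
      ((∫⁻ x, ENNReal.ofReal (|u m x| ^ p)) + ∫⁻ x, ENNReal.ofReal (|u m x| ^ s))) n)
  set SB := (⨆ m, ((∫⁻ x, ENNReal.ofReal (|u m x| ^ p)) + ∫⁻ x, ENNReal.ofReal (|u m x| ^ s)))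
    with hSBdef
  have hSBne : SB ≠ ⊤ := hbdd.ne
  set Vp := ∫⁻ x, ENNReal.ofReal (|v x| ^ p) with hVpdef
  set Vs := ∫⁻ x, ENNReal.ofReal (|v x| ^ s) with hVsdef
  have hVpne : Vp ≠ ⊤ := (lt_of_le_of_lt le_self_add hvint).ne
  have hVsne : Vs ≠ ⊤ := (lt_of_le_of_lt le_add_self hvint).ne
  -- difference bounds
  have han : ∀ n, Measurable fun x => u n x - v x := fun n => (hu n).sub hv
  have hdiff : ∀ (t : ℝ), 0 ≤ t → ∀ n, (∫⁻ x, ENNReal.ofReal (|u n x - v x| ^ t))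
      ≤ ENNReal.ofReal (2 ^ t) *
        ((∫⁻ x, ENNReal.ofReal (|u n x| ^ t)) + ∫⁻ x, ENNReal.ofReal (|v x| ^ t)) := by
    intro t ht n
    have hpt : ∀ x, ENNReal.ofReal (|u n x - v x| ^ t) ≤ ENNReal.ofReal (2 ^ t) *
        (ENNReal.ofReal (|u n x| ^ t) + ENNReal.ofReal (|v x| ^ t)) := by
      intro x
      have h1 : |u n x - v x| ^ t ≤ 2 ^ t * (|u n x| ^ t + |v x| ^ t) := by
        calc |u n x - v x| ^ t ≤ (|u n x| + |v x|) ^ t :=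
              Real.rpow_le_rpow (abs_nonneg _) (abs2 _ _) ht
          _ ≤ _ := two_rpow_bound ht (abs_nonneg _) (abs_nonneg _)
      calc ENNReal.ofReal (|u n x - v x| ^ t)
          ≤ ENNReal.ofReal (2 ^ t * (|u n x| ^ t + |v x| ^ t)) := ENNReal.ofReal_le_ofReal h1
        _ = ENNReal.ofReal (2 ^ t) * (ENNReal.ofReal (|u n x| ^ t) + ENNReal.ofReal (|v x| ^ t)) := by
            rw [ENNReal.ofReal_mul (by positivity),
              ENNReal.ofReal_add (by positivity) (by positivity)]
    calc (∫⁻ x, ENNReal.ofReal (|u n x - v x| ^ t))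
        ≤ ∫⁻ x, ENNReal.ofReal (2 ^ t) *
            (ENNReal.ofReal (|u n x| ^ t) + ENNReal.ofReal (|v x| ^ t)) := lintegral_mono hpt
      _ = ENNReal.ofReal (2 ^ t) *
            ((∫⁻ x, ENNReal.ofReal (|u n x| ^ t)) + ∫⁻ x, ENNReal.ofReal (|v x| ^ t)) := by
          rw [lintegral_const_mul' _ _ ENNReal.ofReal_ne_top,
            lintegral_add_left ((hu n).abs.pow measurable_const).ennreal_ofReal]
  set Kp := ENNReal.ofReal (2 ^ p) * (SB + Vp) with hKpdef
  set Ks := ENNReal.ofReal (2 ^ s) * (SB + Vs) with hKsdef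
  have hKpb : ∀ n, (∫⁻ x, ENNReal.ofReal (|u n x - v x| ^ p)) ≤ Kp := fun n =>
    le_trans (hdiff p hp0.le n) (mul_le_mul_right (add_le_add (hIp n) le_rfl) _)
  have hKsb : ∀ n, (∫⁻ x, ENNReal.ofReal (|u n x - v x| ^ s)) ≤ Ks := fun n =>
    le_trans (hdiff s hs0.le n) (mul_le_mul_right (add_le_add (hIs n) le_rfl) _)
  have hKpne : Kp ≠ ⊤ :=
    ENNReal.mul_ne_top ENNReal.ofReal_ne_top (ENNReal.add_ne_top.mpr ⟨hSBne, hVpne⟩)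
  have hKsne : Ks ≠ ⊤ :=
    ENNReal.mul_ne_top ENNReal.ofReal_ne_top (ENNReal.add_ne_top.mpr ⟨hSBne, hVsne⟩)
  set D := Kp ^ (1 - 1/p) + Ks ^ (1 - 1/s) + Vp ^ (1 - 1/p) + Vs ^ (1 - 1/s) with hDdef
  have hDne : D ≠ ⊤ := by
    have h1 := ENNReal.rpow_ne_top_of_nonneg hp1γ hKpne
    have h2 := ENNReal.rpow_ne_top_of_nonneg hs1γ hKsne
    have h3 := ENNReal.rpow_ne_top_of_nonneg hp1γ hVpne
    have h4 := ENNReal.rpow_ne_top_of_nonneg hs1γ hVsne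
    rw [hDdef]
    exact ENNReal.add_ne_top.mpr
      ⟨ENNReal.add_ne_top.mpr ⟨ENNReal.add_ne_top.mpr ⟨h1, h2⟩, h3⟩, h4⟩
  set δ : ℝ := (ε/3) / (D.toReal + 1) with hδdef
  have hδ : 0 < δ := by
    have := ENNReal.toReal_nonneg (a := D)
    positivity
  obtain ⟨C, hC0, hkey⟩ := key_bound p s hp hps f hf h0 hinf hδ
  -- β₀
  set β₀ : ℝ := ((ε/3) / (2*(C+1))) ^ (1 / (1 - 1 / ((p + s) / 2))) with hβ₀def
  have hβ₀pos : 0 < β₀ := Real.rpow_pos_of_pos (by positivity) _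
  have hβγ : β₀ ^ (1 - 1 / ((p + s) / 2)) = (ε/3) / (2*(C+1)) := by
    rw [hβ₀def, ← Real.rpow_mul (by positivity), one_div,
      inv_mul_cancel₀ hγpos.ne', Real.rpow_one]
  have hCβ : C * β₀ ^ (1 - 1 / ((p + s) / 2)) * 2 ≤ ε / 3 := by
    rw [hβγ]
    have hd0 : (0:ℝ) ≤ (ε/3) / (2*(C+1)) := by positivity
    have hdd : (ε/3) / (2*(C+1)) * (2*(C+1)) = ε/3 := div_mul_cancel₀ _ (by positivity)
    nlinarith
  -- β₁
  set K' : ℝ := Ks.toReal ^ (1/2 : ℝ) with hK'def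
  have hK'0 : 0 ≤ K' := Real.rpow_nonneg ENNReal.toReal_nonneg _
  set β₁ : ℝ := (β₀ / (K' + 1)) ^ (2:ℝ) with hβ₁def
  have hβ₁pos : 0 < β₁ := Real.rpow_pos_of_pos (by positivity) _
  have hβ₁half : β₁ ^ (1/2 : ℝ) = β₀ / (K' + 1) := by
    rw [hβ₁def, ← Real.rpow_mul (by positivity)]
    norm_num
  -- tail choice
  have hVqpt : ∀ (h : EuclideanSpace ℝ (Fin N) → ℝ), ∀ x,
      ENNReal.ofReal (|h x| ^ ((p + s) / 2)) ≤
        ENNReal.ofReal (|h x| ^ p) + ENNReal.ofReal (|h x| ^ s) := by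
    intro h x
    rw [← ENNReal.ofReal_add (by positivity) (by positivity)]
    exact ENNReal.ofReal_le_ofReal
      (rpow_mid_le (abs_nonneg _) hq0 (by linarith) (by linarith))
  have hVq : (∫⁻ x, ENNReal.ofReal (|v x| ^ ((p + s) / 2))) ≤ Vp + Vs := by
    calc (∫⁻ x, ENNReal.ofReal (|v x| ^ ((p + s) / 2)))
        ≤ ∫⁻ x, (ENNReal.ofReal (|v x| ^ p) + ENNReal.ofReal (|v x| ^ s)) :=
          lintegral_mono (hVqpt v)
      _ = Vp + Vs := lintegral_add_left (hv.abs.pow measurable_const).ennreal_ofReal _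
  obtain ⟨R, hR1, hRtail⟩ : ∃ R : ℕ, 1 ≤ R ∧
      (∫⁻ x in (Metric.ball (0 : EuclideanSpace ℝ (Fin N)) (R:ℝ))ᶜ,
        ENNReal.ofReal (|v x| ^ ((p + s) / 2))) ≤ ENNReal.ofReal β₀ := by
    set ν := (volume : Measure (EuclideanSpace ℝ (Fin N))).withDensity
      (fun x => ENNReal.ofReal (|v x| ^ ((p + s) / 2))) with hνdef
    have hν : ∀ (S : Set (EuclideanSpace ℝ (Fin N))), MeasurableSet S →
        ν S = ∫⁻ x in S, ENNReal.ofReal (|v x| ^ ((p + s) / 2)) := fun S hS =>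
      withDensity_apply _ hS
    have hνfin : ν Set.univ ≠ ⊤ := by
      rw [hν _ MeasurableSet.univ, Measure.restrict_univ]
      exact (lt_of_le_of_lt hVq hvint).ne
    have htail : Tendsto (fun m : ℕ =>
        ν ((Metric.ball (0 : EuclideanSpace ℝ (Fin N)) (m:ℝ))ᶜ)) atTop (𝓝 0) := by
      have hmeas : ∀ m : ℕ, NullMeasurableSet
          ((Metric.ball (0 : EuclideanSpace ℝ (Fin N)) (m:ℝ))ᶜ) ν :=
        fun m => (measurableSet_ball.compl).nullMeasurableSet
      have hanti : Antitone (fun m : ℕ =>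
          (Metric.ball (0 : EuclideanSpace ℝ (Fin N)) (m:ℝ))ᶜ) := fun m m' h =>
        Set.compl_subset_compl.mpr (Metric.ball_subset_ball (by exact_mod_cast h))
      have hfin : ∃ m : ℕ, ν ((Metric.ball (0 : EuclideanSpace ℝ (Fin N)) (m:ℝ))ᶜ) ≠ ⊤ :=
        ⟨0, ne_top_of_le_ne_top hνfin (measure_mono (Set.subset_univ _))⟩
      have h := tendsto_measure_iInter_atTop hmeas hanti hfin
      have hempty : (⋂ m : ℕ, (Metric.ball (0 : EuclideanSpace ℝ (Fin N)) (m:ℝ))ᶜ) = ∅ := by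
        ext x
        simp only [Set.mem_iInter, Set.mem_compl_iff, Metric.mem_ball,
          Set.mem_empty_iff_false, iff_false, not_forall, not_not]
        obtain ⟨m, hm⟩ := exists_nat_gt (dist x 0)
        exact ⟨m, hm⟩
      rw [hempty, measure_empty] at h
      exact h
    have hev := htail.eventually_lt_const (ENNReal.ofReal_pos.mpr hβ₀pos)
    obtain ⟨m, hm1, hm2⟩ := (hev.and (eventually_ge_atTop 1)).exists
    exact ⟨m, hm2, by rw [← hν _ measurableSet_ball.compl]; exact hm1.le⟩
  -- inner choice
  have hRpos : (0:ℝ) < (R:ℝ) := by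
    have : (1:ℝ) ≤ (R:ℝ) := by exact_mod_cast hR1
    linarith
  obtain ⟨n₀, hn₀⟩ : ∃ n₀, ∀ n ≥ n₀,
      (∫⁻ x in Metric.ball (0 : EuclideanSpace ℝ (Fin N)) (R:ℝ),
        ENNReal.ofReal (|u n x - v x| ^ p)) ≤ ENNReal.ofReal β₁ := by
    have hev := (hloc (R:ℝ) hRpos).eventually_lt_const (ENNReal.ofReal_pos.mpr hβ₁pos)
    obtain ⟨n₀, hn₀⟩ := eventually_atTop.mp hev
    exact ⟨n₀, fun n hn => (hn₀ n hn).le⟩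
  refine ⟨n₀, fun n hn w hw hwp hws => ?_⟩
  set S := Metric.ball (0 : EuclideanSpace ℝ (Fin N)) (R:ℝ) with hSdef
  have hSmeas : MeasurableSet S := measurableSet_ball
  have hman : Measurable fun x => u n x - v x := han n
  -- w has small (p+s)/2 integral
  have hwq : (∫⁻ x, ENNReal.ofReal (|w x| ^ ((p + s) / 2))) ≤ 2 := by
    calc (∫⁻ x, ENNReal.ofReal (|w x| ^ ((p + s) / 2)))
        ≤ ∫⁻ x, (ENNReal.ofReal (|w x| ^ p) + ENNReal.ofReal (|w x| ^ s)) :=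
          lintegral_mono (hVqpt w)
      _ = (∫⁻ x, ENNReal.ofReal (|w x| ^ p)) + ∫⁻ x, ENNReal.ofReal (|w x| ^ s) :=
          lintegral_add_left (hw.abs.pow measurable_const).ennreal_ofReal _
      _ ≤ 1 + 1 := add_le_add hwp hws
      _ = 2 := one_add_one_eq_two
  -- pointwise bounds
  set Φ : EuclideanSpace ℝ (Fin N) → ℝ := fun x =>
    |u n x - v x| ^ (p-1) + |u n x - v x| ^ (s-1) + |v x| ^ (p-1) + |v x| ^ (s-1) with hΦdef
  have hΦ0 : ∀ x, 0 ≤ Φ x := fun x => by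
    simp only [hΦdef]; positivity
  have hΦm : Measurable Φ := by
    simp only [hΦdef]
    exact (((hman.abs.pow measurable_const).add (hman.abs.pow measurable_const)).add
      (hv.abs.pow measurable_const)).add (hv.abs.pow measurable_const)
  have hgI : ∀ x, |f (u n x - v x) - f (u n x) + f (v x)| ≤
      δ * Φ x + C * |u n x - v x| ^ ((p + s) / 2 - 1) := by
    intro x
    have h := hkey (v x) (u n x - v x)
    rw [show v x + (u n x - v x) = u n x by ring] at h
    have heq : |f (u n x - v x) - f (u n x) + f (v x)| =
        |f (u n x) - f (v x) - f (u n x - v x)| := by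
      rw [← abs_neg]; ring_nf
    rw [heq]
    refine le_trans h (le_of_eq ?_)
    simp only [hΦdef]; ring
  have hgO : ∀ x, |f (u n x - v x) - f (u n x) + f (v x)| ≤
      δ * Φ x + C * |v x| ^ ((p + s) / 2 - 1) := by
    intro x
    have h := hkey (u n x - v x) (v x)
    rw [show u n x - v x + v x = u n x by ring] at h
    have heq : |f (u n x - v x) - f (u n x) + f (v x)| =
        |f (u n x) - f (u n x - v x) - f (v x)| := by
      rw [← abs_neg]; ring_nf
    rw [heq]
    refine le_trans h (le_of_eq ?_)
    simp only [hΦdef]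
    try ring
  -- integrand functions
  set F : EuclideanSpace ℝ (Fin N) → ℝ≥0∞ := fun x => ENNReal.ofReal (Φ x * |w x|) with hFdef
  set GI : EuclideanSpace ℝ (Fin N) → ℝ≥0∞ :=
    fun x => ENNReal.ofReal (|u n x - v x| ^ ((p + s) / 2 - 1) * |w x|) with hGIdef
  set GO : EuclideanSpace ℝ (Fin N) → ℝ≥0∞ :=
    fun x => ENNReal.ofReal (|v x| ^ ((p + s) / 2 - 1) * |w x|) with hGOdef
  have hFm : Measurable F := (hΦm.mul hw.abs).ennreal_ofReal
  have hGIm : Measurable GI := ((hman.abs.pow measurable_const).mul hw.abs).ennreal_ofReal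
  have hGOm : Measurable GO := ((hv.abs.pow measurable_const).mul hw.abs).ennreal_ofReal
  have hboundI : ∀ x, ENNReal.ofReal (|f (u n x - v x) - f (u n x) + f (v x)| * |w x|) ≤
      ENNReal.ofReal δ * F x + ENNReal.ofReal C * GI x := by
    intro x
    have h1 : |f (u n x - v x) - f (u n x) + f (v x)| * |w x| ≤
        δ * (Φ x * |w x|) + C * (|u n x - v x| ^ ((p + s) / 2 - 1) * |w x|) := by
      calc |f (u n x - v x) - f (u n x) + f (v x)| * |w x|
          ≤ (δ * Φ x + C * |u n x - v x| ^ ((p + s) / 2 - 1)) * |w x| :=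
            mul_le_mul_of_nonneg_right (hgI x) (abs_nonneg _)
        _ = _ := by ring
    calc ENNReal.ofReal (|f (u n x - v x) - f (u n x) + f (v x)| * |w x|)
        ≤ ENNReal.ofReal (δ * (Φ x * |w x|) +
            C * (|u n x - v x| ^ ((p + s) / 2 - 1) * |w x|)) := ENNReal.ofReal_le_ofReal h1
      _ = ENNReal.ofReal δ * F x + ENNReal.ofReal C * GI x := by
          rw [ENNReal.ofReal_add (mul_nonneg hδ.le (mul_nonneg (hΦ0 x) (abs_nonneg _)))
            (mul_nonneg hC0.le (mul_nonneg (by positivity) (abs_nonneg _))),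
            ENNReal.ofReal_mul hδ.le, ENNReal.ofReal_mul hC0.le]
  have hboundO : ∀ x, ENNReal.ofReal (|f (u n x - v x) - f (u n x) + f (v x)| * |w x|) ≤
      ENNReal.ofReal δ * F x + ENNReal.ofReal C * GO x := by
    intro x
    have h1 : |f (u n x - v x) - f (u n x) + f (v x)| * |w x| ≤
        δ * (Φ x * |w x|) + C * (|v x| ^ ((p + s) / 2 - 1) * |w x|) := by
      calc |f (u n x - v x) - f (u n x) + f (v x)| * |w x|
          ≤ (δ * Φ x + C * |v x| ^ ((p + s) / 2 - 1)) * |w x| :=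
            mul_le_mul_of_nonneg_right (hgO x) (abs_nonneg _)
        _ = _ := by ring
    calc ENNReal.ofReal (|f (u n x - v x) - f (u n x) + f (v x)| * |w x|)
        ≤ ENNReal.ofReal (δ * (Φ x * |w x|) +
            C * (|v x| ^ ((p + s) / 2 - 1) * |w x|)) := ENNReal.ofReal_le_ofReal h1
      _ = ENNReal.ofReal δ * F x + ENNReal.ofReal C * GO x := by
          rw [ENNReal.ofReal_add (mul_nonneg hδ.le (mul_nonneg (hΦ0 x) (abs_nonneg _)))
            (mul_nonneg hC0.le (mul_nonneg (by positivity) (abs_nonneg _))),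
            ENNReal.ofReal_mul hδ.le, ENNReal.ofReal_mul hC0.le]
  -- region estimates
  have hS1 : (∫⁻ x in S, ENNReal.ofReal (|f (u n x - v x) - f (u n x) + f (v x)| * |w x|)) ≤
      ENNReal.ofReal δ * (∫⁻ x in S, F x) + ENNReal.ofReal C * (∫⁻ x in S, GI x) := by
    calc (∫⁻ x in S, ENNReal.ofReal (|f (u n x - v x) - f (u n x) + f (v x)| * |w x|))
        ≤ ∫⁻ x in S, (ENNReal.ofReal δ * F x + ENNReal.ofReal C * GI x) :=
          lintegral_mono fun x => hboundI x
      _ = _ := by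
          rw [lintegral_add_left (hFm.const_mul _),
            lintegral_const_mul' _ _ ENNReal.ofReal_ne_top,
            lintegral_const_mul' _ _ ENNReal.ofReal_ne_top]
  have hS2 : (∫⁻ x in Sᶜ, ENNReal.ofReal (|f (u n x - v x) - f (u n x) + f (v x)| * |w x|)) ≤
      ENNReal.ofReal δ * (∫⁻ x in Sᶜ, F x) + ENNReal.ofReal C * (∫⁻ x in Sᶜ, GO x) := by
    calc (∫⁻ x in Sᶜ, ENNReal.ofReal (|f (u n x - v x) - f (u n x) + f (v x)| * |w x|))
        ≤ ∫⁻ x in Sᶜ, (ENNReal.ofReal δ * F x + ENNReal.ofReal C * GO x) :=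
          lintegral_mono fun x => hboundO x
      _ = _ := by
          rw [lintegral_add_left (hFm.const_mul _),
            lintegral_const_mul' _ _ ENNReal.ofReal_ne_top,
            lintegral_const_mul' _ _ ENNReal.ofReal_ne_top]
  -- F integral bound
  have hFsplit : (∫⁻ x, F x) ≤ D := by
    have hFeq : ∀ x, F x = ENNReal.ofReal (|u n x - v x| ^ (p-1) * |w x|) +
        ENNReal.ofReal (|u n x - v x| ^ (s-1) * |w x|) +
        ENNReal.ofReal (|v x| ^ (p-1) * |w x|) +
        ENNReal.ofReal (|v x| ^ (s-1) * |w x|) := by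
      intro x
      have e : Φ x * |w x| = |u n x - v x| ^ (p-1) * |w x| +
          |u n x - v x| ^ (s-1) * |w x| + |v x| ^ (p-1) * |w x| + |v x| ^ (s-1) * |w x| := by
        simp only [hΦdef]; ring
      rw [hFdef]
      simp only
      rw [e, ENNReal.ofReal_add (by positivity) (by positivity),
        ENNReal.ofReal_add (by positivity) (by positivity),
        ENNReal.ofReal_add (by positivity) (by positivity)]
    have hm1 : Measurable fun x => ENNReal.ofReal (|u n x - v x| ^ (p-1) * |w x|) :=
      ((hman.abs.pow measurable_const).mul hw.abs).ennreal_ofReal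
    have hm2 : Measurable fun x => ENNReal.ofReal (|u n x - v x| ^ (s-1) * |w x|) :=
      ((hman.abs.pow measurable_const).mul hw.abs).ennreal_ofReal
    have hm3 : Measurable fun x => ENNReal.ofReal (|v x| ^ (p-1) * |w x|) :=
      ((hv.abs.pow measurable_const).mul hw.abs).ennreal_ofReal
    have h1 : (∫⁻ x, ENNReal.ofReal (|u n x - v x| ^ (p-1) * |w x|)) ≤ Kp ^ (1 - 1/p) := by
      refine le_trans (holder_ofReal volume hp hman hw) ?_
      calc (∫⁻ x, ENNReal.ofReal (|u n x - v x| ^ p)) ^ (1 - 1/p) *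
            (∫⁻ x, ENNReal.ofReal (|w x| ^ p)) ^ (1/p)
          ≤ Kp ^ (1 - 1/p) * 1 ^ (1/p) :=
            mul_le_mul' (ENNReal.rpow_le_rpow (hKpb n) hp1γ)
              (ENNReal.rpow_le_rpow hwp (by positivity))
        _ = Kp ^ (1 - 1/p) := by rw [ENNReal.one_rpow, mul_one]
    have h2 : (∫⁻ x, ENNReal.ofReal (|u n x - v x| ^ (s-1) * |w x|)) ≤ Ks ^ (1 - 1/s) := by
      refine le_trans (holder_ofReal volume hs1 hman hw) ?_
      calc (∫⁻ x, ENNReal.ofReal (|u n x - v x| ^ s)) ^ (1 - 1/s) *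
            (∫⁻ x, ENNReal.ofReal (|w x| ^ s)) ^ (1/s)
          ≤ Ks ^ (1 - 1/s) * 1 ^ (1/s) :=
            mul_le_mul' (ENNReal.rpow_le_rpow (hKsb n) hs1γ)
              (ENNReal.rpow_le_rpow hws (by positivity))
        _ = Ks ^ (1 - 1/s) := by rw [ENNReal.one_rpow, mul_one]
    have h3 : (∫⁻ x, ENNReal.ofReal (|v x| ^ (p-1) * |w x|)) ≤ Vp ^ (1 - 1/p) := by
      refine le_trans (holder_ofReal volume hp hv hw) ?_
      calc (∫⁻ x, ENNReal.ofReal (|v x| ^ p)) ^ (1 - 1/p) *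
            (∫⁻ x, ENNReal.ofReal (|w x| ^ p)) ^ (1/p)
          ≤ Vp ^ (1 - 1/p) * 1 ^ (1/p) :=
            mul_le_mul' (ENNReal.rpow_le_rpow le_rfl hp1γ)
              (ENNReal.rpow_le_rpow hwp (by positivity))
        _ = Vp ^ (1 - 1/p) := by rw [ENNReal.one_rpow, mul_one]
    have h4 : (∫⁻ x, ENNReal.ofReal (|v x| ^ (s-1) * |w x|)) ≤ Vs ^ (1 - 1/s) := by
      refine le_trans (holder_ofReal volume hs1 hv hw) ?_
      calc (∫⁻ x, ENNReal.ofReal (|v x| ^ s)) ^ (1 - 1/s) *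
            (∫⁻ x, ENNReal.ofReal (|w x| ^ s)) ^ (1/s)
          ≤ Vs ^ (1 - 1/s) * 1 ^ (1/s) :=
            mul_le_mul' (ENNReal.rpow_le_rpow le_rfl hs1γ)
              (ENNReal.rpow_le_rpow hws (by positivity))
        _ = Vs ^ (1 - 1/s) := by rw [ENNReal.one_rpow, mul_one]
    calc (∫⁻ x, F x) = (∫⁻ x, (ENNReal.ofReal (|u n x - v x| ^ (p-1) * |w x|) +
          ENNReal.ofReal (|u n x - v x| ^ (s-1) * |w x|) +
          ENNReal.ofReal (|v x| ^ (p-1) * |w x|) +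
          ENNReal.ofReal (|v x| ^ (s-1) * |w x|))) := lintegral_congr hFeq
      _ = (∫⁻ x, ENNReal.ofReal (|u n x - v x| ^ (p-1) * |w x|)) +
          (∫⁻ x, ENNReal.ofReal (|u n x - v x| ^ (s-1) * |w x|)) +
          (∫⁻ x, ENNReal.ofReal (|v x| ^ (p-1) * |w x|)) +
          (∫⁻ x, ENNReal.ofReal (|v x| ^ (s-1) * |w x|)) := by
        rw [lintegral_add_left ((hm1.fun_add hm2).fun_add hm3),
          lintegral_add_left (hm1.fun_add hm2), lintegral_add_left hm1]
      _ ≤ D := by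
        rw [hDdef]
        exact add_le_add (add_le_add (add_le_add h1 h2) h3) h4
  -- delta term
  have hδD : ENNReal.ofReal δ * (∫⁻ x, F x) ≤ ENNReal.ofReal (ε/3) := by
    calc ENNReal.ofReal δ * (∫⁻ x, F x) ≤ ENNReal.ofReal δ * D := mul_le_mul_right hFsplit _
      _ = ENNReal.ofReal δ * ENNReal.ofReal D.toReal := by rw [ENNReal.ofReal_toReal hDne]
      _ = ENNReal.ofReal (δ * D.toReal) := (ENNReal.ofReal_mul hδ.le).symm
      _ ≤ ENNReal.ofReal (ε/3) := ENNReal.ofReal_le_ofReal (by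
          have h1 : δ * (D.toReal + 1) = ε/3 := div_mul_cancel₀ _ (by positivity)
          nlinarith [ENNReal.toReal_nonneg (a := D), hδ.le])
  -- C terms
  have h2le : ((2:ℝ≥0∞)) ^ (1 / ((p + s) / 2)) ≤ 2 := by
    calc (2:ℝ≥0∞) ^ (1 / ((p + s) / 2)) ≤ (2:ℝ≥0∞) ^ (1:ℝ) :=
        ENNReal.rpow_le_rpow_of_exponent_le (by norm_num) (by
          rw [div_le_one hq0]; linarith)
      _ = 2 := ENNReal.rpow_one _
  have hCconv : ∀ (X : ℝ≥0∞), X ≤ ENNReal.ofReal β₀ →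
      ENNReal.ofReal C * (X ^ (1 - 1 / ((p + s) / 2)) * (2:ℝ≥0∞)) ≤ ENNReal.ofReal (ε/3) := by
    intro X hX
    have h1 : X ^ (1 - 1 / ((p + s) / 2)) ≤ ENNReal.ofReal (β₀ ^ (1 - 1 / ((p + s) / 2))) := by
      rw [← ENNReal.ofReal_rpow_of_nonneg hβ₀pos.le hγpos.le]
      exact ENNReal.rpow_le_rpow hX hγpos.le
    calc ENNReal.ofReal C * (X ^ (1 - 1 / ((p + s) / 2)) * 2)
        ≤ ENNReal.ofReal C * (ENNReal.ofReal (β₀ ^ (1 - 1 / ((p + s) / 2))) * ENNReal.ofReal 2) := by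
          refine mul_le_mul_right (mul_le_mul' h1 ?_) _
          rw [show ((2:ℝ≥0∞)) = ENNReal.ofReal 2 by norm_num]
      _ = ENNReal.ofReal (C * (β₀ ^ (1 - 1 / ((p + s) / 2)) * 2)) := by
          rw [← ENNReal.ofReal_mul (by positivity), ← ENNReal.ofReal_mul hC0.le]
      _ ≤ ENNReal.ofReal (ε/3) := ENNReal.ofReal_le_ofReal (by nlinarith [hCβ])
  have hGIb : ENNReal.ofReal C * (∫⁻ x in S, GI x) ≤ ENNReal.ofReal (ε/3) := by
    have hh := holder_ofReal (volume.restrict S) hq1 hman hw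
    have hWq : (∫⁻ x in S, ENNReal.ofReal (|w x| ^ ((p + s) / 2))) ≤ 2 :=
      le_trans (setLIntegral_le_lintegral _ _) hwq
    -- Cauchy-Schwarz for the inner q-integral
    have hInb : (∫⁻ x in S, ENNReal.ofReal (|u n x - v x| ^ ((p + s) / 2))) ≤
        ENNReal.ofReal β₀ := by
      have hconj : Real.HolderConjugate 2 2 := Real.HolderConjugate.two_two
      have hFm2 : Measurable fun x => ENNReal.ofReal (|u n x - v x| ^ (p/2)) :=
        (hman.abs.pow measurable_const).ennreal_ofReal
      have hGm2 : Measurable fun x => ENNReal.ofReal (|u n x - v x| ^ (s/2)) :=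
        (hman.abs.pow measurable_const).ennreal_ofReal
      have hcs := ENNReal.lintegral_mul_le_Lp_mul_Lq (volume.restrict S) hconj
        hFm2.aemeasurable hGm2.aemeasurable
      have e1 : (∫⁻ x in S, ((fun x => ENNReal.ofReal (|u n x - v x| ^ (p/2))) *
          (fun x => ENNReal.ofReal (|u n x - v x| ^ (s/2)))) x) =
          ∫⁻ x in S, ENNReal.ofReal (|u n x - v x| ^ ((p + s) / 2)) := by
        refine lintegral_congr fun x => ?_
        simp only [Pi.mul_apply]
        rw [← ENNReal.ofReal_mul (by positivity),
          ← Real.rpow_add' (abs_nonneg _) (by positivity : p/2 + s/2 ≠ 0),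
          show p/2 + s/2 = (p + s) / 2 by ring]
      have e2 : (∫⁻ x in S, (ENNReal.ofReal (|u n x - v x| ^ (p/2))) ^ (2:ℝ)) =
          ∫⁻ x in S, ENNReal.ofReal (|u n x - v x| ^ p) := by
        refine lintegral_congr fun x => ?_
        rw [ENNReal.ofReal_rpow_of_nonneg (by positivity) (by norm_num),
          ← Real.rpow_mul (abs_nonneg _)]
        norm_num
      have e3 : (∫⁻ x in S, (ENNReal.ofReal (|u n x - v x| ^ (s/2))) ^ (2:ℝ)) =
          ∫⁻ x in S, ENNReal.ofReal (|u n x - v x| ^ s) := by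
        refine lintegral_congr fun x => ?_
        rw [ENNReal.ofReal_rpow_of_nonneg (by positivity) (by norm_num),
          ← Real.rpow_mul (abs_nonneg _)]
        norm_num
      rw [e1, e2, e3] at hcs
      have hP : (∫⁻ x in S, ENNReal.ofReal (|u n x - v x| ^ p)) ≤ ENNReal.ofReal β₁ :=
        hn₀ n hn
      have hQ : (∫⁻ x in S, ENNReal.ofReal (|u n x - v x| ^ s)) ≤ Ks :=
        le_trans (setLIntegral_le_lintegral _ _) (hKsb n)
      calc (∫⁻ x in S, ENNReal.ofReal (|u n x - v x| ^ ((p + s) / 2)))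
          ≤ (∫⁻ x in S, ENNReal.ofReal (|u n x - v x| ^ p)) ^ ((1:ℝ)/2) *
            (∫⁻ x in S, ENNReal.ofReal (|u n x - v x| ^ s)) ^ ((1:ℝ)/2) := hcs
        _ ≤ (ENNReal.ofReal β₁) ^ ((1:ℝ)/2) * Ks ^ ((1:ℝ)/2) :=
            mul_le_mul' (ENNReal.rpow_le_rpow hP (by norm_num))
              (ENNReal.rpow_le_rpow hQ (by norm_num))
        _ = ENNReal.ofReal (β₁ ^ ((1:ℝ)/2)) * ENNReal.ofReal K' := by
            rw [ENNReal.ofReal_rpow_of_nonneg hβ₁pos.le (by norm_num), hK'def,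
              ← ENNReal.ofReal_rpow_of_nonneg ENNReal.toReal_nonneg (by norm_num),
              ENNReal.ofReal_toReal hKsne]
        _ = ENNReal.ofReal (β₁ ^ ((1:ℝ)/2) * K') := (ENNReal.ofReal_mul (by positivity)).symm
        _ ≤ ENNReal.ofReal β₀ := by
            refine ENNReal.ofReal_le_ofReal ?_
            rw [show ((1:ℝ)/2) = (1/2:ℝ) by norm_num, hβ₁half]
            rw [div_mul_eq_mul_div, div_le_iff₀ (by positivity)]
            nlinarith [hβ₀pos.le, hK'0]
    have hstep : (∫⁻ x in S, GI x) ≤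
        (∫⁻ x in S, ENNReal.ofReal (|u n x - v x| ^ ((p + s) / 2))) ^
          (1 - 1 / ((p + s) / 2)) * 2 :=
      le_trans hh (mul_le_mul' le_rfl
        (le_trans (ENNReal.rpow_le_rpow hWq (by positivity)) h2le))
    exact le_trans (mul_le_mul_right hstep _) (hCconv _ hInb)
  have hGOb : ENNReal.ofReal C * (∫⁻ x in Sᶜ, GO x) ≤ ENNReal.ofReal (ε/3) := by
    have hh := holder_ofReal (volume.restrict Sᶜ) hq1 hv hw
    have hWq2 : (∫⁻ x in Sᶜ, ENNReal.ofReal (|w x| ^ ((p + s) / 2))) ≤ 2 :=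
      le_trans (setLIntegral_le_lintegral _ _) hwq
    have hstep : (∫⁻ x in Sᶜ, GO x) ≤
        (∫⁻ x in Sᶜ, ENNReal.ofReal (|v x| ^ ((p + s) / 2))) ^
          (1 - 1 / ((p + s) / 2)) * 2 :=
      le_trans hh (mul_le_mul' le_rfl
        (le_trans (ENNReal.rpow_le_rpow hWq2 (by positivity)) h2le))
    exact le_trans (mul_le_mul_right hstep _) (hCconv _ hRtail)
  calc (∫⁻ x, ENNReal.ofReal (|f (u n x - v x) - f (u n x) + f (v x)| * |w x|))
      = (∫⁻ x in S, ENNReal.ofReal (|f (u n x - v x) - f (u n x) + f (v x)| * |w x|)) +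
        (∫⁻ x in Sᶜ, ENNReal.ofReal (|f (u n x - v x) - f (u n x) + f (v x)| * |w x|)) :=
      (lintegral_add_compl _ hSmeas).symm
    _ ≤ (ENNReal.ofReal δ * (∫⁻ x in S, F x) + ENNReal.ofReal C * (∫⁻ x in S, GI x)) +
        (ENNReal.ofReal δ * (∫⁻ x in Sᶜ, F x) + ENNReal.ofReal C * (∫⁻ x in Sᶜ, GO x)) :=
      add_le_add hS1 hS2
    _ = ENNReal.ofReal δ * ((∫⁻ x in S, F x) + (∫⁻ x in Sᶜ, F x)) +
        (ENNReal.ofReal C * (∫⁻ x in S, GI x) + ENNReal.ofReal C * (∫⁻ x in Sᶜ, GO x)) := by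
      ring
    _ = ENNReal.ofReal δ * (∫⁻ x, F x) +
        (ENNReal.ofReal C * (∫⁻ x in S, GI x) + ENNReal.ofReal C * (∫⁻ x in Sᶜ, GO x)) := by
      rw [lintegral_add_compl F hSmeas]
    _ ≤ ENNReal.ofReal (ε/3) + (ENNReal.ofReal (ε/3) + ENNReal.ofReal (ε/3)) :=
      add_le_add hδD (add_le_add hGIb hGOb)
    _ = ENNReal.ofReal ε := by
      rw [← ENNReal.ofReal_add (by positivity) (by positivity),
        ← ENNReal.ofReal_add (by positivity) (by positivity)]
      congr 1
      ring
end

section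
/- Let N ≥ 1 be an integer and p, q ∈ [1, ∞) real numbers. Let W : ℝ^N → [0, ∞) be measurable and let u_n, u : ℝ^N → ℝ be measurable functions with u_n → u almost everywhere on ℝ^N and sup_n ∫_{ℝ^N} W(x)(|u_n(x)|^p + |u_n(x)|^q) dx < ∞. Then ∫_{ℝ^N} W(x)(|u_n − u|^p + |u_n − u|^q) dx − ∫_{ℝ^N} W(x)(|u_n|^p + |u_n|^q) dx + ∫_{ℝ^N} W(x)(|u|^p + |u|^q) dx → 0 as n → ∞. -/
open Filter MeasureTheory
open scoped Topology ENNReal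

lemma cont_abs_rpow {r : ℝ} (hr : 1 ≤ r) : Continuous fun t : ℝ => |t| ^ r :=
  continuous_abs.rpow_const fun _ => Or.inr (by linarith)

lemma abs_rpow_nonneg (t r : ℝ) : 0 ≤ |t| ^ r := Real.rpow_nonneg (abs_nonneg t) r

lemma key_ineq {r : ℝ} (hr : 1 ≤ r) {ε : ℝ} (hε : 0 < ε) :
    ∃ C : ℝ, 0 < C ∧ ∀ a b : ℝ, abs (|a + b| ^ r - |a| ^ r) ≤ ε * |a| ^ r + C * |b| ^ r := by
  have hr0 : (0:ℝ) ≤ r := by linarith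
  have hcont : Tendsto (fun δ : ℝ => (1 + δ) ^ r - (1 - δ) ^ r) (𝓝 0) (𝓝 0) := by
    have hadd : Tendsto (fun δ : ℝ => 1 + δ) (𝓝 0) (𝓝 1) := by
      exact (continuous_const.add continuous_id).tendsto' (0:ℝ) 1 (by simp)
    have hsub : Tendsto (fun δ : ℝ => 1 - δ) (𝓝 0) (𝓝 1) := by
      exact (continuous_const.sub continuous_id).tendsto' (0:ℝ) 1 (by simp)
    have hc : ContinuousAt (fun x : ℝ => x ^ r) 1 :=
      Real.continuousAt_rpow_const 1 r (Or.inl one_ne_zero)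
    have := (hc.tendsto.comp hadd).sub (hc.tendsto.comp hsub)
    simpa [Function.comp, Real.one_rpow] using this
  have hev : ∀ᶠ δ : ℝ in 𝓝[>] (0:ℝ),
      ((1 + δ) ^ r - (1 - δ) ^ r < ε ∧ δ < 1) ∧ 0 < δ := by
    refine Eventually.and (Eventually.and ?_ ?_) self_mem_nhdsWithin
    · exact (hcont.mono_left nhdsWithin_le_nhds).eventually_lt_const hε
    · exact (tendsto_id.mono_left nhdsWithin_le_nhds).eventually_lt_const one_pos
  obtain ⟨δ, ⟨hδε, hδ1⟩, hδ0⟩ := hev.exists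
  refine ⟨(1 + 1/δ) ^ r + (1/δ) ^ r + 1, by positivity, fun a b => ?_⟩
  set C : ℝ := (1 + 1/δ) ^ r + (1/δ) ^ r + 1 with hC
  have hbr : (0:ℝ) ≤ |b| ^ r := abs_rpow_nonneg b r
  have har : (0:ℝ) ≤ |a| ^ r := abs_rpow_nonneg a r
  rcases le_or_gt (δ * |a|) |b| with hcase | hcase
  · -- |b| ≥ δ|a|
    have ha : |a| ≤ (1/δ) * |b| := by
      rw [div_mul_eq_mul_div, le_div_iff₀ hδ0]
      nlinarith
    have hab : |a + b| ≤ (1 + 1/δ) * |b| := by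
      have h := abs_add_le a b
      nlinarith [abs_nonneg b]
    have h1 : |a + b| ^ r ≤ (1 + 1/δ) ^ r * |b| ^ r := by
      rw [← Real.mul_rpow (by positivity) (abs_nonneg b)]
      exact Real.rpow_le_rpow (abs_nonneg _) hab hr0
    have h2 : |a| ^ r ≤ (1/δ) ^ r * |b| ^ r := by
      rw [← Real.mul_rpow (by positivity) (abs_nonneg b)]
      exact Real.rpow_le_rpow (abs_nonneg _) ha hr0
    rw [abs_le, hC]
    constructor <;> nlinarith [abs_rpow_nonneg (a+b) r, mul_nonneg hε.le har]
  · -- |b| < δ|a|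
    have h1 : |a + b| ≤ (1 + δ) * |a| := by
      have h := abs_add_le a b
      nlinarith [abs_nonneg a]
    have h2 : (1 - δ) * |a| ≤ |a + b| := by
      have h : |a| ≤ |a + b| + |b| := by
        have := abs_add_le (a + b) (-b)
        simpa using this
      nlinarith
    have h1' : |a + b| ^ r ≤ (1 + δ) ^ r * |a| ^ r := by
      rw [← Real.mul_rpow (by positivity) (abs_nonneg a)]
      exact Real.rpow_le_rpow (abs_nonneg _) h1 hr0
    have h2' : (1 - δ) ^ r * |a| ^ r ≤ |a + b| ^ r := by
      rw [← Real.mul_rpow (by linarith) (abs_nonneg a)]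
      exact Real.rpow_le_rpow (mul_nonneg (by linarith) (abs_nonneg a)) h2 hr0
    have h3 : |a| ^ r ≤ (1 + δ) ^ r * |a| ^ r := by
      nlinarith [Real.one_le_rpow (by linarith : (1:ℝ) ≤ 1 + δ) hr0]
    have h4 : (1 - δ) ^ r * |a| ^ r ≤ |a| ^ r := by
      nlinarith [Real.rpow_le_one (by linarith : (0:ℝ) ≤ 1 - δ) (by linarith) hr0]
    have hkey : ((1 + δ) ^ r - (1 - δ) ^ r) * |a| ^ r ≤ ε * |a| ^ r :=
      mul_le_mul_of_nonneg_right hδε.le har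
    have hCnn : 0 ≤ C * |b| ^ r := mul_nonneg (by rw [hC]; positivity) hbr
    rw [abs_le]
    constructor <;> nlinarith

lemma phi_ineq {p q : ℝ} (hp : 1 ≤ p) (hq : 1 ≤ q) {ε : ℝ} (hε : 0 < ε) :
    ∃ C : ℝ, 0 < C ∧ ∀ a b : ℝ,
      abs ((|a + b| ^ p + |a + b| ^ q) - (|a| ^ p + |a| ^ q)) ≤
        ε * (|a| ^ p + |a| ^ q) + C * (|b| ^ p + |b| ^ q) := by
  obtain ⟨Cp, hCp, hCp'⟩ := key_ineq hp hε
  obtain ⟨Cq, hCq, hCq'⟩ := key_ineq hq hε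
  refine ⟨Cp + Cq, by linarith, fun a b => ?_⟩
  have h1 := hCp' a b
  have h2 := hCq' a b
  have h3 := abs_add_le (|a+b|^p - |a|^p) (|a+b|^q - |a|^q)
  have e : (|a + b| ^ p + |a + b| ^ q) - (|a| ^ p + |a| ^ q) =
      (|a+b|^p - |a|^p) + (|a+b|^q - |a|^q) := by ring
  rw [e]
  have n1 : 0 ≤ Cq * |b| ^ p := mul_nonneg hCq.le (abs_rpow_nonneg b p)
  have n2 : 0 ≤ Cp * |b| ^ q := mul_nonneg hCp.le (abs_rpow_nonneg b q)
  linarith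

lemma rpow_sub_le {r : ℝ} (hr : 1 ≤ r) (a b : ℝ) :
    |a - b| ^ r ≤ 2 ^ r * (|a| ^ r + |b| ^ r) := by
  have hr0 : (0:ℝ) ≤ r := by linarith
  have h : |a - b| ≤ 2 * max |a| |b| := by
    have h1 : |a - b| ≤ |a| + |b| := abs_sub a b
    have h2 := le_max_left |a| |b|
    have h3 := le_max_right |a| |b|
    linarith
  calc |a - b| ^ r ≤ (2 * max |a| |b|) ^ r :=
        Real.rpow_le_rpow (abs_nonneg _) h hr0
    _ = 2 ^ r * (max |a| |b|) ^ r := by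
        rw [Real.mul_rpow (by norm_num) (le_max_of_le_left (abs_nonneg a))]
    _ ≤ 2 ^ r * (|a| ^ r + |b| ^ r) := by
        apply mul_le_mul_of_nonneg_left _ (Real.rpow_nonneg (by norm_num) r)
        rcases le_total |a| |b| with h | h
        · rw [max_eq_right h]; nlinarith [abs_rpow_nonneg a r]
        · rw [max_eq_left h]; nlinarith [abs_rpow_nonneg b r]

theorem stmt7 (N : ℕ) (hN : 1 ≤ N) (p q : ℝ) (hp : 1 ≤ p) (hq : 1 ≤ q)
    (W : EuclideanSpace ℝ (Fin N) → ℝ) (hW : Measurable W) (hW0 : ∀ x, 0 ≤ W x)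
    (u : ℕ → EuclideanSpace ℝ (Fin N) → ℝ) (v : EuclideanSpace ℝ (Fin N) → ℝ)
    (hu : ∀ n, Measurable (u n)) (hv : Measurable v)
    (hae : ∀ᵐ x : EuclideanSpace ℝ (Fin N), Tendsto (fun n => u n x) atTop (𝓝 (v x)))
    (hbdd : (⨆ n, ∫⁻ x : EuclideanSpace ℝ (Fin N),
        ENNReal.ofReal (W x * (|u n x| ^ p + |u n x| ^ q))) < ⊤) :
    Tendsto (fun n =>
        (∫ x : EuclideanSpace ℝ (Fin N), W x * (|u n x - v x| ^ p + |u n x - v x| ^ q))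
      - (∫ x : EuclideanSpace ℝ (Fin N), W x * (|u n x| ^ p + |u n x| ^ q))
      + ∫ x : EuclideanSpace ℝ (Fin N), W x * (|v x| ^ p + |v x| ^ q)) atTop (𝓝 0) := by
  set Φ : ℝ → ℝ := fun t => |t| ^ p + |t| ^ q with hΦ
  have hΦc : Continuous Φ := (cont_abs_rpow hp).add (cont_abs_rpow hq)
  have hΦ0 : Φ 0 = 0 := by
    simp [hΦ, Real.zero_rpow (by linarith : p ≠ 0), Real.zero_rpow (by linarith : q ≠ 0)]
  have hΦnn : ∀ t, 0 ≤ Φ t := fun t =>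
    add_nonneg (abs_rpow_nonneg t p) (abs_rpow_nonneg t q)
  have measWΦ : ∀ w : EuclideanSpace ℝ (Fin N) → ℝ, Measurable w →
      Measurable (fun x => W x * Φ (w x)) := fun w hw => by
    exact hW.mul (hΦc.measurable.comp hw)
  have nnWΦ : ∀ (w : EuclideanSpace ℝ (Fin N) → ℝ) (x : EuclideanSpace ℝ (Fin N)),
      0 ≤ W x * Φ (w x) := fun w x => mul_nonneg (hW0 x) (hΦnn _)
  set S : ℝ≥0∞ := ⨆ n, ∫⁻ x : EuclideanSpace ℝ (Fin N),
      ENNReal.ofReal (W x * Φ (u n x)) with hS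
  have hSn : ∀ n, (∫⁻ x : EuclideanSpace ℝ (Fin N), ENNReal.ofReal (W x * Φ (u n x))) ≤ S :=
    fun n => le_iSup (fun n => ∫⁻ x : EuclideanSpace ℝ (Fin N),
      ENNReal.ofReal (W x * Φ (u n x))) n
  -- Fatou for v
  have hlv : (∫⁻ x : EuclideanSpace ℝ (Fin N), ENNReal.ofReal (W x * Φ (v x))) ≤ S := by
    have hcongr : ∀ᵐ x : EuclideanSpace ℝ (Fin N), ENNReal.ofReal (W x * Φ (v x)) =
        liminf (fun n => ENNReal.ofReal (W x * Φ (u n x))) atTop := by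
      filter_upwards [hae] with x hx
      have h : Tendsto (fun n => ENNReal.ofReal (W x * Φ (u n x))) atTop
          (𝓝 (ENNReal.ofReal (W x * Φ (v x)))) := by
        exact (ENNReal.continuous_ofReal.tendsto _).comp
          (((hΦc.tendsto _).comp hx).const_mul (W x))
      exact h.liminf_eq.symm
    calc (∫⁻ x : EuclideanSpace ℝ (Fin N), ENNReal.ofReal (W x * Φ (v x)))
        = ∫⁻ x : EuclideanSpace ℝ (Fin N),
            liminf (fun n => ENNReal.ofReal (W x * Φ (u n x))) atTop :=
          lintegral_congr_ae hcongr
      _ ≤ liminf (fun n => ∫⁻ x : EuclideanSpace ℝ (Fin N),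
            ENNReal.ofReal (W x * Φ (u n x))) atTop :=
          lintegral_liminf_le fun n => (measWΦ (u n) (hu n)).ennreal_ofReal
      _ ≤ liminf (fun _ => S) atTop := liminf_le_liminf (Eventually.of_forall hSn)
      _ = S := liminf_const S
  have int_of_lt : ∀ w : EuclideanSpace ℝ (Fin N) → ℝ, Measurable w →
      (∫⁻ x : EuclideanSpace ℝ (Fin N), ENNReal.ofReal (W x * Φ (w x))) < ⊤ →
      Integrable (fun x => W x * Φ (w x)) := fun w hw h =>
    ⟨(measWΦ w hw).aestronglyMeasurable,
      (hasFiniteIntegral_iff_ofReal (Eventually.of_forall (nnWΦ w))).2 h⟩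
  have hIv : Integrable (fun x => W x * Φ (v x)) := int_of_lt v hv (lt_of_le_of_lt hlv hbdd)
  have hIun : ∀ n, Integrable (fun x => W x * Φ (u n x)) :=
    fun n => int_of_lt (u n) (hu n) (lt_of_le_of_lt (hSn n) hbdd)
  set K : ℝ := 2 ^ p + 2 ^ q with hK
  have hK0 : 0 < K := by rw [hK]; positivity
  have hpt : ∀ a b : ℝ, Φ (a - b) ≤ K * (Φ a + Φ b) := by
    intro a b
    have h1 := rpow_sub_le hp a b
    have h2 := rpow_sub_le hq a b
    have e1 : (0:ℝ) ≤ 2 ^ p := by positivity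
    have e2 : (0:ℝ) ≤ 2 ^ q := by positivity
    simp only [hΦ, hK]
    nlinarith [mul_nonneg e1 (abs_rpow_nonneg a q), mul_nonneg e1 (abs_rpow_nonneg b q),
      mul_nonneg e2 (abs_rpow_nonneg a p), mul_nonneg e2 (abs_rpow_nonneg b p)]
  have hptW : ∀ (n : ℕ) (x : EuclideanSpace ℝ (Fin N)),
      W x * Φ (u n x - v x) ≤ K * (W x * Φ (u n x) + W x * Φ (v x)) := by
    intro n x
    calc W x * Φ (u n x - v x) ≤ W x * (K * (Φ (u n x) + Φ (v x))) :=
          mul_le_mul_of_nonneg_left (hpt _ _) (hW0 x)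
      _ = K * (W x * Φ (u n x) + W x * Φ (v x)) := by ring
  have hIdiff : ∀ n, Integrable (fun x => W x * Φ (u n x - v x)) := by
    intro n
    have hKint : Integrable (fun x => K * (W x * Φ (u n x) + W x * Φ (v x))) := by
      exact ((hIun n).add hIv).const_mul K
    refine Integrable.mono' hKint
      ((measWΦ (fun x => u n x - v x) ((hu n).sub hv)).aestronglyMeasurable)
      (Eventually.of_forall fun x => ?_)
    rw [Real.norm_eq_abs, abs_of_nonneg (nnWΦ (fun y => u n y - v y) x)]
    exact hptW n x
  set B : ℝ := S.toReal with hB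
  have hBn : ∀ n, (∫ x : EuclideanSpace ℝ (Fin N), W x * Φ (u n x)) ≤ B := by
    intro n
    rw [integral_eq_lintegral_of_nonneg_ae (Eventually.of_forall (nnWΦ (u n)))
      (measWΦ (u n) (hu n)).aestronglyMeasurable]
    exact ENNReal.toReal_mono hbdd.ne (hSn n)
  have hB0 : 0 ≤ B := ENNReal.toReal_nonneg
  set Iv : ℝ := ∫ x : EuclideanSpace ℝ (Fin N), W x * Φ (v x) with hIvdef
  have hIv0 : 0 ≤ Iv := integral_nonneg (nnWΦ v)
  have hdiff_bound : ∀ n,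
      (∫ x : EuclideanSpace ℝ (Fin N), W x * Φ (u n x - v x)) ≤ K * (B + Iv) := by
    intro n
    have hKint : Integrable (fun x => K * (W x * Φ (u n x) + W x * Φ (v x))) := by
      exact ((hIun n).add hIv).const_mul K
    calc (∫ x : EuclideanSpace ℝ (Fin N), W x * Φ (u n x - v x))
        ≤ ∫ x : EuclideanSpace ℝ (Fin N), K * (W x * Φ (u n x) + W x * Φ (v x)) :=
          integral_mono (hIdiff n) hKint (hptW n)
      _ = K * ((∫ x : EuclideanSpace ℝ (Fin N), W x * Φ (u n x)) + Iv) := by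
          rw [integral_const_mul, integral_add (hIun n) hIv]
      _ ≤ K * (B + Iv) := by
          apply mul_le_mul_of_nonneg_left _ hK0.le
          linarith [hBn n]
  have hDn : ∀ n, (∫ x : EuclideanSpace ℝ (Fin N), W x * Φ (u n x - v x))
      - (∫ x : EuclideanSpace ℝ (Fin N), W x * Φ (u n x)) + Iv
      = ∫ x : EuclideanSpace ℝ (Fin N),
          (W x * Φ (u n x - v x) - W x * Φ (u n x) + W x * Φ (v x)) := by
    intro n
    have h1 : Integrable (fun x : EuclideanSpace ℝ (Fin N) =>
        W x * Φ (u n x - v x) - W x * Φ (u n x)) := (hIdiff n).sub (hIun n)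
    rw [integral_add h1 hIv, integral_sub (hIdiff n) (hIun n)]
  set f : ℕ → EuclideanSpace ℝ (Fin N) → ℝ :=
    fun n x => W x * Φ (u n x - v x) - W x * Φ (u n x) + W x * Φ (v x) with hf
  have hfmeas : ∀ n, Measurable (f n) := fun n => by
    exact ((measWΦ (fun x => u n x - v x) ((hu n).sub hv)).sub
      (measWΦ (u n) (hu n))).add (measWΦ v hv)
  have hfint : ∀ n, Integrable (f n) := fun n => by
    exact ((hIdiff n).sub (hIun n)).add hIv
  have hgoal : Tendsto (fun n => ∫ x : EuclideanSpace ℝ (Fin N), f n x) atTop (𝓝 0) := by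
    rw [NormedAddCommGroup.tendsto_nhds_zero]
    intro ε' hε'
    set R : ℝ := K * (B + Iv) + 1 with hR
    have hR0 : 0 < R := by nlinarith
    set ε : ℝ := ε' / (2 * R) with hεdef
    have hε : 0 < ε := by positivity
    obtain ⟨C, hC0, hC⟩ := phi_ineq hp hq hε
    set g : ℕ → EuclideanSpace ℝ (Fin N) → ℝ :=
      fun n x => max (|f n x| - ε * (W x * Φ (u n x - v x))) 0 with hg
    have hgnn : ∀ n x, 0 ≤ g n x := fun n x => le_max_right _ _
    have habs : ∀ n x, |f n x| ≤ ε * (W x * Φ (u n x - v x)) + (C + 1) * (W x * Φ (v x)) := by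
      intro n x
      have key : |Φ (u n x) - Φ (u n x - v x)| ≤ ε * Φ (u n x - v x) + C * Φ (v x) := by
        have h := hC (u n x - v x) (v x)
        rwa [sub_add_cancel] at h
      have hfx : f n x = W x * (Φ (u n x - v x) - Φ (u n x) + Φ (v x)) := by
        simp only [hf]; ring
      rw [hfx, abs_mul, abs_of_nonneg (hW0 x)]
      have h2 : |Φ (u n x - v x) - Φ (u n x) + Φ (v x)| ≤
          ε * Φ (u n x - v x) + (C + 1) * Φ (v x) := by
        have h3 := abs_add_le (Φ (u n x - v x) - Φ (u n x)) (Φ (v x))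
        have e : |Φ (u n x - v x) - Φ (u n x)| = |Φ (u n x) - Φ (u n x - v x)| :=
          abs_sub_comm _ _
        rw [abs_of_nonneg (hΦnn (v x)), e] at h3
        linarith [key]
      calc W x * |Φ (u n x - v x) - Φ (u n x) + Φ (v x)|
          ≤ W x * (ε * Φ (u n x - v x) + (C + 1) * Φ (v x)) :=
            mul_le_mul_of_nonneg_left h2 (hW0 x)
        _ = ε * (W x * Φ (u n x - v x)) + (C + 1) * (W x * Φ (v x)) := by ring
    have hgle : ∀ n x, g n x ≤ (C + 1) * (W x * Φ (v x)) := by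
      intro n x
      refine max_le (by linarith [habs n x]) ?_
      exact mul_nonneg (by linarith) (nnWΦ v x)
    have hgmeas : ∀ n, Measurable (g n) := fun n => by
      exact ((hfmeas n).abs.sub
        ((measWΦ (fun x => u n x - v x) ((hu n).sub hv)).const_mul ε)).max measurable_const
    have hgint : ∀ n, Integrable (g n) := by
      intro n
      refine Integrable.mono' (hIv.const_mul (C + 1)) (hgmeas n).aestronglyMeasurable
        (Eventually.of_forall fun x => ?_)
      rw [Real.norm_eq_abs, abs_of_nonneg (hgnn n x)]
      exact hgle n x
    have hgtend : ∀ᵐ x : EuclideanSpace ℝ (Fin N), Tendsto (fun n => g n x) atTop (𝓝 0) := by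
      filter_upwards [hae] with x hx
      have h1 : Tendsto (fun n => u n x - v x) atTop (𝓝 0) := by
        simpa using hx.sub (tendsto_const_nhds (x := v x))
      have h2 : Tendsto (fun n => Φ (u n x - v x)) atTop (𝓝 0) := by
        have h := (hΦc.tendsto 0).comp h1
        rwa [hΦ0] at h
      have h3 : Tendsto (fun n => Φ (u n x)) atTop (𝓝 (Φ (v x))) := (hΦc.tendsto _).comp hx
      have h4 : Tendsto (fun n => f n x) atTop (𝓝 0) := by
        have h := ((h2.const_mul (W x)).sub (h3.const_mul (W x))).add
          (tendsto_const_nhds (x := W x * Φ (v x)))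
        simp only [hf]
        convert h using 2
        ring
      have h5 : Tendsto (fun n => g n x) atTop
          (𝓝 (max (|(0:ℝ)| - ε * (W x * 0)) 0)) := by
        exact (h4.abs.sub ((h2.const_mul (W x)).const_mul ε)).max tendsto_const_nhds
      simpa using h5
    have hgDCT : Tendsto (fun n => ∫ x : EuclideanSpace ℝ (Fin N), g n x) atTop (𝓝 0) := by
      have h := tendsto_integral_of_dominated_convergence
        (fun x => (C + 1) * (W x * Φ (v x)))
        (fun n => (hgmeas n).aestronglyMeasurable)
        (hIv.const_mul (C + 1))
        (fun n => Eventually.of_forall fun x => by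
          rw [Real.norm_eq_abs, abs_of_nonneg (hgnn n x)]; exact hgle n x)
        hgtend
      simpa using h
    have hev : ∀ᶠ n in atTop, (∫ x : EuclideanSpace ℝ (Fin N), g n x) < ε' / 2 :=
      hgDCT.eventually_lt_const (by positivity)
    filter_upwards [hev] with n hn
    have hnorm : ‖∫ x : EuclideanSpace ℝ (Fin N), f n x‖ ≤
        (∫ x : EuclideanSpace ℝ (Fin N), g n x) + ε * (K * (B + Iv)) := by
      have hint2 : Integrable (fun x : EuclideanSpace ℝ (Fin N) =>
          g n x + ε * (W x * Φ (u n x - v x))) := by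
        exact (hgint n).add ((hIdiff n).const_mul ε)
      calc ‖∫ x : EuclideanSpace ℝ (Fin N), f n x‖
          ≤ ∫ x : EuclideanSpace ℝ (Fin N), ‖f n x‖ := norm_integral_le_integral_norm _
        _ = ∫ x : EuclideanSpace ℝ (Fin N), |f n x| := by simp [Real.norm_eq_abs]
        _ ≤ ∫ x : EuclideanSpace ℝ (Fin N), (g n x + ε * (W x * Φ (u n x - v x))) := by
            refine integral_mono (hfint n).abs hint2 fun x => ?_
            have h := le_max_left (|f n x| - ε * (W x * Φ (u n x - v x))) 0
            simp only [hg] at *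
            linarith
        _ = (∫ x : EuclideanSpace ℝ (Fin N), g n x)
            + ε * ∫ x : EuclideanSpace ℝ (Fin N), W x * Φ (u n x - v x) := by
            rw [integral_add (hgint n) ((hIdiff n).const_mul ε), integral_const_mul]
        _ ≤ (∫ x : EuclideanSpace ℝ (Fin N), g n x) + ε * (K * (B + Iv)) := by
            have h := mul_le_mul_of_nonneg_left (hdiff_bound n) hε.le
            linarith
    have hεR : ε * (K * (B + Iv)) ≤ ε' / 2 := by
      have h1 : ε * (K * (B + Iv)) ≤ ε * R := by
        apply mul_le_mul_of_nonneg_left _ hε.le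
        rw [hR]; linarith
      have h2 : ε * R = ε' / 2 := by
        rw [hεdef]; field_simp
      exact h2 ▸ h1
    calc ‖∫ x : EuclideanSpace ℝ (Fin N), f n x‖
        ≤ (∫ x : EuclideanSpace ℝ (Fin N), g n x) + ε * (K * (B + Iv)) := hnorm
      _ < ε' / 2 + ε' / 2 := by linarith
      _ = ε' := by ring
  refine hgoal.congr fun n => ?_
  exact (hDn n).symm
end

section
/- Let 1 < p < N, set p* = Np/(N−p), and let r ∈ [p, p*). Let u_n : ℝ^N → ℝ be continuously differentiable functions with sup_n (∫_{ℝ^N} |u_n|^p dx + ∫_{ℝ^N} ‖∇u_n‖^p dx) < ∞, and suppose that for some R > 0, lim_{n → ∞} sup_{y ∈ ℝ^N} ∫_{B_R(y)} |u_n|^r dx = 0. Then for every t ∈ (p, p*), ∫_{ℝ^N} |u_n|^t dx → 0 as n → ∞. -/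
open Filter MeasureTheory Metric
open scoped Topology ENNReal NNReal

noncomputable section

/-- Hölder interpolation for lintegrals of powers. -/
lemma interp_lintegral {α : Type*} [MeasurableSpace α] (μ : Measure α)
    {w : α → ℝ≥0∞} (hw : AEMeasurable w μ) {s1 s2 a : ℝ}
    (ha : 0 < a) (ha1 : a < 1) (hs1 : 0 ≤ s1) (hs2 : 0 ≤ s2) :
    ∫⁻ x, w x ^ (a * s1 + (1 - a) * s2) ∂μ
      ≤ (∫⁻ x, w x ^ s1 ∂μ) ^ a * (∫⁻ x, w x ^ s2 ∂μ) ^ (1 - a) := by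
  have hconj : (1/a).HolderConjugate (1/(1-a)) := by
    rw [Real.holderConjugate_iff]
    constructor
    · rw [lt_div_iff₀ ha]; linarith
    · rw [one_div, one_div, inv_inv, inv_inv]; ring
  have h1a : (1:ℝ) - a ≠ 0 := by linarith
  have hf : AEMeasurable (fun x => w x ^ (a * s1)) μ := hw.pow_const _
  have hg : AEMeasurable (fun x => w x ^ ((1 - a) * s2)) μ := hw.pow_const _
  have key := ENNReal.lintegral_mul_le_Lp_mul_Lq μ hconj hf hg
  simp only [Pi.mul_apply, one_div_one_div] at key
  calc ∫⁻ x, w x ^ (a * s1 + (1 - a) * s2) ∂μ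
      = ∫⁻ x, (w x ^ (a * s1)) * (w x ^ ((1 - a) * s2)) ∂μ := by
        congr 1; ext x
        rw [ENNReal.rpow_add_of_nonneg _ _ (by positivity) (by nlinarith)]
    _ ≤ (∫⁻ x, (w x ^ (a * s1)) ^ (1/a) ∂μ) ^ a
        * (∫⁻ x, (w x ^ ((1-a) * s2)) ^ (1/(1-a)) ∂μ) ^ (1-a) := key
    _ = (∫⁻ x, w x ^ s1 ∂μ) ^ a * (∫⁻ x, w x ^ s2 ∂μ) ^ (1 - a) := by
        congr 2
        · exact lintegral_congr fun x => by
            rw [← ENNReal.rpow_mul]; congr 1; field_simp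
        · exact lintegral_congr fun x => by
            rw [← ENNReal.rpow_mul]; congr 1
            field_simp

/-- For `q ≥ 1`, `∑ aᵢ^q ≤ (∑ aᵢ)^q` in `ℝ≥0∞`. -/
lemma tsum_rpow_le {ι : Type*} [Countable ι] (a : ι → ℝ≥0∞) {q : ℝ} (hq : 1 ≤ q) :
    ∑' i, a i ^ q ≤ (∑' i, a i) ^ q := by
  have hsplit : ∀ x : ℝ≥0∞, x ^ q = x ^ (q - 1) * x := by
    intro x
    rw [show q = (q-1)+1 by ring, ENNReal.rpow_add_of_nonneg _ _ (by linarith) zero_le_one,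
      ENNReal.rpow_one]
    ring_nf
  calc ∑' i, a i ^ q ≤ ∑' i, (∑' j, a j) ^ (q - 1) * a i := by
        refine ENNReal.tsum_le_tsum fun i => ?_
        rw [hsplit]
        exact mul_le_mul_left (ENNReal.rpow_le_rpow (ENNReal.le_tsum i) (by linarith)) _
    _ = (∑' j, a j) ^ (q - 1) * ∑' i, a i := ENNReal.tsum_mul_left
    _ = (∑' j, a j) ^ q := (hsplit _).symm

/-- lattice point in Euclidean space with spacing `h`. -/
def latPt (N : ℕ) (h : ℝ) (k : Fin N → ℤ) : EuclideanSpace ℝ (Fin N) :=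
  (WithLp.equiv 2 _).symm (fun i => h * (k i : ℝ))

lemma latPt_apply (N : ℕ) (h : ℝ) (k : Fin N → ℤ) (i : Fin N) :
    latPt N h k i = h * (k i : ℝ) := rfl

lemma dist_coord_le {N : ℕ} (x y : EuclideanSpace ℝ (Fin N)) (i : Fin N) :
    dist (x i) (y i) ≤ dist x y := by
  rw [EuclideanSpace.dist_eq]
  have : dist (x i) (y i) = Real.sqrt (dist (x i) (y i) ^ 2) :=
    (Real.sqrt_sq dist_nonneg).symm
  rw [this]
  apply Real.sqrt_le_sqrt
  exact Finset.single_le_sum (f := fun j => dist (x j) (y j) ^ 2)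
    (fun j _ => sq_nonneg _) (Finset.mem_univ i)

lemma lat_cover {N : ℕ} (hN : 0 < N) {R : ℝ} (hR : 0 < R) (x : EuclideanSpace ℝ (Fin N)) :
    ∃ k : Fin N → ℤ, dist x (latPt N (R / Real.sqrt N) k) < R := by
  set h : ℝ := R / Real.sqrt N with hh
  have hsN : (0:ℝ) < Real.sqrt N := Real.sqrt_pos.mpr (by positivity)
  have hhpos : 0 < h := div_pos hR hsN
  refine ⟨fun i => round (x i / h), ?_⟩
  have hb : ∀ i : Fin N, dist (x i) (latPt N h (fun i => round (x i / h)) i) ≤ h / 2 := by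
    intro i
    rw [latPt_apply, Real.dist_eq]
    have e : x i - h * round (x i / h) = h * (x i / h - round (x i / h)) := by
      field_simp
    rw [e, abs_mul, abs_of_pos hhpos]
    calc h * |x i / h - ↑(round (x i / h))| ≤ h * (1/2) := by
          gcongr; exact abs_sub_round (x i / h)
      _ = h / 2 := by ring
  have hle : dist x (latPt N h fun i => round (x i / h)) ≤ Real.sqrt (N * (h/2)^2) := by
    rw [EuclideanSpace.dist_eq]
    apply Real.sqrt_le_sqrt
    calc ∑ i, dist (x i) (latPt N h (fun i => round (x i / h)) i) ^ 2
        ≤ ∑ _i : Fin N, (h/2)^2 := by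
          apply Finset.sum_le_sum
          intro i _
          have h1 := hb i
          have h2 : (0:ℝ) ≤ dist (x i) (latPt N h (fun i => round (x i / h)) i) := dist_nonneg
          nlinarith
      _ = N * (h/2)^2 := by simp [Finset.sum_const, mul_comm]
  refine lt_of_le_of_lt hle ?_
  have hh2 : (N:ℝ) * (h/2)^2 = (R/2)^2 := by
    rw [hh, div_pow, div_pow, Real.sq_sqrt (by positivity : (0:ℝ) ≤ (N:ℝ))]
    field_simp
  rw [hh2, Real.sqrt_sq (by positivity)]
  linarith

lemma lat_overlap {N : ℕ} (hN : 0 < N) {R : ℝ} (hR : 0 < R) (x : EuclideanSpace ℝ (Fin N)) :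
    ∑' k : Fin N → ℤ, (Metric.ball (latPt N (R / Real.sqrt N) k) (2*R)).indicator
      (fun _ => (1:ℝ≥0∞)) x ≤ ((4*N+1)^N : ℕ) := by
  classical
  set h : ℝ := R / Real.sqrt N with hh
  have hsN : (0:ℝ) < Real.sqrt N := Real.sqrt_pos.mpr (by positivity)
  have h1N : (1:ℝ) ≤ N := by exact_mod_cast hN
  have hs2 : Real.sqrt N ^ 2 = N := Real.sq_sqrt (by positivity)
  have hsN' : Real.sqrt N ≤ N := by nlinarith [hsN.le]
  have hhpos : 0 < h := div_pos hR hsN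
  set T : Finset (Fin N → ℤ) :=
    Fintype.piFinset (fun i => Finset.Icc (⌈x i / h⌉ - 2*N) (⌈x i / h⌉ + 2*N)) with hT
  have hmem : ∀ k : Fin N → ℤ, dist x (latPt N h k) < 2*R → k ∈ T := by
    intro k hk
    rw [hT, Fintype.mem_piFinset]
    intro i
    have h1 : dist (x i) (latPt N h k i) < 2*R := lt_of_le_of_lt (dist_coord_le x _ i) hk
    rw [latPt_apply, Real.dist_eq] at h1
    have h2 : |x i / h - k i| < 2 * Real.sqrt N := by
      have e1 : x i / h - (k i : ℝ) = (x i - h * k i)/h := by field_simp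
      rw [e1, abs_div, abs_of_pos hhpos, div_lt_iff₀ hhpos]
      have e2 : 2 * Real.sqrt N * h = 2 * R := by
        rw [hh]; field_simp
      rw [e2]; exact h1
    have h2' : |(k i : ℝ) - x i / h| < 2 * Real.sqrt N := by rwa [abs_sub_comm] at h2
    have hceil : |x i / h - ⌈x i / h⌉| ≤ 1 := by
      rw [abs_le]
      constructor
      · nlinarith [Int.ceil_lt_add_one (x i / h)]
      · nlinarith [Int.le_ceil (x i / h)]
    have h3 : |(k i : ℝ) - ⌈x i / h⌉| < 2*N + 1 :=
      calc |(k i:ℝ) - ⌈x i / h⌉| ≤ |(k i:ℝ) - x i/h| + |x i/h - (⌈x i/h⌉:ℝ)| :=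
            abs_sub_le _ _ _
        _ < 2*Real.sqrt N + 1 := by linarith
        _ ≤ 2*N + 1 := by linarith
    have h4 : |k i - ⌈x i / h⌉| < 2*(N:ℤ) + 1 := by
      have hc : |((k i - ⌈x i / h⌉ : ℤ) : ℝ)| < 2*(N:ℝ)+1 := by push_cast; exact h3
      exact_mod_cast hc
    rw [abs_lt] at h4
    rw [Finset.mem_Icc]
    omega
  calc ∑' k : Fin N → ℤ, (Metric.ball (latPt N h k) (2*R)).indicator (fun _ => (1:ℝ≥0∞)) x
      ≤ ∑' k : Fin N → ℤ, (if k ∈ T then (1:ℝ≥0∞) else 0) := by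
        refine ENNReal.tsum_le_tsum fun k => ?_
        by_cases hk : x ∈ Metric.ball (latPt N h k) (2*R)
        · rw [Set.indicator_of_mem hk, if_pos (hmem k (by rwa [Metric.mem_ball] at hk))]
        · rw [Set.indicator_of_notMem hk]; exact zero_le
    _ = ∑ k ∈ T, (1:ℝ≥0∞) := tsum_eq_sum (fun k hk => if_neg hk) |>.trans
        (Finset.sum_congr rfl fun k hk => if_pos hk)
    _ = (T.card : ℝ≥0∞) := by simp
    _ ≤ ((4*N+1)^N : ℕ) := by
        norm_cast
        rw [hT, Fintype.card_piFinset]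
        refine le_of_eq ?_
        calc ∏ i : Fin N, (Finset.Icc (⌈x i / h⌉ - 2*N) (⌈x i / h⌉ + 2*N)).card
            = ∏ _i : Fin N, (4*N+1) := by
              apply Finset.prod_congr rfl
              intro i _
              rw [Int.card_Icc]
              omega
          _ = (4*N+1)^N := by simp

lemma overlap_lintegral {N : ℕ} (hN : 0 < N) {R : ℝ} (hR : 0 < R)
    {g : EuclideanSpace ℝ (Fin N) → ℝ≥0∞} (hg : Measurable g) :
    ∑' k : Fin N → ℤ, ∫⁻ x in Metric.ball (latPt N (R / Real.sqrt N) k) (2*R), g x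
      ≤ ((4*N+1)^N : ℕ) * ∫⁻ x, g x := by
  have heq : ∀ k : Fin N → ℤ,
      ∫⁻ x in Metric.ball (latPt N (R / Real.sqrt N) k) (2*R), g x
      = ∫⁻ x, (Metric.ball (latPt N (R / Real.sqrt N) k) (2*R)).indicator g x :=
    fun k => (lintegral_indicator measurableSet_ball g).symm
  simp_rw [heq]
  rw [← lintegral_tsum (fun k => (hg.indicator measurableSet_ball).aemeasurable)]
  calc ∫⁻ x, ∑' k : Fin N → ℤ,
        (Metric.ball (latPt N (R / Real.sqrt N) k) (2*R)).indicator g x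
      ≤ ∫⁻ x, ((4*N+1)^N : ℕ) * g x := by
        apply lintegral_mono
        intro x
        calc ∑' k : Fin N → ℤ,
              (Metric.ball (latPt N (R / Real.sqrt N) k) (2*R)).indicator g x
            = (∑' k : Fin N → ℤ, (Metric.ball (latPt N (R / Real.sqrt N) k) (2*R)).indicator
                (fun _ => (1:ℝ≥0∞)) x) * g x := by
              rw [← ENNReal.tsum_mul_right]
              congr 1
              ext k
              by_cases hx : x ∈ Metric.ball (latPt N (R / Real.sqrt N) k) (2*R) <;>
                simp [hx]
          _ ≤ ((4*N+1)^N : ℕ) * g x := by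
              gcongr
              exact lat_overlap hN hR x
    _ = ((4*N+1)^N : ℕ) * ∫⁻ x, g x := lintegral_const_mul _ hg

/-- max comparison for rpow. -/
lemma enn_add_rpow_le (a b : ℝ≥0∞) {s : ℝ} (hs : 0 ≤ s) :
    (a + b) ^ s ≤ 2 ^ s * (a ^ s + b ^ s) := by
  have h1 : a + b ≤ 2 * (a ⊔ b) := by
    rw [two_mul]
    exact add_le_add le_sup_left le_sup_right
  calc (a + b) ^ s ≤ (2 * (a ⊔ b)) ^ s := ENNReal.rpow_le_rpow h1 hs
    _ = 2 ^ s * (a ⊔ b) ^ s := ENNReal.mul_rpow_of_nonneg _ _ hs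
    _ ≤ 2 ^ s * (a ^ s + b ^ s) := by
      gcongr
      rcases le_total a b with h | h
      · rw [sup_eq_right.mpr h]
        exact le_add_self
      · rw [sup_eq_left.mpr h]
        exact self_le_add_right _ _

/-- Local Sobolev inequality via cutoff, with constant uniform over centers. -/
lemma local_sobolev (N : ℕ) (p : ℝ) (hp : 1 < p) (hpN : p < (N : ℝ))
    {R : ℝ} (hR : 0 < R) :
    ∃ K : ℝ≥0∞, K ≠ ⊤ ∧ ∀ (f : EuclideanSpace ℝ (Fin N) → ℝ), ContDiff ℝ 1 f →
      ∀ c : EuclideanSpace ℝ (Fin N),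
      ∫⁻ x in ball c R, ((‖f x‖₊ : ℝ≥0∞)) ^ ((N:ℝ) * p / ((N:ℝ) - p))
        ≤ K * (∫⁻ x in ball c (2*R),
            ((‖f x‖₊ : ℝ≥0∞) ^ p + (‖fderiv ℝ f x‖₊ : ℝ≥0∞) ^ p))
              ^ (((N:ℝ) * p / ((N:ℝ) - p)) / p) := by
  have hp0 : (0:ℝ) < p := by linarith
  have hN0 : (0:ℝ) < N := lt_trans hp0 hpN
  have hNp : (0:ℝ) < (N:ℝ) - p := by linarith
  set q : ℝ := (N:ℝ) * p / ((N:ℝ) - p) with hq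
  have hq0 : 0 < q := by positivity
  have hpq : p < q := by
    rw [hq, lt_div_iff₀ hNp]
    nlinarith
  -- the bump function at the origin
  set φ : ContDiffBump (0 : EuclideanSpace ℝ (Fin N)) := ⟨R, 3/2*R, hR, by linarith⟩ with hφ
  obtain ⟨K0, hK0⟩ : ∃ C : ℝ, ∀ x : EuclideanSpace ℝ (Fin N), ‖fderiv ℝ (⇑φ) x‖ ≤ C :=
    Continuous.bounded_above_of_compact_support
      ((φ.contDiff (n := (⊤:ℕ∞))).continuous_fderiv (by norm_num))
      (φ.hasCompactSupport.fderiv ℝ)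
  have hK0' : (0:ℝ) ≤ K0 := le_trans (norm_nonneg (fderiv ℝ (⇑φ) 0)) (hK0 0)
  -- NNReal exponents
  set pn : ℝ≥0 := p.toNNReal with hpn
  set qn : ℝ≥0 := q.toNNReal with hqn
  have hpnc : (pn : ℝ) = p := Real.coe_toNNReal _ hp0.le
  have hqnc : (qn : ℝ) = q := Real.coe_toNNReal _ hq0.le
  have hpn1 : 1 ≤ pn := by
    rw [← Real.toNNReal_one]
    exact Real.toNNReal_mono hp.le
  have hqn0 : qn ≠ 0 := by
    intro h
    rw [← hqnc, h] at hq0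
    simp at hq0
  set C : ℝ≥0 := eLpNormLESNormFDerivOfEqInnerConst
    (volume : Measure (EuclideanSpace ℝ (Fin N))) (pn : ℝ) with hC
  refine ⟨(C : ℝ≥0∞) ^ q * ((2:ℝ≥0∞) ^ p * (1 + ENNReal.ofReal K0 ^ p)) ^ (q / p), ?_, ?_⟩
  · apply ENNReal.mul_ne_top
    · exact (ENNReal.rpow_ne_top_of_nonneg hq0.le ENNReal.coe_ne_top)
    · refine ENNReal.rpow_ne_top_of_nonneg (by positivity) ?_
      apply ENNReal.mul_ne_top
      · exact ENNReal.rpow_ne_top_of_nonneg hp0.le (by norm_num)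
      · exact ENNReal.add_ne_top.mpr ⟨by norm_num,
          ENNReal.rpow_ne_top_of_nonneg hp0.le ENNReal.ofReal_ne_top⟩
  intro f hf c
  -- the translated cutoff
  set φc : EuclideanSpace ℝ (Fin N) → ℝ := fun x => φ (x - c) with hφc
  have hφc_smooth : ContDiff ℝ 1 φc :=
    (φ.contDiff (n := (1:ℕ∞))).comp (contDiff_id.sub contDiff_const)
  have hφc_diff : Differentiable ℝ φc := hφc_smooth.differentiable one_ne_zero
  have hφc_fderiv : ∀ x, fderiv ℝ φc x
      = fderiv ℝ (⇑φ) (x - c) := by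
    intro x
    have h1 : HasFDerivAt (⇑φ)
        (fderiv ℝ (⇑φ) (x - c)) (x - c) :=
      (((φ.contDiff (n := (1:ℕ∞))).differentiable (by simp)) (x - c)).hasFDerivAt
    have h2 : HasFDerivAt (fun y : EuclideanSpace ℝ (Fin N) => y - c)
        (ContinuousLinearMap.id ℝ _) x := (hasFDerivAt_id x).sub_const c
    have := (h1.comp x h2).fderiv
    simp at this; exact this
  have hφc_bound : ∀ x, ‖fderiv ℝ φc x‖ ≤ K0 := fun x => (hφc_fderiv x) ▸ hK0 (x - c)
  have hφc_one : ∀ x ∈ closedBall c R, φc x = 1 := by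
    intro x hx
    apply φ.one_of_mem_closedBall
    simpa [dist_eq_norm] using (mem_closedBall.mp hx)
    
  have hφc_zero : ∀ x, x ∉ ball c (3/2*R) → φc x = 0 := by
    intro x hx
    rw [hφc]
    by_contra h
    have : x - c ∈ Function.support (⇑φ) := h
    rw [φ.support_eq] at this
    apply hx
    simp only [mem_ball] at this ⊢
    simpa [dist_eq_norm] using this
  have hφc_fzero : ∀ x, x ∉ ball c (2*R) → fderiv ℝ φc x = 0 := by
    intro x hx
    rw [hφc_fderiv]
    by_contra h
    have hsupp : x - c ∈ Function.support (fderiv ℝ (⇑φ)) := h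
    have := support_fderiv_subset ℝ hsupp
    have h2 : x - c ∈ closedBall (0 : EuclideanSpace ℝ (Fin N)) (3/2*R) := by
      have : tsupport (⇑φ) ⊆ closedBall 0 (3/2*R) := by
        rw [tsupport, φ.support_eq]
        exact closure_ball_subset_closedBall
      exact this ‹_›
    apply hx
    simp only [mem_closedBall, mem_ball] at h2 ⊢
    have : dist x c ≤ 3/2*R := by simpa [dist_eq_norm] using h2
    linarith
  -- the cutoff function v
  set v : EuclideanSpace ℝ (Fin N) → ℝ := fun x => φc x * f x with hv
  have hv_smooth : ContDiff ℝ 1 v := hφc_smooth.mul hf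
  have hv_supp : HasCompactSupport v := by
    apply HasCompactSupport.intro (isCompact_closedBall c (3/2*R))
    intro x hx
    have : x ∉ ball c (3/2*R) := fun h => hx (ball_subset_closedBall h)
    simp [hv, hφc_zero x this]
  -- Sobolev inequality
  have hp' : ((qn : ℝ))⁻¹ = ((pn : ℝ))⁻¹
      - ((Module.finrank ℝ (EuclideanSpace ℝ (Fin N)) : ℝ))⁻¹ := by
    rw [finrank_euclideanSpace_fin, hpnc, hqnc, hq]
    rw [inv_div]
    field_simp
  have hfinrank : 0 < Module.finrank ℝ (EuclideanSpace ℝ (Fin N)) := by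
    rw [finrank_euclideanSpace_fin]
    exact_mod_cast hN0
  have hsob := eLpNorm_le_eLpNorm_fderiv_of_eq_inner
    (volume : Measure (EuclideanSpace ℝ (Fin N))) hv_smooth hv_supp hpn1 hfinrank
    (by push_cast at hp' ⊢; exact hp')
  -- convert to lintegrals
  have hLHS : ∫⁻ x, (‖v x‖₊ : ℝ≥0∞) ^ q = eLpNorm v qn volume ^ q := by
    rw [← hqnc]; exact (eLpNorm_nnreal_pow_eq_lintegral (f := v) (μ := volume) hqn0).symm
  have hpn0 : pn ≠ 0 := by
    intro h0
    rw [← hpnc, h0] at hp0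
    simp at hp0
  have hRHS : eLpNorm (fderiv ℝ v) pn volume ^ q
      = (∫⁻ x, (‖fderiv ℝ v x‖₊ : ℝ≥0∞) ^ p) ^ (q / p) := by
    have hA : eLpNorm (fderiv ℝ v) pn volume ^ p
        = ∫⁻ x, (‖fderiv ℝ v x‖₊ : ℝ≥0∞) ^ p := by
      rw [← hpnc]
      exact eLpNorm_nnreal_pow_eq_lintegral hpn0
    rw [← hA, ← ENNReal.rpow_mul]
    congr 1
    field_simp
  -- pointwise bound on the derivative of v
  set D' : ℝ≥0∞ := 2 ^ p * (1 + ENNReal.ofReal K0 ^ p) with hD'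
  have hD'top : D' ≠ ⊤ := by
    apply ENNReal.mul_ne_top
    · exact ENNReal.rpow_ne_top_of_nonneg hp0.le (by norm_num)
    · exact ENNReal.add_ne_top.mpr ⟨by norm_num,
        ENNReal.rpow_ne_top_of_nonneg hp0.le ENNReal.ofReal_ne_top⟩
  have hfd : ∀ x, fderiv ℝ v x = φc x • fderiv ℝ f x + f x • fderiv ℝ φc x := by
    intro x
    exact fderiv_mul (hφc_diff x) ((hf.differentiable one_ne_zero) x)
  have hpoint : ∀ x, (‖fderiv ℝ v x‖₊ : ℝ≥0∞) ^ p
      ≤ (ball c (2*R)).indicator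
          (fun x => D' * ((‖f x‖₊ : ℝ≥0∞) ^ p + (‖fderiv ℝ f x‖₊ : ℝ≥0∞) ^ p)) x := by
    intro x
    by_cases hx : x ∈ ball c (2*R)
    · rw [Set.indicator_of_mem hx]
      have hb1 : ‖fderiv ℝ v x‖ ≤ ‖fderiv ℝ f x‖ + K0 * ‖f x‖ := by
        rw [hfd x]
        calc ‖φc x • fderiv ℝ f x + f x • fderiv ℝ φc x‖
            ≤ ‖φc x • fderiv ℝ f x‖ + ‖f x • fderiv ℝ φc x‖ := norm_add_le _ _
          _ = |φc x| * ‖fderiv ℝ f x‖ + |f x| * ‖fderiv ℝ φc x‖ := by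
              rw [norm_smul, norm_smul]; norm_num
          _ ≤ 1 * ‖fderiv ℝ f x‖ + ‖f x‖ * K0 := by
              have h1 : |φc x| ≤ 1 := by
                have h0 : (0:ℝ) ≤ φc x := φ.nonneg
                rw [abs_of_nonneg h0]
                exact φ.le_one
              have h2 : |f x| = ‖f x‖ := (Real.norm_eq_abs _).symm
              rw [h2]
              exact add_le_add (mul_le_mul_of_nonneg_right h1 (norm_nonneg _))
                (mul_le_mul_of_nonneg_left (hφc_bound x) (norm_nonneg _))
          _ = ‖fderiv ℝ f x‖ + K0 * ‖f x‖ := by ring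
      have hb2 : (‖fderiv ℝ v x‖₊ : ℝ≥0∞)
          ≤ (‖fderiv ℝ f x‖₊ : ℝ≥0∞) + ENNReal.ofReal K0 * (‖f x‖₊ : ℝ≥0∞) := by
        have : (‖fderiv ℝ v x‖₊ : ℝ≥0∞) = ENNReal.ofReal ‖fderiv ℝ v x‖ :=
          (ofReal_norm_eq_enorm _).symm
        rw [this]
        calc ENNReal.ofReal ‖fderiv ℝ v x‖
            ≤ ENNReal.ofReal (‖fderiv ℝ f x‖ + K0 * ‖f x‖) := ENNReal.ofReal_le_ofReal hb1
          _ = ENNReal.ofReal ‖fderiv ℝ f x‖ + ENNReal.ofReal (K0 * ‖f x‖) := by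
              rw [ENNReal.ofReal_add (norm_nonneg _) (by positivity)]
          _ = (‖fderiv ℝ f x‖₊ : ℝ≥0∞) + ENNReal.ofReal K0 * (‖f x‖₊ : ℝ≥0∞) := by
              simp only [ofReal_norm_eq_enorm, ENNReal.ofReal_mul hK0', enorm_eq_nnnorm]
      calc (‖fderiv ℝ v x‖₊ : ℝ≥0∞) ^ p
          ≤ ((‖fderiv ℝ f x‖₊ : ℝ≥0∞) + ENNReal.ofReal K0 * (‖f x‖₊ : ℝ≥0∞)) ^ p :=
            ENNReal.rpow_le_rpow hb2 hp0.le
        _ ≤ 2 ^ p * ((‖fderiv ℝ f x‖₊ : ℝ≥0∞) ^ p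
              + (ENNReal.ofReal K0 * (‖f x‖₊ : ℝ≥0∞)) ^ p) := enn_add_rpow_le _ _ hp0.le
        _ = 2 ^ p * ((‖fderiv ℝ f x‖₊ : ℝ≥0∞) ^ p
              + ENNReal.ofReal K0 ^ p * (‖f x‖₊ : ℝ≥0∞) ^ p) := by
            rw [ENNReal.mul_rpow_of_nonneg _ _ hp0.le]
        _ ≤ D' * ((‖f x‖₊ : ℝ≥0∞) ^ p + (‖fderiv ℝ f x‖₊ : ℝ≥0∞) ^ p) := by
            rw [hD', mul_assoc]
            gcongr
            have expand : (1 + ENNReal.ofReal K0 ^ p)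
                * ((‖f x‖₊ : ℝ≥0∞) ^ p + (‖fderiv ℝ f x‖₊ : ℝ≥0∞) ^ p)
                = ((‖f x‖₊ : ℝ≥0∞) ^ p + (‖fderiv ℝ f x‖₊ : ℝ≥0∞) ^ p)
                  + (ENNReal.ofReal K0 ^ p * (‖f x‖₊ : ℝ≥0∞) ^ p
                    + ENNReal.ofReal K0 ^ p * (‖fderiv ℝ f x‖₊ : ℝ≥0∞) ^ p) := by ring
            rw [expand]
            exact add_le_add (le_add_self) (self_le_add_right _ _)
    · rw [Set.indicator_of_notMem hx]
      have hx' : x ∉ ball c (3/2*R) := fun h => hx (ball_subset_ball (by linarith) h)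
      have : fderiv ℝ v x = 0 := by
        rw [hfd x, hφc_zero x hx', hφc_fzero x hx]
        simp
      rw [this]
      simp [ENNReal.zero_rpow_of_pos hp0]
  -- measurability
  have hmeas : Measurable (fun x => (‖f x‖₊ : ℝ≥0∞) ^ p + (‖fderiv ℝ f x‖₊ : ℝ≥0∞) ^ p) := by
    apply Measurable.add
    · exact (hf.continuous.measurable.nnnorm.coe_nnreal_ennreal.pow_const _)
    · exact ((hf.continuous_fderiv one_ne_zero).measurable.nnnorm.coe_nnreal_ennreal.pow_const _)
  -- bound the derivative integral
  have hgrad : ∫⁻ x, (‖fderiv ℝ v x‖₊ : ℝ≥0∞) ^ p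
      ≤ D' * ∫⁻ x in ball c (2*R),
          ((‖f x‖₊ : ℝ≥0∞) ^ p + (‖fderiv ℝ f x‖₊ : ℝ≥0∞) ^ p) := by
    calc ∫⁻ x, (‖fderiv ℝ v x‖₊ : ℝ≥0∞) ^ p
        ≤ ∫⁻ x, (ball c (2*R)).indicator
            (fun x => D' * ((‖f x‖₊ : ℝ≥0∞) ^ p + (‖fderiv ℝ f x‖₊ : ℝ≥0∞) ^ p)) x :=
          lintegral_mono hpoint
      _ = ∫⁻ x in ball c (2*R),
            D' * ((‖f x‖₊ : ℝ≥0∞) ^ p + (‖fderiv ℝ f x‖₊ : ℝ≥0∞) ^ p) :=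
          lintegral_indicator measurableSet_ball _
      _ = D' * ∫⁻ x in ball c (2*R),
            ((‖f x‖₊ : ℝ≥0∞) ^ p + (‖fderiv ℝ f x‖₊ : ℝ≥0∞) ^ p) :=
          lintegral_const_mul' _ _ hD'top
  -- v agrees with f on the small ball
  have hsmall : ∫⁻ x in ball c R, ((‖f x‖₊ : ℝ≥0∞)) ^ q
      = ∫⁻ x in ball c R, ((‖v x‖₊ : ℝ≥0∞)) ^ q := by
    apply setLIntegral_congr_fun measurableSet_ball
    intro x hx
    have : φc x = 1 := hφc_one x (ball_subset_closedBall hx)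
    rw [hv]
    simp only [this, one_mul]
  calc ∫⁻ x in ball c R, ((‖f x‖₊ : ℝ≥0∞)) ^ q
      = ∫⁻ x in ball c R, ((‖v x‖₊ : ℝ≥0∞)) ^ q := hsmall
    _ ≤ ∫⁻ x, ((‖v x‖₊ : ℝ≥0∞)) ^ q := setLIntegral_le_lintegral _ _
    _ = eLpNorm v qn volume ^ q := hLHS
    _ ≤ ((C : ℝ≥0∞) * eLpNorm (fderiv ℝ v) pn volume) ^ q := by
        apply ENNReal.rpow_le_rpow _ hq0.le
        exact_mod_cast hsob
    _ = (C : ℝ≥0∞) ^ q * eLpNorm (fderiv ℝ v) pn volume ^ q :=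
        ENNReal.mul_rpow_of_nonneg _ _ hq0.le
    _ = (C : ℝ≥0∞) ^ q * (∫⁻ x, (‖fderiv ℝ v x‖₊ : ℝ≥0∞) ^ p) ^ (q / p) := by rw [hRHS]
    _ ≤ (C : ℝ≥0∞) ^ q * (D' * ∫⁻ x in ball c (2*R),
          ((‖f x‖₊ : ℝ≥0∞) ^ p + (‖fderiv ℝ f x‖₊ : ℝ≥0∞) ^ p)) ^ (q / p) := by
        exact mul_le_mul_right (ENNReal.rpow_le_rpow hgrad (by positivity)) _
    _ = (C : ℝ≥0∞) ^ q * (D' ^ (q/p) * (∫⁻ x in ball c (2*R),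
          ((‖f x‖₊ : ℝ≥0∞) ^ p + (‖fderiv ℝ f x‖₊ : ℝ≥0∞) ^ p)) ^ (q/p)) := by
        rw [ENNReal.mul_rpow_of_nonneg _ _ (by positivity : (0:ℝ) ≤ q/p)]
    _ = (C : ℝ≥0∞) ^ q * ((2:ℝ≥0∞) ^ p * (1 + ENNReal.ofReal K0 ^ p)) ^ (q / p)
          * (∫⁻ x in ball c (2*R),
            ((‖f x‖₊ : ℝ≥0∞) ^ p + (‖fderiv ℝ f x‖₊ : ℝ≥0∞) ^ p)) ^ (q / p) := by
        rw [hD', mul_assoc]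

/-- helper: if `f n ≤ (g n)^β * c` with `β > 0`, `c ≠ ⊤` and `g → 0` then `f → 0`. -/
lemma tendsto_zero_of_le_rpow_mul {f g : ℕ → ℝ≥0∞} {β : ℝ} (hβ : 0 < β)
    {c : ℝ≥0∞} (hc : c ≠ ⊤) (hfg : ∀ n, f n ≤ g n ^ β * c)
    (hg : Tendsto g atTop (𝓝 0)) : Tendsto f atTop (𝓝 0) := by
  rcases eq_or_ne c 0 with rfl | hc0
  · rw [ENNReal.tendsto_nhds_zero]
    intro ε hε
    filter_upwards with n
    exact le_trans (le_trans (hfg n) (by simp)) zero_le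
  rw [ENNReal.tendsto_nhds_zero] at hg ⊢
  intro ε hε
  rcases eq_or_ne ε ⊤ with rfl | hεtop
  · filter_upwards with n; exact le_top
  have hδ : (0:ℝ≥0∞) < (ε / c) ^ β⁻¹ :=
    ENNReal.rpow_pos (ENNReal.div_pos hε.ne' hc) (ENNReal.div_lt_top hεtop hc0).ne
  filter_upwards [hg _ hδ] with n hn
  calc f n ≤ g n ^ β * c := hfg n
    _ ≤ ((ε / c) ^ β⁻¹) ^ β * c :=
        mul_le_mul_left (ENNReal.rpow_le_rpow hn hβ.le) c
    _ = (ε / c) * c := by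
        rw [← ENNReal.rpow_mul, inv_mul_cancel₀ hβ.ne', ENNReal.rpow_one]
    _ = ε := ENNReal.div_mul_cancel hc0 hc

set_option maxHeartbeats 1000000 in
theorem stmt8 (N : ℕ) (p : ℝ) (hp : 1 < p) (hpN : p < (N : ℝ))
    (r : ℝ) (hpr : p ≤ r) (hrcrit : r < (N : ℝ) * p / ((N : ℝ) - p))
    (u : ℕ → EuclideanSpace ℝ (Fin N) → ℝ) (hu : ∀ n, ContDiff ℝ 1 (u n))
    (hbdd : (⨆ n, ((∫⁻ x : EuclideanSpace ℝ (Fin N), ENNReal.ofReal (|u n x| ^ p))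
        + ∫⁻ x : EuclideanSpace ℝ (Fin N), ENNReal.ofReal (‖fderiv ℝ (u n) x‖ ^ p))) < ⊤)
    (R : ℝ) (hR : 0 < R)
    (hvan : Tendsto (fun n => ⨆ y : EuclideanSpace ℝ (Fin N),
        ∫⁻ x in Metric.ball y R, ENNReal.ofReal (|u n x| ^ r)) atTop (𝓝 0)) :
    ∀ t : ℝ, p < t → t < (N : ℝ) * p / ((N : ℝ) - p) →
      Tendsto (fun n => ∫⁻ x : EuclideanSpace ℝ (Fin N), ENNReal.ofReal (|u n x| ^ t))
        atTop (𝓝 0) := by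
  have hp0 : (0:ℝ) < p := by linarith
  have hN0 : (0:ℝ) < N := lt_trans hp0 hpN
  have hN : 0 < N := by exact_mod_cast hN0
  have hNp : (0:ℝ) < (N:ℝ) - p := by linarith
  set q : ℝ := (N:ℝ) * p / ((N:ℝ) - p) with hqdef
  have hq0 : 0 < q := by positivity
  have hpq : p < q := by rw [hqdef, lt_div_iff₀ hNp]; nlinarith
  have hr0 : 0 < r := lt_of_lt_of_le hp0 hpr
  -- notation
  set w : ℕ → EuclideanSpace ℝ (Fin N) → ℝ≥0∞ := fun n x => (‖u n x‖₊ : ℝ≥0∞) with hw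
  set wf : ℕ → EuclideanSpace ℝ (Fin N) → ℝ≥0∞ :=
    fun n x => (‖fderiv ℝ (u n) x‖₊ : ℝ≥0∞) with hwf
  have hwmeas : ∀ n, Measurable (w n) :=
    fun n => (hu n).continuous.measurable.nnnorm.coe_nnreal_ennreal
  have hwfmeas : ∀ n, Measurable (wf n) :=
    fun n => ((hu n).continuous_fderiv one_ne_zero).measurable.nnnorm.coe_nnreal_ennreal
  have hconv : ∀ (n : ℕ) (s : ℝ), 0 ≤ s → ∀ x,
      ENNReal.ofReal (|u n x| ^ s) = w n x ^ s := by
    intro n s hs x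
    simp only [hw]
    rw [← enorm_eq_nnnorm, Real.enorm_eq_ofReal_abs, ENNReal.ofReal_rpow_of_nonneg (abs_nonneg _) hs]
  have hconvf : ∀ (n : ℕ) x, ENNReal.ofReal (‖fderiv ℝ (u n) x‖ ^ p) = wf n x ^ p := by
    intro n x
    simp only [hwf]
    rw [← enorm_eq_nnnorm, ← ofReal_norm_eq_enorm, ENNReal.ofReal_rpow_of_nonneg (norm_nonneg _) hp0.le]
  -- the global bound
  set C0 : ℝ≥0∞ := ⨆ n, ((∫⁻ x : EuclideanSpace ℝ (Fin N), ENNReal.ofReal (|u n x| ^ p))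
      + ∫⁻ x : EuclideanSpace ℝ (Fin N), ENNReal.ofReal (‖fderiv ℝ (u n) x‖ ^ p)) with hC0
  have hC0top : C0 ≠ ⊤ := hbdd.ne
  have hbound : ∀ n, ∫⁻ x, (w n x ^ p + wf n x ^ p) ≤ C0 := by
    intro n
    rw [lintegral_add_left ((hwmeas n).pow_const _)]
    have e1 : ∫⁻ x, w n x ^ p = ∫⁻ x, ENNReal.ofReal (|u n x| ^ p) :=
      lintegral_congr fun x => (hconv n p hp0.le x).symm
    have e2 : ∫⁻ x, wf n x ^ p = ∫⁻ x, ENNReal.ofReal (‖fderiv ℝ (u n) x‖ ^ p) :=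
      lintegral_congr fun x => (hconvf n x).symm
    rw [e1, e2, hC0]
    exact le_iSup (fun n => (∫⁻ x : EuclideanSpace ℝ (Fin N), ENNReal.ofReal (|u n x| ^ p))
      + ∫⁻ x : EuclideanSpace ℝ (Fin N), ENNReal.ofReal (‖fderiv ℝ (u n) x‖ ^ p)) n
  -- the vanishing quantity
  set S : ℕ → ℝ≥0∞ := fun n => ⨆ y : EuclideanSpace ℝ (Fin N),
    ∫⁻ x in ball y R, w n x ^ r with hS
  have hvan' : Tendsto S atTop (𝓝 0) := by
    have hSeq : S = fun n => ⨆ y : EuclideanSpace ℝ (Fin N),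
        ∫⁻ x in ball y R, ENNReal.ofReal (|u n x| ^ r) := by
      funext n
      rw [hS]
      exact iSup_congr fun y => lintegral_congr fun x => (hconv n r hr0.le x).symm
    rw [hSeq]
    exact hvan
  -- the covering
  set B : (Fin N → ℤ) → Set (EuclideanSpace ℝ (Fin N)) :=
    fun k => ball (latPt N (R / Real.sqrt N) k) R with hB
  have hcover_int : ∀ g : EuclideanSpace ℝ (Fin N) → ℝ≥0∞,
      ∫⁻ x, g x ≤ ∑' k, ∫⁻ x in B k, g x := by
    intro g
    have huniv : (⋃ k, B k) = Set.univ := Set.eq_univ_of_forall fun x => by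
      obtain ⟨k, hk⟩ := lat_cover hN hR x
      exact Set.mem_iUnion.mpr ⟨k, mem_ball.mpr hk⟩
    calc ∫⁻ x, g x = ∫⁻ x in ⋃ k, B k, g x := by rw [huniv, setLIntegral_univ]
      _ ≤ ∑' k, ∫⁻ x in B k, g x := lintegral_iUnion_le _ _
  set a : ℕ → (Fin N → ℤ) → ℝ≥0∞ := fun n k =>
    ∫⁻ x in ball (latPt N (R / Real.sqrt N) k) (2*R), (w n x ^ p + wf n x ^ p) with ha
  set M : ℝ≥0∞ := (((4*N+1)^N : ℕ) : ℝ≥0∞) with hM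
  have hMtop : M ≠ ⊤ := ENNReal.natCast_ne_top _
  have hMC0 : M * C0 ≠ ⊤ := ENNReal.mul_ne_top hMtop hC0top
  have hasum : ∀ n, ∑' k, a n k ≤ M * C0 := fun n =>
    le_trans (overlap_lintegral hN hR
      (((hwmeas n).pow_const _).add ((hwfmeas n).pow_const _)))
      (mul_le_mul_right (hbound n) _)
  -- the local Sobolev inequality
  obtain ⟨K, hKtop, hK⟩ := local_sobolev N p hp hpN hR
  have hlocq : ∀ n k, ∫⁻ x in B k, w n x ^ q ≤ K * a n k ^ (q / p) :=
    fun n k => hK (u n) (hu n) _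
  -- exponent arithmetic
  set α : ℝ := p / (N:ℝ) with hα
  have hα0 : 0 < α := by positivity
  have hα1 : α < 1 := by rw [hα, div_lt_one hN0]; exact hpN
  have h1α : 1 - α = p / q := by
    rw [hα, hqdef]
    have h1 : (N:ℝ) ≠ 0 := hN0.ne'
    have h2 : (N:ℝ) - p ≠ 0 := hNp.ne'
    field_simp
  set t1 : ℝ := α * r + (1 - α) * q with ht1
  have hqα : (1 - α) * q = p := by
    rw [h1α, div_mul_cancel₀ _ hq0.ne']
  have hpt1 : p < t1 := by
    rw [ht1, hqα]
    nlinarith [mul_pos hα0 hr0]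
  have ht1q : t1 < q := by
    rw [ht1]
    nlinarith [mul_pos hα0 (sub_pos.mpr hrcrit)]
  -- main estimate for exponent t1
  have hmain : ∀ n, ∫⁻ x, w n x ^ t1 ≤ S n ^ α * (K ^ (1-α) * (M * C0)) := by
    intro n
    calc ∫⁻ x, w n x ^ t1 ≤ ∑' k, ∫⁻ x in B k, w n x ^ t1 := hcover_int _
      _ ≤ ∑' k, S n ^ α * (K ^ (1-α) * a n k) := by
          refine ENNReal.tsum_le_tsum fun k => ?_
          have hint := interp_lintegral (volume.restrict (B k))
            ((hwmeas n).aemeasurable) hα0 hα1 hr0.le hq0.le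
          have h1 : ∫⁻ x in B k, w n x ^ r ≤ S n := by
            rw [hS, hB]
            exact le_iSup (fun y => ∫⁻ x in ball y R, w n x ^ r)
              (latPt N (R / Real.sqrt N) k)
          have h2 : (∫⁻ x in B k, w n x ^ q) ^ (1-α) ≤ (K * a n k ^ (q/p)) ^ (1-α) :=
            ENNReal.rpow_le_rpow (hlocq n k) (by linarith)
          calc ∫⁻ x in B k, w n x ^ t1
              = ∫⁻ x in B k, w n x ^ (α * r + (1-α) * q) := by rw [ht1]
            _ ≤ (∫⁻ x in B k, w n x ^ r) ^ α * (∫⁻ x in B k, w n x ^ q) ^ (1-α) := hint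
            _ ≤ S n ^ α * (K * a n k ^ (q/p)) ^ (1-α) :=
                mul_le_mul' (ENNReal.rpow_le_rpow h1 hα0.le) h2
            _ = S n ^ α * (K ^ (1-α) * a n k) := by
                congr 1
                rw [ENNReal.mul_rpow_of_nonneg _ _ (by linarith : (0:ℝ) ≤ 1-α),
                  ← ENNReal.rpow_mul]
                congr 1
                have he : (q/p) * (1-α) = 1 := by
                  rw [h1α]
                  field_simp
                rw [he, ENNReal.rpow_one]
      _ = S n ^ α * (K ^ (1-α) * ∑' k, a n k) := by
          rw [ENNReal.tsum_mul_left, ENNReal.tsum_mul_left]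
      _ ≤ S n ^ α * (K ^ (1-α) * (M * C0)) := by
          gcongr
          exact hasum n
  have hKc : K ^ (1-α) * (M * C0) ≠ ⊤ :=
    ENNReal.mul_ne_top (ENNReal.rpow_ne_top_of_nonneg (by linarith) hKtop) hMC0
  have htend1 : Tendsto (fun n => ∫⁻ x, w n x ^ t1) atTop (𝓝 0) :=
    tendsto_zero_of_le_rpow_mul hα0 hKc hmain hvan'
  -- global bound for exponent q
  set Cq : ℝ≥0∞ := K * (M * C0) ^ (q/p) with hCq
  have hCqtop : Cq ≠ ⊤ :=
    ENNReal.mul_ne_top hKtop (ENNReal.rpow_ne_top_of_nonneg (by positivity) hMC0)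
  have hIq : ∀ n, ∫⁻ x, w n x ^ q ≤ Cq := by
    intro n
    calc ∫⁻ x, w n x ^ q ≤ ∑' k, ∫⁻ x in B k, w n x ^ q := hcover_int _
      _ ≤ ∑' k, K * a n k ^ (q/p) := ENNReal.tsum_le_tsum fun k => hlocq n k
      _ = K * ∑' k, a n k ^ (q/p) := ENNReal.tsum_mul_left
      _ ≤ K * (∑' k, a n k) ^ (q/p) := by
          gcongr
          exact tsum_rpow_le _ ((le_div_iff₀ hp0).mpr (by linarith))
      _ ≤ K * (M*C0) ^ (q/p) := by
          gcongr
          exact hasum n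
  -- global bound for exponent p
  have hIp : ∀ n, ∫⁻ x, w n x ^ p ≤ C0 := fun n =>
    le_trans (lintegral_mono fun x => self_le_add_right _ _) (hbound n)
  -- conclusion
  intro t hpt htq
  have htarget : (fun n => ∫⁻ x : EuclideanSpace ℝ (Fin N), ENNReal.ofReal (|u n x| ^ t))
      = fun n => ∫⁻ x, w n x ^ t := by
    funext n
    exact lintegral_congr fun x => hconv n t (by linarith) x
  rw [htarget]
  rcases lt_trichotomy t t1 with hlt | heq | hgt
  · set β : ℝ := (t1 - t)/(t1 - p) with hβ
    have hβ0 : 0 < β := div_pos (by linarith) (by linarith)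
    have hβ1 : β < 1 := by
      rw [hβ, div_lt_one (by linarith)]
      linarith
    have hform : t = β * p + (1 - β) * t1 := by
      have hne : t1 - p ≠ 0 := ne_of_gt (by linarith)
      rw [hβ]
      field_simp
      ring
    refine tendsto_zero_of_le_rpow_mul (show (0:ℝ) < 1 - β by linarith)
      (c := C0 ^ β) (ENNReal.rpow_ne_top_of_nonneg hβ0.le hC0top) ?_ htend1
    intro n
    calc ∫⁻ x, w n x ^ t = ∫⁻ x, w n x ^ (β * p + (1-β) * t1) := by rw [← hform]
      _ ≤ (∫⁻ x, w n x ^ p) ^ β * (∫⁻ x, w n x ^ t1) ^ (1-β) :=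
          interp_lintegral _ (hwmeas n).aemeasurable hβ0 hβ1 hp0.le (by linarith)
      _ ≤ C0 ^ β * (∫⁻ x, w n x ^ t1) ^ (1-β) :=
          mul_le_mul_left (ENNReal.rpow_le_rpow (hIp n) hβ0.le) _
      _ = (∫⁻ x, w n x ^ t1) ^ (1-β) * C0 ^ β := mul_comm _ _
  · rw [heq]
    exact htend1
  · set β : ℝ := (q - t)/(q - t1) with hβ
    have hβ0 : 0 < β := div_pos (by linarith) (by linarith)
    have hβ1 : β < 1 := by
      rw [hβ, div_lt_one (by linarith)]
      linarith
    have hform : t = β * t1 + (1 - β) * q := by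
      have hne : q - t1 ≠ 0 := ne_of_gt (by linarith)
      rw [hβ]
      field_simp
      ring
    refine tendsto_zero_of_le_rpow_mul hβ0
      (c := Cq ^ (1-β)) (ENNReal.rpow_ne_top_of_nonneg (by linarith) hCqtop) ?_ htend1
    intro n
    calc ∫⁻ x, w n x ^ t = ∫⁻ x, w n x ^ (β * t1 + (1-β) * q) := by rw [← hform]
      _ ≤ (∫⁻ x, w n x ^ t1) ^ β * (∫⁻ x, w n x ^ q) ^ (1-β) :=
          interp_lintegral _ (hwmeas n).aemeasurable hβ0 hβ1 (by linarith) hq0.le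
      _ ≤ (∫⁻ x, w n x ^ t1) ^ β * Cq ^ (1-β) :=
          mul_le_mul_right (ENNReal.rpow_le_rpow (hIq n) (by linarith)) _

end
end
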